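/- arXiv:2402.19324 — 8 statements merged into one kernel-verified Lean document; each statement's English description precedes it below -/
import Mathlib

section
/- Let A be a finite alphabet, let p1, p2 ≥ 2 be integers, and let Ω1, Ω2 ⊆ A^ℕ be subshifts. If Ω1 = A^ℕ is the full shift, then h(X_{Ω1}^{p1} ⊗ X_{Ω2}^{p2}) = ((p2−1)²/p2²) · Σ_{i=1}^∞ log|P([1,i], Ω2)| / p2^{i−1}; symmetrically, if Ω2 = A^ℕ is the full shift, then h(X_{Ω1}^{p1} ⊗ X_{Ω2}^{p2}) = ((p1−1)²/p1²) · Σ_{i=1}^∞ log|P([1,i], Ω1)| / p1^{i−1}. (These series equal the one-dimensional entropies h(X_{Ω2}^{p2}) and h(X_{Ω1}^{p1}) respectively.) -/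
open Filter Real

/-- The set of patterns of `Z` on the finite window `Λ`: restrictions to `Λ`
of configurations in `Z`, counted by `Nat.card`. -/
noncomputable def pattCount {G A : Type*} (Λ : Set G) (Z : Set (G → A)) : ℕ :=
  Nat.card (Λ.restrict '' Z)

/-- A subshift of `A^ℕ`: nonempty, closed, shift-invariant. -/
def IsSubshift {A : Type*} [TopologicalSpace A] (Ω : Set (ℕ → A)) : Prop :=
  Ω.Nonempty ∧ IsClosed Ω ∧ ∀ x ∈ Ω, (fun n => x (n + 1)) ∈ Ω

/-- Multiplicative subshift `X_Ω^p`.  Coordinates are 0-indexed: the Lean index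
`n` represents the paper coordinate `n + 1`, so the paper ray `(x_{i·p^l})_{l≥0}`
(for `i ≥ 1`, `p ∤ i`) is `fun l => x (i * p ^ l - 1)`. -/
def mulSubshift {A : Type*} (p : ℕ) (Ω : Set (ℕ → A)) : Set (ℕ → A) :=
  {x | ∀ i : ℕ, 1 ≤ i → ¬ p ∣ i → (fun l => x (i * p ^ l - 1)) ∈ Ω}

/-- Axial product on `ℕ²`: every row belongs to `X`, every column to `Y`. -/
def axial2 {A : Type*} (X Y : Set (ℕ → A)) : Set (ℕ × ℕ → A) :=
  {x | (∀ j, (fun i => x (i, j)) ∈ X) ∧ (∀ i, (fun j => x (i, j)) ∈ Y)}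

/-- The box `[1,m] × [1,n]` of the paper, in 0-indexed coordinates. -/
def box2 (m n : ℕ) : Set (ℕ × ℕ) := Set.Iio m ×ˢ Set.Iio n




/-- The key counting lemma: if the coordinates split into disjoint "rays" indexed by `ι`
along which the constraints are independent, the pattern count on a window is a product. -/
lemma card_pattern_prod {A ι G : Type*} [DecidableEq ι]
    (E : ι × ℕ ≃ G) (Λ : Set G) (len : ι → ℕ)
    (hwin : ∀ i l, E (i, l) ∈ Λ ↔ l < len i)
    (W : ι → Set (ℕ → A)) (hW : ∀ i, (W i).Nonempty)
    (S : Finset ι) (hS : ∀ i, len i ≠ 0 → i ∈ S) :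
    pattCount Λ {x : G → A | ∀ i, (fun l => x (E (i, l))) ∈ W i}
      = ∏ i ∈ S, pattCount (Set.Iio (len i)) (W i) := by
  classical
  set Z : Set (G → A) := {x : G → A | ∀ i, (fun l => x (E (i, l))) ∈ W i} with hZ
  -- the target type
  let P : S → Type _ := fun i => ((Set.Iio (len i.1)).restrict '' (W i.1) : Set _)
  -- the map
  have hmem : ∀ (x : (Λ.restrict '' Z : Set _)) (i : S),
      (fun l : Set.Iio (len i.1) => x.1 ⟨E (i.1, l.1), (hwin i.1 l.1).mpr l.2⟩)
        ∈ (Set.Iio (len i.1)).restrict '' (W i.1) := by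
    rintro ⟨x, y, hyZ, rfl⟩ i
    exact ⟨fun l => y (E (i.1, l)), hyZ i.1, rfl⟩
  let f : (Λ.restrict '' Z : Set _) → (∀ i : S, P i) := fun x i =>
    ⟨fun l => x.1 ⟨E (i.1, l.1), (hwin i.1 l.1).mpr l.2⟩, hmem x i⟩
  have hbij : Function.Bijective f := by
    constructor
    · rintro x₁ x₂ h
      apply Subtype.ext; funext g
      obtain ⟨⟨i, l⟩, hil⟩ := E.surjective g.1
      have hl : l < len i := (hwin i l).mp (hil ▸ g.2)
      have hiS : i ∈ S := hS i (by omega)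
      have h1 := congrFun (congrArg Subtype.val (congrFun h ⟨i, hiS⟩)) ⟨l, hl⟩
      have hg : (⟨E (i, l), (hwin i l).mpr hl⟩ : Λ) = g := Subtype.ext hil
      simpa [f, hg] using h1
    · intro G0
      -- choose extensions
      have hch : ∀ i : ι, ∃ w, w ∈ W i ∧
          ∀ h : i ∈ S, (Set.Iio (len i)).restrict w = (G0 ⟨i, h⟩).1 := by
        intro i
        by_cases h : i ∈ S
        · obtain ⟨w, hw, hrw⟩ := (G0 ⟨i, h⟩).2
          exact ⟨w, hw, fun _ => hrw⟩
        · exact ⟨(hW i).choose, (hW i).choose_spec, fun h' => absurd h' h⟩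
      choose w hwW hwG using hch
      set y : G → A := fun g => w (E.symm g).1 (E.symm g).2 with hy
      have hyZ : y ∈ Z := by
        intro i
        have : (fun l => y (E (i, l))) = w i := by
          funext l; simp [hy, E.symm_apply_apply]
        rw [this]; exact hwW i
      refine ⟨⟨Λ.restrict y, ⟨y, hyZ, rfl⟩⟩, ?_⟩
      funext i
      obtain ⟨i, hi⟩ := i
      apply Subtype.ext; funext l
      show y (E (i, l.1)) = (G0 ⟨i, hi⟩).1 l
      rw [show y (E (i, l.1)) = w i l.1 by simp [hy, E.symm_apply_apply]]
      exact congrFun (hwG i hi) l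
  have h1 : pattCount Λ Z = Nat.card (∀ i : S, P i) := Nat.card_eq_of_bijective f hbij
  rw [h1, Nat.card_pi]
  rw [← Finset.prod_coe_sort S (fun i => pattCount (Set.Iio (len i)) (W i))]
  rfl

lemma exists_fac {p : ℕ} (hp : 2 ≤ p) : ∀ n : ℕ, 1 ≤ n → ∃ i l : ℕ, ¬ p ∣ i ∧ n = i * p ^ l := by
  intro n
  induction n using Nat.strong_induction_on with
  | _ n ih =>
    intro hn
    by_cases h : p ∣ n
    · obtain ⟨q, rfl⟩ := h
      have hq1 : 1 ≤ q := by
        rcases Nat.eq_zero_or_pos q with rfl | h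
        · simp at hn
        · exact h
      have hqlt : q < p * q := by nlinarith
      obtain ⟨i, l, hi, hql⟩ := ih q hqlt hq1
      exact ⟨i, l + 1, hi, by rw [hql]; ring⟩
    · exact ⟨n, 0, h, by simp⟩

lemma unique_fac {p : ℕ} (hp : 2 ≤ p) : ∀ l l' i i' : ℕ, ¬ p ∣ i → ¬ p ∣ i' →
    i * p ^ l = i' * p ^ l' → i = i' ∧ l = l' := by
  intro l
  induction l with
  | zero =>
    intro l' i i' hi hi' h
    match l' with
    | 0 => simp_all
    | Nat.succ k =>
      exfalso; apply hi
      exact ⟨i' * p ^ k, by rw [show i = i' * p ^ (k+1) by simpa using h]; ring⟩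
  | succ l ih =>
    intro l' i i' hi hi' h
    match l' with
    | 0 =>
      exfalso; apply hi'
      exact ⟨i * p ^ l, by rw [show i' = i * p ^ (l+1) by simpa using h.symm]; ring⟩
    | Nat.succ k =>
      have hp0 : 0 < p := by omega
      have : i * p ^ l = i' * p ^ k := by
        have h' : (i * p ^ l) * p = (i' * p ^ k) * p := by
          rw [pow_succ, pow_succ] at h; linarith [h]
        exact Nat.eq_of_mul_eq_mul_right hp0 h'
      obtain ⟨h1, h2⟩ := ih k i i' hi hi' this
      exact ⟨h1, by omega⟩

/-- The index set of rays of the multiplicative subshift. -/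
def mulIdx (p : ℕ) : Type := {i : ℕ // 1 ≤ i ∧ ¬ p ∣ i}

/-- The partition of `ℕ` (0-indexed coordinates) into geometric rays. -/
noncomputable def mulEquiv (p : ℕ) (hp : 2 ≤ p) : mulIdx p × ℕ ≃ ℕ := by
  apply Equiv.ofBijective (fun il : mulIdx p × ℕ => il.1.1 * p ^ il.2 - 1)
  constructor
  · rintro ⟨⟨i, hi1, hi2⟩, l⟩ ⟨⟨i', hi1', hi2'⟩, l'⟩ h
    simp only at h
    have hpos : 1 ≤ i * p ^ l := Nat.one_le_iff_ne_zero.2 (by positivity)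
    have hpos' : 1 ≤ i' * p ^ l' := Nat.one_le_iff_ne_zero.2 (by positivity)
    have : i * p ^ l = i' * p ^ l' := by omega
    obtain ⟨h1, h2⟩ := unique_fac hp l l' i i' hi2 hi2' this
    simp [h1, h2]
  · intro m
    obtain ⟨i, l, hi, hil⟩ := exists_fac hp (m + 1) (by omega)
    have hi1 : 1 ≤ i := by
      rcases Nat.eq_zero_or_pos i with rfl | h
      · simp at hil
      · exact h
    exact ⟨⟨⟨i, hi1, hi⟩, l⟩, by simp [← hil]⟩

lemma mulEquiv_apply (p : ℕ) (hp : 2 ≤ p) (i : mulIdx p) (l : ℕ) :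
    mulEquiv p hp (i, l) = i.1 * p ^ l - 1 := rfl


lemma mulSubshift_eq {A : Type*} (p : ℕ) (hp : 2 ≤ p) (Ω : Set (ℕ → A)) :
    mulSubshift p Ω = {x | ∀ i : mulIdx p, (fun l => x (mulEquiv p hp (i, l))) ∈ Ω} := by
  ext x
  constructor
  · intro h i; exact h i.1 i.2.1 i.2.2
  · intro h i hi1 hi2; exact h ⟨i, hi1, hi2⟩

lemma mulSubshift_nonempty {A : Type*} (p : ℕ) (hp : 2 ≤ p) {Ω : Set (ℕ → A)}
    (hΩ : Ω.Nonempty) : (mulSubshift p Ω).Nonempty := by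
  obtain ⟨ω, hω⟩ := hΩ
  refine ⟨fun m => ω ((mulEquiv p hp).symm m).2, ?_⟩
  rw [mulSubshift_eq p hp]
  intro i
  have : (fun l => ω (((mulEquiv p hp).symm ((mulEquiv p hp) (i, l)))).2) = ω := by
    funext l; rw [Equiv.symm_apply_apply]
  rw [this]; exact hω

/-- The index Finset: `i ∈ [1,n]` not divisible by `p`. -/
def mulT (p n : ℕ) : Finset ℕ := (Finset.Icc 1 n).filter (fun i => 1 ≤ i ∧ ¬ p ∣ i)

lemma pattCount_mulSubshift {A : Type*} (p : ℕ) (hp : 2 ≤ p) (Ω : Set (ℕ → A))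
    (hΩ : Ω.Nonempty) (n : ℕ) :
    pattCount (Set.Iio n) (mulSubshift p Ω)
      = ∏ i ∈ mulT p n, pattCount (Set.Iio (Nat.log p (n / i) + 1)) Ω := by
  classical
  have hp1 : 1 < p := hp
  set q : ℕ → Prop := fun i => 1 ≤ i ∧ ¬ p ∣ i with hq
  set len : mulIdx p → ℕ := fun i => if i.1 ≤ n then Nat.log p (n / i.1) + 1 else 0 with hlen
  have hwin : ∀ (i : mulIdx p) (l : ℕ), mulEquiv p hp (i, l) ∈ Set.Iio n ↔ l < len i := by
    rintro ⟨i, hi1, hi2⟩ l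
    have hpl : 1 ≤ p ^ l := Nat.one_le_pow _ _ (by omega)
    have ha : 1 ≤ i * p ^ l := Nat.one_le_iff_ne_zero.2 (by positivity)
    change (i * p ^ l - 1 ∈ Set.Iio n) ↔ _
    simp only [Set.mem_Iio, hlen]
    constructor
    · intro h
      have hle : i * p ^ l ≤ n := by omega
      have hin : i ≤ n := le_trans (Nat.le_mul_of_pos_right i (by omega)) hle
      rw [if_pos hin]
      have hnd : n / i ≠ 0 := by have := Nat.div_pos hin (by omega); omega
      have h1 : p ^ l ≤ n / i := (Nat.le_div_iff_mul_le (by omega)).2 (by linarith [hle, mul_comm i (p ^ l)])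
      have := (Nat.le_log_iff_pow_le hp1 hnd).2 h1
      omega
    · intro h
      by_cases hin : i ≤ n
      · rw [if_pos hin] at h
        have hnd : n / i ≠ 0 := by have := Nat.div_pos hin (by omega); omega
        have h1 : p ^ l ≤ n / i := (Nat.le_log_iff_pow_le hp1 hnd).1 (by omega)
        have h2 : p ^ l * i ≤ n := (Nat.le_div_iff_mul_le (by omega)).1 h1
        have : i * p ^ l ≤ n := by linarith [mul_comm (p ^ l) i]
        omega
      · rw [if_neg hin] at h; omega
  have key := card_pattern_prod (mulEquiv p hp) (Set.Iio n) len hwin (fun _ => Ω)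
    (fun _ => hΩ) ((Finset.Icc 1 n).subtype q)
    (by
      rintro ⟨i, hi1, hi2⟩ hl
      simp only [hlen] at hl
      have hin : i ≤ n := by by_contra hc; rw [if_neg hc] at hl; exact hl rfl
      refine Finset.mem_subtype.2 (Finset.mem_Icc.2 ?_)
      exact ⟨hi1, hin⟩)
  rw [mulSubshift_eq p hp, key]
  have hT : mulT p n = ((Finset.Icc 1 n).subtype q).map (Function.Embedding.subtype q) := by
    rw [Finset.subtype_map]; rfl
  rw [hT, Finset.prod_map]
  apply Finset.prod_congr rfl
  intro i hi
  replace hi := Finset.mem_Icc.1 (Finset.mem_subtype.1 hi)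
  simp only [Function.Embedding.subtype, Function.Embedding.coeFn_mk, hlen]
  rw [if_pos hi.2]
  rfl

/-- Count of integers in `(0,m]` not divisible by `p`. -/
def nuCard (p m : ℕ) : ℕ := ((Finset.Ioc 0 m).filter (fun i => ¬ p ∣ i)).card

lemma nuCard_add (p m : ℕ) : m / p + nuCard p m = m := by
  have h := Finset.card_filter_add_card_filter_not
    (s := Finset.Ioc 0 m) (p := fun i => p ∣ i)
  rw [Nat.Ioc_filter_dvd_card_eq_div, Nat.card_Ioc] at h
  simpa [nuCard] using h

lemma nuCard_le (p m : ℕ) : nuCard p m ≤ m :=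
  le_trans (Nat.le_add_left _ _) (le_of_eq (nuCard_add p m))

lemma nuCard_cast (p m : ℕ) : (nuCard p m : ℝ) = (m : ℝ) - ↑(m / p) := by
  have h : ((m / p : ℕ) : ℝ) + (nuCard p m : ℝ) = (m : ℝ) := by
    exact_mod_cast congrArg (Nat.cast : ℕ → ℝ) (nuCard_add p m)
  linarith

lemma nat_div_le_div_iff {i q n : ℕ} (hi : 0 < i) (hq : 0 < q) :
    i ≤ n / q ↔ q ≤ n / i := by
  rw [Nat.le_div_iff_mul_le hq, Nat.le_div_iff_mul_le hi, mul_comm]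

lemma fiber_eq (p : ℕ) (hp : 2 ≤ p) (n k : ℕ) :
    (mulT p n).filter (fun i => Nat.log p (n / i) = k)
      = (Finset.Ioc (n / p ^ (k + 1)) (n / p ^ k)).filter (fun i => ¬ p ∣ i) := by
  have hp1 : 1 < p := hp
  ext i
  simp only [mulT, Finset.mem_filter, Finset.mem_Icc, Finset.mem_Ioc]
  constructor
  · rintro ⟨⟨⟨hi1, hin⟩, -, hnd⟩, hlog⟩
    have hi0 : 0 < i := hi1
    have hnd0 : n / i ≠ 0 := by have := Nat.div_pos hin hi0; omega
    have := (Nat.log_eq_iff (Or.inr ⟨hp1, hnd0⟩)).1 hlog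
    obtain ⟨h1, h2⟩ := this
    refine ⟨⟨?_, ?_⟩, hnd⟩
    · by_contra hc
      push_neg at hc
      exact absurd ((nat_div_le_div_iff hi0 (pow_pos (by omega : 0 < p) _)).1 hc)
        (not_le.2 h2)
    · exact (nat_div_le_div_iff hi0 (pow_pos (by omega : 0 < p) _)).2 h1
  · rintro ⟨⟨hlt, hle⟩, hnd⟩
    have hi0 : 0 < i := lt_of_le_of_lt (Nat.zero_le _) hlt
    have hin : i ≤ n := le_trans hle (Nat.div_le_self _ _)
    have h1 : p ^ k ≤ n / i := (nat_div_le_div_iff hi0 (pow_pos (by omega : 0 < p) _)).1 hle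
    have h2 : n / i < p ^ (k + 1) := by
      by_contra hc
      push_neg at hc
      exact absurd ((nat_div_le_div_iff hi0 (pow_pos (by omega : 0 < p) _)).2 hc)
        (not_le.2 hlt)
    have hnd0 : n / i ≠ 0 := by have := Nat.one_le_pow k p (by omega); omega
    exact ⟨⟨⟨hi0, hin⟩, hi0, hnd⟩, (Nat.log_eq_iff (Or.inr ⟨hp1, hnd0⟩)).2 ⟨h1, h2⟩⟩

/-- The number of rays with exactly `k+1` coordinates in the window `[1,n]`. -/
def aCard (p n k : ℕ) : ℕ := ((mulT p n).filter (fun i => Nat.log p (n / i) = k)).card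

lemma aCard_add (p : ℕ) (hp : 2 ≤ p) (n k : ℕ) :
    nuCard p (n / p ^ (k + 1)) + aCard p n k = nuCard p (n / p ^ k) := by
  have hdivle : n / p ^ (k + 1) ≤ n / p ^ k :=
    Nat.div_le_div_left (Nat.pow_le_pow_right (by omega) (by omega)) (pow_pos (by omega : 0 < p) _)
  have hunion : Finset.Ioc 0 (n / p ^ (k + 1)) ∪ Finset.Ioc (n / p ^ (k + 1)) (n / p ^ k)
      = Finset.Ioc 0 (n / p ^ k) := Finset.Ioc_union_Ioc_eq_Ioc (Nat.zero_le _) hdivle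
  have hdisj : Disjoint (Finset.Ioc 0 (n / p ^ (k + 1)))
      (Finset.Ioc (n / p ^ (k + 1)) (n / p ^ k)) := by
    rw [Finset.disjoint_left]
    intro a ha hb
    simp only [Finset.mem_Ioc] at ha hb
    omega
  rw [aCard, fiber_eq p hp n k, nuCard, nuCard, ← hunion, Finset.filter_union,
    Finset.card_union_of_disjoint (Finset.disjoint_filter_filter hdisj)]

lemma aCard_le (p : ℕ) (hp : 2 ≤ p) (n k : ℕ) : aCard p n k ≤ n / p ^ k := by
  have h1 := aCard_add p hp n k
  have h2 := nuCard_le p (n / p ^ k)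
  omega

lemma aCard_eq_zero (p : ℕ) (hp : 2 ≤ p) {n k : ℕ} (hk : n ≤ k) : aCard p n k = 0 := by
  have h1 : n < p ^ k := lt_of_lt_of_le (lt_of_le_of_lt hk (Nat.lt_two_pow_self (n := k)))
    (Nat.pow_le_pow_left (by omega) k)
  have := aCard_le p hp n k
  rw [Nat.div_eq_of_lt h1] at this
  omega

lemma aCard_cast (p : ℕ) (hp : 2 ≤ p) (n k : ℕ) :
    (aCard p n k : ℝ) = ((↑(n / p ^ k) : ℝ) - ↑(n / p ^ (k + 1)))
      - ((↑(n / p ^ (k + 1)) : ℝ) - ↑(n / p ^ (k + 2))) := by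
  have h1 := aCard_add p hp n k
  have e1 : n / p ^ k / p = n / p ^ (k + 1) := by
    rw [Nat.div_div_eq_div_mul, ← pow_succ]
  have e2 : n / p ^ (k + 1) / p = n / p ^ (k + 2) := by
    rw [Nat.div_div_eq_div_mul, ← pow_succ]
  have c1 := nuCard_cast p (n / p ^ k)
  have c2 := nuCard_cast p (n / p ^ (k + 1))
  rw [e1] at c1; rw [e2] at c2
  have : (nuCard p (n / p ^ (k+1)) : ℝ) + (aCard p n k : ℝ) = (nuCard p (n / p ^ k) : ℝ) := by
    exact_mod_cast congrArg (Nat.cast : ℕ → ℝ) h1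
  linarith

lemma pattCount_pos {G A : Type*} [Finite A] {Λ : Set G} [Finite Λ] {Z : Set (G → A)}
    (hZ : Z.Nonempty) : 0 < pattCount Λ Z := by
  haveI : Nonempty ↥(Λ.restrict '' Z) := (hZ.image _).to_subtype
  exact Nat.card_pos

lemma pattCount_le_pow {A : Type*} [Fintype A] (k : ℕ) (Z : Set (ℕ → A)) :
    pattCount (Set.Iio k) Z ≤ Fintype.card A ^ k := by
  haveI : Finite ↥(Set.Iio k) := (Set.finite_Iio k).to_subtype
  have h1 : pattCount (Set.Iio k) Z ≤ Nat.card (↥(Set.Iio k) → A) :=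
    Nat.card_le_card_of_injective _ Subtype.val_injective
  have h2 : Nat.card (↥(Set.Iio k) → A) = Fintype.card A ^ k := by
    rw [Nat.card_fun, Nat.card_eq_fintype_card]
    congr 1
    rw [Nat.card_coe_set_eq, ← Finset.coe_Iio, Set.ncard_coe_finset, Nat.card_Iio]
  omega

/-- Convergence of `⌊n/q⌋/n` to `1/q`. -/
lemma tendsto_nat_div_div (q : ℕ) (hq : 1 ≤ q) :
    Tendsto (fun n : ℕ => ((n / q : ℕ) : ℝ) / n) atTop (nhds (1 / (q : ℝ))) := by
  have hq0 : (0 : ℝ) < q := by exact_mod_cast hq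
  have hlow : Tendsto (fun n : ℕ => 1 / (q : ℝ) - (((q : ℝ) - 1) / q) * (1 / n)) atTop
      (nhds (1 / (q : ℝ))) := by
    have := (tendsto_const_nhds (x := ((q : ℝ) - 1) / q) (f := atTop (α := ℕ))).mul
      tendsto_one_div_atTop_nhds_zero_nat
    have h2 := (tendsto_const_nhds (x := 1 / (q : ℝ)) (f := atTop (α := ℕ))).sub this
    simpa using h2
  apply tendsto_of_tendsto_of_tendsto_of_le_of_le' hlow tendsto_const_nhds
  · filter_upwards [eventually_ge_atTop 1] with n hn
    have hn0 : (0 : ℝ) < n := by exact_mod_cast hn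
    have hmod := Nat.div_add_mod n q
    have hlt : n % q < q := Nat.mod_lt _ (by omega)
    have hcast : (q : ℝ) * ((n / q : ℕ) : ℝ) + (q : ℝ) - 1 ≥ (n : ℝ) := by
      have h4 : (q : ℝ) * ((n / q : ℕ) : ℝ) + ((n % q : ℕ) : ℝ) = (n : ℝ) := by
        exact_mod_cast congrArg (Nat.cast : ℕ → ℝ) hmod
      have h5 : ((n % q : ℕ) : ℝ) + 1 ≤ (q : ℝ) := by exact_mod_cast hlt
      linarith
    have heq : 1 / (q : ℝ) - (((q : ℝ) - 1) / q) * (1 / n)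
        = ((n : ℝ) - ((q : ℝ) - 1)) / ((q : ℝ) * n) := by
      field_simp
    rw [heq, div_le_div_iff₀ (by positivity) hn0]
    nlinarith [hcast]
  · filter_upwards [eventually_ge_atTop 1] with n hn
    have hn0 : (0 : ℝ) < n := by exact_mod_cast hn
    have h1 : ((n / q : ℕ) : ℝ) ≤ (n : ℝ) / q := Nat.cast_div_le
    calc ((n / q : ℕ) : ℝ) / n ≤ ((n : ℝ) / q) / n := by gcongr
      _ = 1 / q := by field_simp

lemma pattCount_Iio_pos {A : Type*} [Finite A] {Z : Set (ℕ → A)} (hZ : Z.Nonempty) (m : ℕ) :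
    0 < pattCount (Set.Iio m) Z := by
  haveI : Finite ↥(Set.Iio m) := (Set.finite_Iio m).to_subtype
  exact pattCount_pos hZ

lemma log_pattCount_mulSubshift {A : Type*} [Fintype A] (p : ℕ) (hp : 2 ≤ p)
    (Ω : Set (ℕ → A)) (hΩ : Ω.Nonempty) {n : ℕ} (hn : 1 ≤ n) :
    Real.log (pattCount (Set.Iio n) (mulSubshift p Ω))
      = ∑ k ∈ Finset.range n, (aCard p n k : ℝ) * Real.log (pattCount (Set.Iio (k + 1)) Ω) := by
  rw [pattCount_mulSubshift p hp Ω hΩ n, Nat.cast_prod, Real.log_prod]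
  · have hmaps : ∀ i ∈ mulT p n, Nat.log p (n / i) ∈ Finset.range n := by
      intro i _
      rw [Finset.mem_range]
      exact lt_of_le_of_lt (Nat.log_mono_right (Nat.div_le_self n i))
        (Nat.log_lt_self p (by omega))
    rw [← Finset.sum_fiberwise_of_maps_to hmaps
      (fun i => Real.log (pattCount (Set.Iio (Nat.log p (n / i) + 1)) Ω))]
    apply Finset.sum_congr rfl
    intro k _
    have : ∀ i ∈ (mulT p n).filter (fun i => Nat.log p (n / i) = k),
        Real.log (pattCount (Set.Iio (Nat.log p (n / i) + 1)) Ω)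
          = Real.log (pattCount (Set.Iio (k + 1)) Ω) := by
      intro i hi
      rw [(Finset.mem_filter.1 hi).2]
    rw [Finset.sum_congr rfl this, Finset.sum_const, aCard, nsmul_eq_mul]
  · intro i _
    exact_mod_cast (pattCount_Iio_pos hΩ _).ne'

theorem oneD_entropy {A : Type*} [Fintype A] (p : ℕ) (hp : 2 ≤ p)
    (Ω : Set (ℕ → A)) (hΩ : Ω.Nonempty) :
    Tendsto (fun n : ℕ => Real.log (pattCount (Set.Iio n) (mulSubshift p Ω)) / n) atTop
      (nhds ((((p : ℝ) - 1) ^ 2 / (p : ℝ) ^ 2) *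
        ∑' i : ℕ, Real.log (pattCount (Set.Iio (i + 1)) Ω) / (p : ℝ) ^ i)) := by
  haveI : Nonempty A := ⟨hΩ.some 0⟩
  have hp0 : (0 : ℝ) < p := by positivity
  have hpR : (p : ℝ) ≠ 0 := hp0.ne'
  set L : ℕ → ℝ := fun k => Real.log (pattCount (Set.Iio (k + 1)) Ω) with hL
  set F : ℕ → ℕ → ℝ := fun n k => (aCard p n k : ℝ) / n * L k with hF
  set Gl : ℕ → ℝ := fun k => (((p : ℝ) - 1) ^ 2 / (p : ℝ) ^ 2) * (L k / (p : ℝ) ^ k) with hG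
  set CA : ℝ := Real.log (Fintype.card A) with hCA
  have hCA0 : 0 ≤ CA := Real.log_nonneg (by exact_mod_cast Fintype.card_pos)
  have hL0 : ∀ k, 0 ≤ L k := fun k => Real.log_nonneg (by
    exact_mod_cast Nat.one_le_iff_ne_zero.2 (pattCount_Iio_pos hΩ (k + 1)).ne')
  have hLle : ∀ k, L k ≤ ((k : ℝ) + 1) * CA := by
    intro k
    have h1 : (pattCount (Set.Iio (k + 1)) Ω : ℝ) ≤ ((Fintype.card A : ℝ)) ^ (k + 1) := by
      exact_mod_cast pattCount_le_pow (k + 1) Ω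
    calc L k ≤ Real.log (((Fintype.card A : ℝ)) ^ (k + 1)) := by
          apply Real.log_le_log (by exact_mod_cast pattCount_Iio_pos hΩ (k + 1)) h1
      _ = ((k : ℝ) + 1) * CA := by rw [Real.log_pow]; push_cast; ring
  -- the dominating series
  set bound : ℕ → ℝ := fun k => ((k : ℝ) + 1) * CA / (p : ℝ) ^ k with hbound
  have hr : ‖1 / (p : ℝ)‖ < 1 := by
    rw [norm_div, norm_one, Real.norm_natCast]
    rw [div_lt_one hp0]
    exact_mod_cast by omega
  have hsum : Summable bound := by
    have h1 : Summable (fun k : ℕ => (k : ℝ) ^ 1 * (1 / (p : ℝ)) ^ k) :=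
      summable_pow_mul_geometric_of_norm_lt_one 1 hr
    have h2 : Summable (fun k : ℕ => (1 / (p : ℝ)) ^ k) :=
      summable_geometric_of_norm_lt_one hr
    apply Summable.congr (((h1.mul_left CA).add (h2.mul_left CA)))
    intro k
    simp only [hbound, one_mul, mul_inv_rev, pow_one, div_eq_mul_inv, inv_pow]
    ring
  -- pointwise limits
  have hd : ∀ j : ℕ, Tendsto (fun n : ℕ => ((n / p ^ j : ℕ) : ℝ) / n) atTop
      (nhds (1 / (p : ℝ) ^ j)) := by
    intro j
    have := tendsto_nat_div_div (p ^ j) (Nat.one_le_pow _ _ (by omega))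
    simpa [Nat.cast_pow] using this
  have hab : ∀ k : ℕ, Tendsto (F · k) atTop (nhds (Gl k)) := by
    intro k
    have h1 := (((hd k).sub (hd (k + 1))).sub ((hd (k + 1)).sub (hd (k + 2)))).mul_const (L k)
    have heq : ∀ n : ℕ, ((((n / p ^ k : ℕ) : ℝ) / n - ((n / p ^ (k + 1) : ℕ) : ℝ) / n)
        - (((n / p ^ (k + 1) : ℕ) : ℝ) / n - ((n / p ^ (k + 2) : ℕ) : ℝ) / n)) * L k = F n k := by
      intro n
      rw [hF]
      simp only
      rw [aCard_cast p hp n k]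
      ring
    have hval : ((1 / (p : ℝ) ^ k - 1 / (p : ℝ) ^ (k + 1))
        - (1 / (p : ℝ) ^ (k + 1) - 1 / (p : ℝ) ^ (k + 2))) * L k = Gl k := by
      rw [hG]
      simp only
      field_simp
      ring
    rw [← hval]
    exact Tendsto.congr heq h1
  have h_bound : ∀ᶠ n in atTop, ∀ k, ‖F n k‖ ≤ bound k := by
    filter_upwards [eventually_ge_atTop 1] with n hn
    intro k
    have hn0 : (0 : ℝ) < n := by exact_mod_cast hn
    have hF0 : 0 ≤ F n k := by
      apply mul_nonneg (div_nonneg (Nat.cast_nonneg _) (Nat.cast_nonneg _)) (hL0 k)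
    rw [Real.norm_eq_abs, abs_of_nonneg hF0]
    have h1 : (aCard p n k : ℝ) ≤ ((n / p ^ k : ℕ) : ℝ) := by exact_mod_cast aCard_le p hp n k
    have h2 : ((n / p ^ k : ℕ) : ℝ) ≤ (n : ℝ) / (p : ℝ) ^ k := by
      have := Nat.cast_div_le (m := n) (n := p ^ k) (α := ℝ)
      rwa [Nat.cast_pow] at this
    have h3 : (aCard p n k : ℝ) / n ≤ 1 / (p : ℝ) ^ k := by
      calc (aCard p n k : ℝ) / n ≤ ((n : ℝ) / (p : ℝ) ^ k) / n := by gcongr; linarith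
        _ = 1 / (p : ℝ) ^ k := by field_simp
    calc F n k ≤ 1 / (p : ℝ) ^ k * L k :=
          mul_le_mul_of_nonneg_right h3 (hL0 k)
      _ ≤ 1 / (p : ℝ) ^ k * (((k : ℝ) + 1) * CA) := by
          apply mul_le_mul_of_nonneg_left (hLle k) (by positivity)
      _ = bound k := by rw [hbound]; ring
  have hmain := tendsto_tsum_of_dominated_convergence hsum hab h_bound
  have htsum : ∑' k, Gl k = (((p : ℝ) - 1) ^ 2 / (p : ℝ) ^ 2) *
      ∑' i : ℕ, Real.log (pattCount (Set.Iio (i + 1)) Ω) / (p : ℝ) ^ i := by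
    rw [hG, tsum_mul_left]
  rw [htsum] at hmain
  apply hmain.congr'
  filter_upwards [eventually_ge_atTop 1] with n hn
  have hzero : ∀ k ∉ Finset.range n, F n k = 0 := by
    intro k hk
    rw [Finset.mem_range, not_lt] at hk
    rw [hF]
    simp only
    rw [aCard_eq_zero p hp hk]
    simp
  rw [tsum_eq_sum hzero]
  rw [log_pattCount_mulSubshift p hp Ω hΩ hn, Finset.sum_div]
  apply Finset.sum_congr rfl
  intro k _
  rw [hF]
  simp only
  ring



lemma mulSubshift_univ {A : Type*} (p : ℕ) :
    mulSubshift p (Set.univ : Set (ℕ → A)) = Set.univ := by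
  ext x; simp [mulSubshift]

lemma pattCount_axial_univ_left {A : Type*} (Y : Set (ℕ → A)) (hY : Y.Nonempty) (m n : ℕ) :
    pattCount (box2 m n) (axial2 Set.univ Y) = pattCount (Set.Iio n) Y ^ m := by
  classical
  have hZ : axial2 (Set.univ : Set (ℕ → A)) Y
      = {x : ℕ × ℕ → A | ∀ i : ℕ, (fun j => x ((Equiv.refl (ℕ × ℕ)) (i, j))) ∈ Y} := by
    ext x
    simp only [axial2, Equiv.refl_apply, Set.mem_setOf_eq, Set.mem_univ, true_and]
    exact ⟨fun h => h.2, fun h => ⟨fun _ => trivial, h⟩⟩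
  have hwin : ∀ (i : ℕ) (j : ℕ), (Equiv.refl (ℕ × ℕ)) (i, j) ∈ box2 m n
      ↔ j < (if i < m then n else 0) := by
    intro i j
    simp only [Equiv.refl_apply, box2, Set.mem_prod, Set.mem_Iio]
    split
    · next h => simp [h]
    · next h => simp [h]
  have key := card_pattern_prod (Equiv.refl (ℕ × ℕ)) (box2 m n)
    (fun i => if i < m then n else 0) hwin (fun _ => Y) (fun _ => hY) (Finset.range m)
    (by intro i hi; rw [Finset.mem_range]; by_contra hc; exact hi (by simp [hc]))
  rw [hZ, key]
  rw [Finset.prod_congr rfl (fun i hi => by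
    rw [if_pos (Finset.mem_range.1 hi)] : ∀ i ∈ Finset.range m,
      pattCount (Set.Iio (if i < m then n else 0)) Y = pattCount (Set.Iio n) Y)]
  rw [Finset.prod_const, Finset.card_range]

lemma pattCount_axial_univ_right {A : Type*} (X : Set (ℕ → A)) (hX : X.Nonempty) (m n : ℕ) :
    pattCount (box2 m n) (axial2 X Set.univ) = pattCount (Set.Iio m) X ^ n := by
  classical
  have hZ : axial2 X (Set.univ : Set (ℕ → A))
      = {x : ℕ × ℕ → A | ∀ j : ℕ, (fun i => x ((Equiv.prodComm ℕ ℕ) (j, i))) ∈ X} := by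
    ext x
    simp only [axial2, Equiv.prodComm_apply, Prod.swap_prod_mk, Set.mem_setOf_eq,
      Set.mem_univ, true_and]
    exact ⟨fun h => h.1, fun h => ⟨h, fun _ => trivial⟩⟩
  have hwin : ∀ (j : ℕ) (i : ℕ), (Equiv.prodComm ℕ ℕ) (j, i) ∈ box2 m n
      ↔ i < (if j < n then m else 0) := by
    intro j i
    simp only [Equiv.prodComm_apply, Prod.swap_prod_mk, box2, Set.mem_prod, Set.mem_Iio]
    split
    · next h => simp [h]
    · next h => simp [h]
  have key := card_pattern_prod (Equiv.prodComm ℕ ℕ) (box2 m n)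
    (fun j => if j < n then m else 0) hwin (fun _ => X) (fun _ => hX) (Finset.range n)
    (by intro j hj; rw [Finset.mem_range]; by_contra hc; exact hj (by simp [hc]))
  rw [hZ, key]
  rw [Finset.prod_congr rfl (fun j hj => by
    rw [if_pos (Finset.mem_range.1 hj)] : ∀ j ∈ Finset.range n,
      pattCount (Set.Iio (if j < n then m else 0)) X = pattCount (Set.Iio m) X)]
  rw [Finset.prod_const, Finset.card_range]


/-- Corollary to Theorem 2.1: if one factor is the full shift, the entropy of
`X_{Ω1}^{p1} ⊗ X_{Ω2}^{p2}` reduces to the one-dimensional formula for the other factor. -/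
theorem entropy_axialProd_mulSubshift_fullShift
    {A : Type*} [Fintype A] [TopologicalSpace A] [DiscreteTopology A]
    (p1 p2 : ℕ) (hp1 : 2 ≤ p1) (hp2 : 2 ≤ p2)
    (Ω1 Ω2 : Set (ℕ → A)) (hΩ1 : IsSubshift Ω1) (hΩ2 : IsSubshift Ω2) :
    (Ω1 = Set.univ →
      Tendsto
        (fun mn : ℕ × ℕ =>
          Real.log (pattCount (box2 mn.1 mn.2)
              (axial2 (mulSubshift p1 Ω1) (mulSubshift p2 Ω2))) /
            ((mn.1 : ℝ) * (mn.2 : ℝ)))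
        atTop
        (nhds ((((p2 : ℝ) - 1) ^ 2 / (p2 : ℝ) ^ 2) *
          ∑' i : ℕ, Real.log (pattCount (Set.Iio (i + 1)) Ω2) / (p2 : ℝ) ^ i))) ∧
    (Ω2 = Set.univ →
      Tendsto
        (fun mn : ℕ × ℕ =>
          Real.log (pattCount (box2 mn.1 mn.2)
              (axial2 (mulSubshift p1 Ω1) (mulSubshift p2 Ω2))) /
            ((mn.1 : ℝ) * (mn.2 : ℝ)))
        atTop
        (nhds ((((p1 : ℝ) - 1) ^ 2 / (p1 : ℝ) ^ 2) *
          ∑' i : ℕ, Real.log (pattCount (Set.Iio (i + 1)) Ω1) / (p1 : ℝ) ^ i))) := by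
  have hfst : Tendsto (Prod.fst : ℕ × ℕ → ℕ) atTop atTop := by
    rw [← prod_atTop_atTop_eq]; exact tendsto_fst
  have hsnd : Tendsto (Prod.snd : ℕ × ℕ → ℕ) atTop atTop := by
    rw [← prod_atTop_atTop_eq]; exact tendsto_snd
  constructor
  · intro h1
    rw [h1, mulSubshift_univ]
    have hYne : (mulSubshift p2 Ω2).Nonempty := mulSubshift_nonempty p2 hp2 hΩ2.1
    have h1d := oneD_entropy p2 hp2 Ω2 hΩ2.1
    have hcomp := h1d.comp hsnd
    apply hcomp.congr'
    filter_upwards [hfst.eventually (eventually_ge_atTop 1)] with mn hm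
    have hm0 : ((mn.1 : ℝ)) ≠ 0 := by
      have : (1 : ℝ) ≤ (mn.1 : ℝ) := by exact_mod_cast hm
      linarith
    show Real.log (pattCount (Set.Iio mn.2) (mulSubshift p2 Ω2)) / mn.2 = _
    rw [pattCount_axial_univ_left _ hYne mn.1 mn.2, Nat.cast_pow, Real.log_pow,
      mul_div_mul_left _ _ hm0]
  · intro h2
    rw [h2, mulSubshift_univ]
    have hXne : (mulSubshift p1 Ω1).Nonempty := mulSubshift_nonempty p1 hp1 hΩ1.1
    have h1d := oneD_entropy p1 hp1 Ω1 hΩ1.1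
    have hcomp := h1d.comp hfst
    apply hcomp.congr'
    filter_upwards [hsnd.eventually (eventually_ge_atTop 1)] with mn hn
    have hn0 : ((mn.2 : ℝ)) ≠ 0 := by
      have : (1 : ℝ) ≤ (mn.2 : ℝ) := by exact_mod_cast hn
      linarith
    show Real.log (pattCount (Set.Iio mn.1) (mulSubshift p1 Ω1)) / mn.1 = _
    rw [pattCount_axial_univ_right _ hXne mn.1 mn.2, Nat.cast_pow, Real.log_pow]
    rw [mul_comm ((mn.1 : ℝ)) ((mn.2 : ℝ)), mul_div_mul_left _ _ hn0]
end

section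
/- Let A be a finite alphabet, let p ≥ 2 be an integer, and let Ω, X ⊆ A^ℕ be subshifts. For each i ≥ 1 the limit λ_i = lim_{j→∞} (1/j) · log|P([1,i]×[1,j], Ω ⊗ X)| exists, the entropy of the axial product X_Ω^p ⊗ X on ℕ² exists, and h(X_Ω^p ⊗ X) = ((p−1)²/p²) · Σ_{i=1}^∞ λ_i / p^{i−1}. -/
open Filter Real

namespace EntropyThm

/-! ### ray decomposition of ℕ (0-indexed) -/

def rayPow (p n : ℕ) : ℕ := p.maxPowDiv (n + 1)
def rayRep (p n : ℕ) : ℕ := (n + 1) / p ^ rayPow p n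

lemma rayRep_mul_pow (p n : ℕ) : rayRep p n * p ^ rayPow p n = n + 1 :=
  Nat.div_mul_cancel (Nat.maxPowDiv.pow_dvd (p := p) (n := n + 1))

lemma rayRep_pos (p n : ℕ) : 0 < rayRep p n := by
  rcases Nat.eq_zero_or_pos (rayRep p n) with h | h
  · have h2 := rayRep_mul_pow p n
    rw [h, zero_mul] at h2
    omega
  · exact h

lemma maxPowDiv_eq_zero {p i : ℕ} (hi : 0 < i) (h : ¬ p ∣ i) : p.maxPowDiv i = 0 := by
  by_contra hne
  exact h (dvd_trans (dvd_pow_self p hne) (Nat.maxPowDiv.pow_dvd (p := p) (n := i)))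

lemma not_dvd_rayRep {p : ℕ} (hp : 1 < p) (n : ℕ) : ¬ p ∣ rayRep p n := by
  rintro ⟨c, hc⟩
  have h1 := rayRep_mul_pow p n
  rw [hc] at h1
  have h2 : p ^ (rayPow p n + 1) ∣ n + 1 := ⟨c, by rw [← h1]; ring⟩
  have h3 := (Nat.pow_dvd_iff_le_padicValNat hp.ne' (Nat.succ_ne_zero n)).mp h2
  simp only [Nat.succ_eq_add_one] at h3
  have h4 : padicValNat p (n + 1) = rayPow p n := rfl
  omega

lemma rayPow_mul_pow {p i l : ℕ} (hp : 1 < p) (hi : 0 < i) (hd : ¬ p ∣ i) :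
    rayPow p (i * p ^ l - 1) = l := by
  have hpos : 0 < i * p ^ l := Nat.mul_pos hi (pow_pos (by omega) l)
  have hsub : i * p ^ l - 1 + 1 = i * p ^ l := by omega
  unfold rayPow
  rw [hsub, mul_comm]
  show padicValNat p _ = l
  rw [Nat.maxPowDiv.base_pow_mul hp hi.ne']
  have h0 : padicValNat p i = 0 := maxPowDiv_eq_zero hi hd
  rw [h0, zero_add]

lemma rayRep_of_mul_pow {p i l : ℕ} (hp : 1 < p) (hi : 0 < i) (hd : ¬ p ∣ i) :
    rayRep p (i * p ^ l - 1) = i := by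
  have hpos : 0 < i * p ^ l := Nat.mul_pos hi (pow_pos (by omega) l)
  have h1 := rayRep_mul_pow p (i * p ^ l - 1)
  rw [rayPow_mul_pow hp hi hd] at h1
  have hsub : i * p ^ l - 1 + 1 = i * p ^ l := by omega
  rw [hsub] at h1
  exact Nat.eq_of_mul_eq_mul_right (pow_pos (by omega) l) h1

/-! ### reps and len -/

def reps (p m : ℕ) : Finset ℕ := {i ∈ Finset.Ioc 0 m | ¬ p ∣ i}

def len (p m i : ℕ) : ℕ := Nat.log p (m / i) + 1

lemma mem_reps {p m i : ℕ} : i ∈ reps p m ↔ (0 < i ∧ i ≤ m) ∧ ¬ p ∣ i := by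
  simp [reps, Finset.mem_filter, Finset.mem_Ioc, and_assoc]

lemma lt_len_iff {p m i l : ℕ} (hp : 1 < p) (hi : 0 < i) (him : i ≤ m) :
    i * p ^ l ≤ m ↔ l < len p m i := by
  have hm : m / i ≠ 0 := (Nat.div_pos him hi).ne'
  calc i * p ^ l ≤ m ↔ p ^ l * i ≤ m := by rw [mul_comm]
    _ ↔ p ^ l ≤ m / i := (Nat.le_div_iff_mul_le hi).symm
    _ ↔ l ≤ Nat.log p (m / i) := (Nat.le_log_iff_pow_le hp hm).symm
    _ ↔ l < len p m i := by rw [len]; omega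

lemma len_le {p m i : ℕ} (hi : 0 < i) : len p m i ≤ Nat.log p m + 1 := by
  have := Nat.log_mono_right (b := p) (Nat.div_le_self m i)
  rw [len]; omega

lemma mem_box2 {m n a b : ℕ} : (a, b) ∈ box2 m n ↔ a < m ∧ b < n := by
  simp [box2]

lemma box2_finite (m n : ℕ) : (box2 m n).Finite :=
  (Set.finite_Iio m).prod (Set.finite_Iio n)

lemma box2_zero_left (n : ℕ) : box2 0 n = ∅ := by
  ext ⟨a, b⟩; simp [mem_box2]

lemma box2_zero_right (m : ℕ) : box2 m 0 = ∅ := by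
  ext ⟨a, b⟩; simp [mem_box2]


/-! ### pattern counting basics -/

variable {A : Type*} [Fintype A]

lemma pattSet_finite {G : Type*} {Λ : Set G} (hΛ : Λ.Finite) (Z : Set (G → A)) :
    (Λ.restrict '' Z).Finite := by
  have : Finite ↥Λ := hΛ.to_subtype
  exact Set.toFinite _

lemma pattCount_pos {G : Type*} {Λ : Set G} (hΛ : Λ.Finite) {Z : Set (G → A)}
    (hZ : Z.Nonempty) : 0 < pattCount Λ Z := by
  have hfin := pattSet_finite (A := A) hΛ Z
  have : Finite ↥(Λ.restrict '' Z) := hfin.to_subtype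
  have : Nonempty ↥(Λ.restrict '' Z) := (hZ.image _).to_subtype
  exact Nat.card_pos

lemma pattCount_empty {G : Type*} {Z : Set (G → A)} (hZ : Z.Nonempty) :
    pattCount (∅ : Set G) Z = 1 := by
  have hs : Subsingleton (↥(∅ : Set G) → A) :=
    ⟨fun f g => funext fun w => absurd w.2 (Set.notMem_empty w.1)⟩
  rw [pattCount, Nat.card_eq_one_iff_unique]
  constructor
  · exact ⟨fun a b => Subtype.ext (Subsingleton.elim _ _)⟩
  · exact ((hZ.image _).to_subtype)

lemma pattCount_zero {G : Type*} (Λ : Set G) : pattCount Λ (∅ : Set (G → A)) = 0 := by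
  rw [pattCount, Set.image_empty]
  simp

lemma pattCount_mono_window {G : Type*} {Λ Λ' : Set G} (h : Λ ⊆ Λ') (hΛ' : Λ'.Finite)
    (Z : Set (G → A)) : pattCount Λ Z ≤ pattCount Λ' Z := by
  have key : Λ.restrict '' Z
      = (fun (q : ↥Λ' → A) (w : ↥Λ) => q ⟨w.1, h w.2⟩) '' (Λ'.restrict '' Z) := by
    ext f; constructor
    · rintro ⟨x, hx, rfl⟩; exact ⟨Λ'.restrict x, ⟨x, hx, rfl⟩, rfl⟩
    · rintro ⟨q, ⟨x, hx, rfl⟩, rfl⟩; exact ⟨x, hx, rfl⟩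
  rw [pattCount, pattCount, key]
  exact Nat.card_image_le (pattSet_finite hΛ' Z)

lemma ncard_box2 (m n : ℕ) : Nat.card ↥(box2 m n) = m * n := by
  rw [box2, Nat.card_congr (Equiv.Set.prod _ _), Nat.card_prod]
  have h1 : ∀ k : ℕ, Nat.card ↥(Set.Iio k) = k := by
    intro k
    rw [Nat.card_coe_set_eq, ← Finset.coe_range, Set.ncard_coe_finset, Finset.card_range]
  rw [h1, h1]

lemma pattCount_le_pow (m n : ℕ) (Z : Set (ℕ × ℕ → A)) :
    pattCount (box2 m n) Z ≤ Fintype.card A ^ (m * n) := by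
  have hfin : Finite ↥(box2 m n) := (box2_finite m n).to_subtype
  calc pattCount (box2 m n) Z ≤ Nat.card (↥(box2 m n) → A) := by
        rw [pattCount]
        have := Nat.card_mono (Set.finite_univ (α := ↥(box2 m n) → A))
          (Set.subset_univ ((box2 m n).restrict '' Z))
        simpa using this
    _ = Fintype.card A ^ (m * n) := by
        rw [Nat.card_fun, ncard_box2, Nat.card_eq_fintype_card]

lemma shift_iter {X : Set (ℕ → A)} (hσ : ∀ x ∈ X, (fun n => x (n + 1)) ∈ X) (a : ℕ) :
    ∀ x ∈ X, (fun n => x (n + a)) ∈ X := by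
  induction a with
  | zero => simpa using fun x hx => hx
  | succ a ih =>
    intro x hx
    have h1 := hσ _ (ih x hx)
    have h2 : (fun n => x (n + (a + 1))) = fun n => x (n + 1 + a) := by
      funext n; congr 1; omega
    rw [h2]; exact h1

/-- Subadditivity of pattern counts of an axial product in the second (column) direction. -/
lemma pattCount_subadd (Ω X : Set (ℕ → A)) (hσ : ∀ x ∈ X, (fun n => x (n + 1)) ∈ X)
    (i a b : ℕ) :
    pattCount (box2 i (a + b)) (axial2 Ω X)
      ≤ pattCount (box2 i a) (axial2 Ω X) * pattCount (box2 i b) (axial2 Ω X) := by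
  classical
  set W := axial2 Ω X with hWdef
  have hmem1 : ∀ w : ↥(box2 i a), (w : ℕ × ℕ) ∈ box2 i (a + b) := by
    rintro ⟨⟨s, t⟩, hw⟩
    obtain ⟨hs, ht⟩ := mem_box2.mp hw
    exact mem_box2.mpr ⟨hs, by omega⟩
  have hmem2 : ∀ w : ↥(box2 i b), (((w : ℕ × ℕ).1, (w : ℕ × ℕ).2 + a)) ∈ box2 i (a + b) := by
    rintro ⟨⟨s, t⟩, hw⟩
    obtain ⟨hs, ht⟩ := mem_box2.mp hw
    show (s, t + a) ∈ box2 i (a + b)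
    exact mem_box2.mpr ⟨hs, by omega⟩
  set F : (↥(box2 i (a + b)) → A) → (↥(box2 i a) → A) × (↥(box2 i b) → A) :=
    fun q => (fun w => q ⟨w, hmem1 w⟩, fun w => q ⟨((w : ℕ × ℕ).1, (w : ℕ × ℕ).2 + a), hmem2 w⟩)
    with hF
  have hFinj : Function.Injective F := by
    intro q q' h
    have h1 := congrArg Prod.fst h
    have h2 := congrArg Prod.snd h
    simp only [hF] at h1 h2
    funext w
    obtain ⟨⟨s, t⟩, hw⟩ := w
    obtain ⟨hs, ht⟩ := mem_box2.mp hw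
    by_cases hta : t < a
    · have := congrFun h1 ⟨(s, t), mem_box2.mpr ⟨hs, hta⟩⟩
      simpa using this
    · have hw2 : (s, t - a) ∈ box2 i b := mem_box2.mpr ⟨hs, by omega⟩
      have h3 := congrFun h2 ⟨(s, t - a), hw2⟩
      have heq : (⟨(s, t), hw⟩ : ↥(box2 i (a + b)))
          = ⟨(((⟨(s, t - a), hw2⟩ : ↥(box2 i b)) : ℕ × ℕ).1,
              ((⟨(s, t - a), hw2⟩ : ↥(box2 i b)) : ℕ × ℕ).2 + a),
              hmem2 ⟨(s, t - a), hw2⟩⟩ := by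
        apply Subtype.ext
        show (s, t) = (s, t - a + a)
        exact Prod.ext rfl (by omega)
      rw [heq]
      exact h3
  have hsub : F '' ((box2 i (a + b)).restrict '' W)
      ⊆ ((box2 i a).restrict '' W) ×ˢ ((box2 i b).restrict '' W) := by
    rintro _ ⟨_, ⟨x, hx, rfl⟩, rfl⟩
    constructor
    · exact ⟨x, hx, rfl⟩
    · refine ⟨fun q => x (q.1, q.2 + a), ⟨fun j => hx.1 (j + a), fun s => ?_⟩, rfl⟩
      exact shift_iter hσ a _ (hx.2 s)
  have hfinW : ∀ c d : ℕ, ((box2 c d).restrict '' W).Finite :=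
    fun c d => pattSet_finite (box2_finite c d) W
  calc pattCount (box2 i (a + b)) W
      = Nat.card (F '' ((box2 i (a + b)).restrict '' W)) := by
        rw [pattCount, Nat.card_image_of_injective hFinj]
    _ ≤ Nat.card ↥(((box2 i a).restrict '' W) ×ˢ ((box2 i b).restrict '' W)) :=
        Nat.card_mono ((hfinW i a).prod (hfinW i b)) hsub
    _ = pattCount (box2 i a) W * pattCount (box2 i b) W := by
        rw [Nat.card_congr (Equiv.Set.prod _ _), Nat.card_prod, pattCount, pattCount]


/-- Nonemptiness of the multiplicative axial product. -/
lemma axial_mulSubshift_nonempty {p : ℕ} (hp : 1 < p) {Ω X : Set (ℕ → A)}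
    (hW : (axial2 Ω X).Nonempty) : (axial2 (mulSubshift p Ω) X).Nonempty := by
  obtain ⟨y, hy⟩ := hW
  refine ⟨fun q => y (rayPow p q.1, q.2), ?_, ?_⟩
  · intro j i hi1 hid
    have h1 : (fun l => y (rayPow p (i * p ^ l - 1), j)) = fun l => y (l, j) := by
      funext l; rw [rayPow_mul_pow hp hi1 hid]
    show (fun l => y (rayPow p (i * p ^ l - 1), j)) ∈ Ω
    rw [h1]
    exact hy.1 j
  · intro a
    exact hy.2 (rayPow p a)

/-- Emptiness transfers. -/
lemma axial_mulSubshift_empty {p : ℕ} (hp : 2 ≤ p) {Ω X : Set (ℕ → A)}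
    (hW : ¬ (axial2 Ω X).Nonempty) : axial2 (mulSubshift p Ω) X = ∅ := by
  rw [Set.eq_empty_iff_forall_notMem]
  intro x hx
  apply hW
  have hd1 : ¬ p ∣ 1 := fun h => by have := Nat.le_of_dvd one_pos h; omega
  exact ⟨fun q => x (1 * p ^ q.1 - 1, q.2), fun j => hx.1 j 1 le_rfl hd1,
    fun l => hx.2 (1 * p ^ l - 1)⟩

/-- Key combinatorial identity: patterns of the multiplicative axial product factor as a
product over rays. -/
lemma prod_formula {p : ℕ} (hp : 2 ≤ p) (Ω X : Set (ℕ → A))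
    (hW : (axial2 Ω X).Nonempty) (m n : ℕ) :
    pattCount (box2 m n) (axial2 (mulSubshift p Ω) X)
      = ∏ i ∈ reps p m, pattCount (box2 (len p m i) n) (axial2 Ω X) := by
  classical
  have hp1 : 1 < p := hp
  set W := axial2 Ω X with hWdef
  set Z := axial2 (mulSubshift p Ω) X with hZdef
  have hpt : ∀ i : ↥(reps p m), ∀ w : ↥(box2 (len p m (i : ℕ)) n),
      (((i : ℕ) * p ^ (w : ℕ × ℕ).1 - 1, (w : ℕ × ℕ).2)) ∈ box2 m n := by
    rintro ⟨i, hi⟩ ⟨⟨l, j⟩, hw⟩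
    obtain ⟨⟨hi0, him⟩, hid⟩ := mem_reps.mp hi
    obtain ⟨hl, hj⟩ := mem_box2.mp hw
    have h1 : i * p ^ l ≤ m := (lt_len_iff hp1 hi0 him).mpr hl
    have h2 : 0 < i * p ^ l := Nat.mul_pos hi0 (pow_pos (by omega) l)
    show (i * p ^ l - 1, j) ∈ box2 m n
    exact mem_box2.mpr ⟨by omega, hj⟩
  set E : (↥(box2 m n) → A) → ∀ i : ↥(reps p m), (↥(box2 (len p m (i : ℕ)) n) → A) :=
    fun q i w => q ⟨((i : ℕ) * p ^ (w : ℕ × ℕ).1 - 1, (w : ℕ × ℕ).2), hpt i w⟩ with hE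
  have hEinj : Function.Injective E := by
    intro q q' h
    funext w
    obtain ⟨⟨a, b⟩, hab⟩ := w
    obtain ⟨ham, hbn⟩ := mem_box2.mp hab
    have hil : rayRep p a * p ^ rayPow p a = a + 1 := rayRep_mul_pow p a
    have hi0 : 0 < rayRep p a := rayRep_pos p a
    have hile : rayRep p a ≤ rayRep p a * p ^ rayPow p a :=
      Nat.le_mul_of_pos_right _ (pow_pos (by omega) _)
    have hirep : rayRep p a ∈ reps p m :=
      mem_reps.mpr ⟨⟨hi0, by omega⟩, not_dvd_rayRep hp1 a⟩
    have hlen : rayPow p a < len p m (rayRep p a) :=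
      (lt_len_iff hp1 hi0 (by omega)).mp (by omega)
    have hwmem : ((rayPow p a, b)) ∈ box2 (len p m (rayRep p a)) n :=
      mem_box2.mpr ⟨hlen, hbn⟩
    have h3 := congrFun (congrFun h ⟨rayRep p a, hirep⟩) ⟨(rayPow p a, b), hwmem⟩
    have heq : (⟨(a, b), hab⟩ : ↥(box2 m n))
        = ⟨(rayRep p a * p ^ ((⟨(rayPow p a, b), hwmem⟩ :
              ↥(box2 (len p m (rayRep p a)) n)) : ℕ × ℕ).1 - 1,
            ((⟨(rayPow p a, b), hwmem⟩ : ↥(box2 (len p m (rayRep p a)) n)) : ℕ × ℕ).2),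
            hpt ⟨rayRep p a, hirep⟩ ⟨(rayPow p a, b), hwmem⟩⟩ := by
      apply Subtype.ext
      show (a, b) = (rayRep p a * p ^ rayPow p a - 1, b)
      exact Prod.ext (by omega) rfl
    rw [heq]
    exact h3
  have himg : E '' ((box2 m n).restrict '' Z)
      = Set.univ.pi (fun i : ↥(reps p m) => (box2 (len p m (i : ℕ)) n).restrict '' W) := by
    apply Set.Subset.antisymm
    · rintro _ ⟨_, ⟨x, hx, rfl⟩, rfl⟩ i _
      obtain ⟨⟨hi0, him⟩, hid⟩ := mem_reps.mp i.2
      refine ⟨fun q => x ((i : ℕ) * p ^ q.1 - 1, q.2), ⟨fun j => hx.1 j (i : ℕ) hi0 hid,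
        fun l => hx.2 ((i : ℕ) * p ^ l - 1)⟩, rfl⟩
    · rintro g hg
      choose y hyW hyr using fun i : ↥(reps p m) => hg i (Set.mem_univ i)
      obtain ⟨y₀, hy₀⟩ := hW
      set Y : ℕ → (ℕ × ℕ → A) := fun i => if h : i ∈ reps p m then y ⟨i, h⟩ else y₀ with hYdef
      have hYW : ∀ i, Y i ∈ W := by
        intro i
        rw [hYdef]
        dsimp only
        split
        · exact hyW _
        · exact hy₀
      set x : ℕ × ℕ → A := fun q => Y (rayRep p q.1) (rayPow p q.1, q.2) with hxdef
      have hxZ : x ∈ Z := by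
        constructor
        · intro j i hi1 hid
          have h1 : (fun l => x (i * p ^ l - 1, j)) = fun l => Y i (l, j) := by
            funext l
            show Y (rayRep p (i * p ^ l - 1)) (rayPow p (i * p ^ l - 1), j) = Y i (l, j)
            rw [rayRep_of_mul_pow hp1 hi1 hid, rayPow_mul_pow hp1 hi1 hid]
          show (fun l => x (i * p ^ l - 1, j)) ∈ Ω
          rw [h1]
          exact (hYW i).1 j
        · intro a
          exact (hYW (rayRep p a)).2 (rayPow p a)
      refine ⟨(box2 m n).restrict x, ⟨x, hxZ, rfl⟩, ?_⟩
      funext i w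
      obtain ⟨⟨l, j⟩, hw⟩ := w
      obtain ⟨⟨hi0, him⟩, hid⟩ := mem_reps.mp i.2
      have key : E ((box2 m n).restrict x) i ⟨(l, j), hw⟩ = Y (i : ℕ) (l, j) := by
        show x ((i : ℕ) * p ^ l - 1, j) = Y (i : ℕ) (l, j)
        show Y (rayRep p ((i : ℕ) * p ^ l - 1)) (rayPow p ((i : ℕ) * p ^ l - 1), j)
          = Y (i : ℕ) (l, j)
        rw [rayRep_of_mul_pow hp1 hi0 hid, rayPow_mul_pow hp1 hi0 hid]
      have hYi : Y (i : ℕ) = y i := by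
        rw [hYdef]
        dsimp only
        rw [dif_pos i.2]
      rw [key, hYi, ← hyr i]
      rfl
  calc pattCount (box2 m n) Z
      = Nat.card (E '' ((box2 m n).restrict '' Z)) := by
        rw [pattCount, Nat.card_image_of_injective hEinj]
    _ = Nat.card (Set.univ.pi
          (fun i : ↥(reps p m) => (box2 (len p m (i : ℕ)) n).restrict '' W)) := by rw [himg]
    _ = Nat.card (∀ i : ↥(reps p m), ↥((box2 (len p m (i : ℕ)) n).restrict '' W)) :=
        Nat.card_congr (Equiv.Set.univPi _)
    _ = ∏ i : ↥(reps p m), pattCount (box2 (len p m (i : ℕ)) n) W := Nat.card_pi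
    _ = ∏ i ∈ reps p m, pattCount (box2 (len p m i) n) W :=
        Finset.prod_coe_sort (reps p m) (fun i => pattCount (box2 (len p m i) n) W)


open Filter in
lemma tendsto_div_cast {q : ℕ} (hq : 0 < q) :
    Tendsto (fun m : ℕ => ((m / q : ℕ) : ℝ) / (m : ℝ)) atTop (nhds (1 / (q : ℝ))) := by
  have hq0 : (0 : ℝ) < q := by exact_mod_cast hq
  have h1 : Tendsto (fun m : ℕ => 1 / (q : ℝ) - 1 / (m : ℝ)) atTop (nhds (1 / (q : ℝ) - 0)) :=
    tendsto_const_nhds.sub tendsto_one_div_atTop_nhds_zero_nat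
  rw [sub_zero] at h1
  refine tendsto_of_tendsto_of_tendsto_of_le_of_le' h1 tendsto_const_nhds ?_ ?_
  · filter_upwards [eventually_ge_atTop 1] with m hm
    have hm0 : (0 : ℝ) < m := by exact_mod_cast hm
    have hA : (q : ℝ) * ((m / q : ℕ) : ℝ) + ((m % q : ℕ) : ℝ) = (m : ℝ) := by
      exact_mod_cast Nat.div_add_mod m q
    have hr : ((m % q : ℕ) : ℝ) < q := by exact_mod_cast Nat.mod_lt m hq
    set d := ((m / q : ℕ) : ℝ) with hd
    have hd0 : 0 ≤ d := by positivity
    have hkey : (m : ℝ) - q ≤ d * q := by nlinarith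
    rw [div_sub_div _ _ hq0.ne' hm0.ne', div_le_div_iff₀ (by positivity) hm0]
    nlinarith [mul_le_mul_of_nonneg_right hkey hm0.le]
  · filter_upwards [eventually_ge_atTop 1] with m hm
    have hm0 : (0 : ℝ) < m := by exact_mod_cast hm
    have hA : (q : ℝ) * ((m / q : ℕ) : ℝ) + ((m % q : ℕ) : ℝ) = (m : ℝ) := by
      exact_mod_cast Nat.div_add_mod m q
    have hr0 : (0 : ℝ) ≤ ((m % q : ℕ) : ℝ) := by positivity
    rw [div_le_div_iff₀ hm0 hq0]
    nlinarith

end EntropyThm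

open EntropyThm in
/-- Theorem 2.2: the limits `λ_i = lim_j (1/j) log|P([1,i]×[1,j], Ω ⊗ X)|` exist, the
entropy of `X_Ω^p ⊗ X` on `ℕ²` exists, and it equals `((p−1)²/p²) Σ_{i≥1} λ_i / p^{i−1}`. -/
theorem entropy_axialProd_mulSubshift_subshift
    {A : Type*} [Fintype A] [TopologicalSpace A] [DiscreteTopology A]
    (p : ℕ) (hp : 2 ≤ p)
    (Ω X : Set (ℕ → A)) (hΩ : IsSubshift Ω) (hX : IsSubshift X) :
    ∃ lam : ℕ → ℝ,
      (∀ i : ℕ, 1 ≤ i →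
        Tendsto
          (fun j : ℕ => Real.log (pattCount (box2 i j) (axial2 Ω X)) / (j : ℝ))
          atTop (nhds (lam i))) ∧
      Tendsto
        (fun mn : ℕ × ℕ =>
          Real.log (pattCount (box2 mn.1 mn.2) (axial2 (mulSubshift p Ω) X)) /
            ((mn.1 : ℝ) * (mn.2 : ℝ)))
        atTop
        (nhds ((((p : ℝ) - 1) ^ 2 / (p : ℝ) ^ 2) *
          ∑' i : ℕ, lam (i + 1) / (p : ℝ) ^ i)) := by
  classical
  have hp1 : 1 < p := hp
  have hppos : (0 : ℝ) < p := by exact_mod_cast (by omega : 0 < p)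
  by_cases hW : (axial2 Ω X).Nonempty
  swap
  · -- the degenerate case: the axial product is empty
    have hWe : axial2 Ω X = ∅ := Set.not_nonempty_iff_eq_empty.mp hW
    have hZe : axial2 (mulSubshift p Ω) X = ∅ := axial_mulSubshift_empty hp hW
    refine ⟨fun _ => 0, ?_, ?_⟩
    · intro i _
      have h1 : (fun j : ℕ => Real.log (pattCount (box2 i j) (axial2 Ω X)) / (j : ℝ))
          = fun _ => (0 : ℝ) := by
        funext j
        rw [hWe, pattCount_zero]
        simp
      rw [h1]
      exact tendsto_const_nhds
    · have h1 : (fun mn : ℕ × ℕ =>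
          Real.log (pattCount (box2 mn.1 mn.2) (axial2 (mulSubshift p Ω) X)) /
            ((mn.1 : ℝ) * (mn.2 : ℝ))) = fun _ => (0 : ℝ) := by
        funext mn
        rw [hZe, pattCount_zero]
        simp
      rw [h1]
      have h2 : (∑' i : ℕ, (fun _ : ℕ => (0 : ℝ)) (i + 1) / (p : ℝ) ^ i) = 0 := by simp
      rw [h2, mul_zero]
      exact tendsto_const_nhds
  · -- main case
    obtain ⟨w0, _⟩ := id hW
    have hAne : Nonempty A := ⟨w0 (0, 0)⟩
    set L : ℝ := Real.log (Fintype.card A) with hL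
    have hL0 : 0 ≤ L := Real.log_nonneg (by exact_mod_cast Fintype.card_pos)
    set M : ℕ → ℕ → ℕ := fun i n => pattCount (box2 i n) (axial2 Ω X) with hM
    have hM1 : ∀ i n, 1 ≤ M i n := fun i n => pattCount_pos (box2_finite i n) hW
    have hMc0 : ∀ i n, (0 : ℝ) < (M i n : ℝ) := fun i n => by exact_mod_cast hM1 i n
    have hMmul : ∀ i a b, M i (a + b) ≤ M i a * M i b :=
      fun i a b => pattCount_subadd Ω X hX.2.2 i a b
    have hbox_sub : ∀ i n : ℕ, box2 i n ⊆ box2 (i + 1) n := by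
      intro i n
      rintro ⟨a, b⟩ hab
      obtain ⟨h1, h2⟩ := mem_box2.mp hab
      exact mem_box2.mpr ⟨by omega, h2⟩
    have hMmono : ∀ i n, M i n ≤ M (i + 1) n := fun i n =>
      pattCount_mono_window (hbox_sub i n) (box2_finite (i + 1) n) _
    have hMpow : ∀ i n, M i n ≤ Fintype.card A ^ (i * n) :=
      fun i n => pattCount_le_pow i n _
    have hM0 : ∀ n, M 0 n = 1 := fun n => by
      show pattCount (box2 0 n) (axial2 Ω X) = 1
      rw [box2_zero_left]
      exact pattCount_empty hW
    have hMz : ∀ i, M i 0 = 1 := fun i => by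
      show pattCount (box2 i 0) (axial2 Ω X) = 1
      rw [box2_zero_right]
      exact pattCount_empty hW
    set u : ℕ → ℕ → ℝ := fun i n => Real.log (M i n) with hu
    have hu0 : ∀ i n, 0 ≤ u i n := fun i n => Real.log_nonneg (by exact_mod_cast hM1 i n)
    have husub : ∀ i, Subadditive (fun n => u i n) := by
      intro i a b
      show Real.log (M i (a + b)) ≤ Real.log (M i a) + Real.log (M i b)
      rw [← Real.log_mul (hMc0 i a).ne' (hMc0 i b).ne']
      apply Real.log_le_log (hMc0 i (a + b))
      exact_mod_cast hMmul i a b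
    have hubdd : ∀ i, BddBelow (Set.range fun n : ℕ => u i n / n) := by
      intro i
      refine ⟨0, ?_⟩
      rintro x ⟨n, rfl⟩
      exact div_nonneg (hu0 i n) (Nat.cast_nonneg n)
    set lam : ℕ → ℝ := fun i => (husub i).lim with hlam
    have hlamT : ∀ i, Tendsto (fun n : ℕ => u i n / n) atTop (nhds (lam i)) :=
      fun i => (husub i).tendsto_lim (hubdd i)
    have hlam0 : lam 0 = 0 := by
      have h2 : Tendsto (fun n : ℕ => u 0 n / n) atTop (nhds 0) := by
        have h3 : (fun n : ℕ => u 0 n / n) = fun _ => (0 : ℝ) := by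
          funext n
          show Real.log (M 0 n) / n = 0
          rw [hM0 n]
          simp
        rw [h3]
        exact tendsto_const_nhds
      exact tendsto_nhds_unique (hlamT 0) h2
    have hulog : ∀ i n, u i n ≤ (i : ℝ) * n * L := by
      intro i n
      show Real.log (M i n) ≤ _
      calc Real.log (M i n) ≤ Real.log ((Fintype.card A : ℝ) ^ (i * n)) := by
            apply Real.log_le_log (hMc0 i n)
            exact_mod_cast hMpow i n
        _ = (i : ℝ) * n * L := by rw [Real.log_pow]; push_cast; ring
    have hlam_nonneg : ∀ i, 0 ≤ lam i := fun i =>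
      ge_of_tendsto' (hlamT i) fun n => div_nonneg (hu0 i n) (Nat.cast_nonneg n)
    have hlam_le : ∀ i, lam i ≤ i * L := by
      intro i
      apply le_of_tendsto (hlamT i)
      filter_upwards [eventually_ge_atTop 1] with n hn
      have hn0 : (0 : ℝ) < n := by exact_mod_cast hn
      rw [div_le_iff₀ hn0]
      calc u i n ≤ (i : ℝ) * n * L := hulog i n
        _ = i * L * n := by ring
    set D : ℕ → ℕ → ℝ := fun k n => u (k + 1) n - u k n with hD
    have hD0 : ∀ k n, 0 ≤ D k n := by
      intro k n
      have h1 : u k n ≤ u (k + 1) n := by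
        apply Real.log_le_log (hMc0 k n)
        exact_mod_cast hMmono k n
      show 0 ≤ u (k + 1) n - u k n
      linarith
    have hDz : ∀ k, D k 0 = 0 := by
      intro k
      show Real.log (M (k + 1) 0) - Real.log (M k 0) = 0
      rw [hMz, hMz]
      simp
    have hDdiv0 : ∀ k n, 0 ≤ D k n / n := fun k n =>
      div_nonneg (hD0 k n) (Nat.cast_nonneg n)
    have hDdiv_le : ∀ k n, D k n / n ≤ ((k : ℝ) + 1) * L := by
      intro k n
      rcases Nat.eq_zero_or_pos n with rfl | hn
      · rw [hDz, zero_div]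
        positivity
      · have hn0 : (0 : ℝ) < n := by exact_mod_cast hn
        rw [div_le_iff₀ hn0]
        calc D k n ≤ u (k + 1) n := by
              have := hu0 k n
              show u (k + 1) n - u k n ≤ _
              linarith
          _ ≤ ((k + 1 : ℕ) : ℝ) * n * L := hulog (k + 1) n
          _ = ((k : ℝ) + 1) * L * n := by push_cast; ring
    have hDtend : ∀ k, Tendsto (fun n : ℕ => D k n / n) atTop (nhds (lam (k + 1) - lam k)) := by
      intro k
      have h1 : (fun n : ℕ => D k n / n) = fun n => u (k + 1) n / n - u k n / n := by
        funext n
        show (u (k + 1) n - u k n) / n = _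
        rw [sub_div]
      rw [h1]
      exact (hlamT (k + 1)).sub (hlamT k)
    -- the weight sequence
    set eR : ℕ → ℕ → ℝ := fun k m => ((m / p ^ k : ℕ) : ℝ) - ((m / p ^ (k + 1) : ℕ) : ℝ)
      with heRdef
    have hdivle : ∀ k m : ℕ, m / p ^ (k + 1) ≤ m / p ^ k := fun k m =>
      Nat.div_le_div_left (Nat.pow_le_pow_right (by omega) (by omega)) (pow_pos (by omega) k)
    have heR0 : ∀ k m, 0 ≤ eR k m := by
      intro k m
      show (0 : ℝ) ≤ _ - _
      have := hdivle k m
      have h2 : ((m / p ^ (k + 1) : ℕ) : ℝ) ≤ ((m / p ^ k : ℕ) : ℝ) := by exact_mod_cast this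
      linarith
    have heRle : ∀ k m, eR k m / m ≤ (1 / (p : ℝ)) ^ k := by
      intro k m
      have hpk : (0 : ℝ) < (p : ℝ) ^ k := by positivity
      rcases Nat.eq_zero_or_pos m with rfl | hm
      · have h1 : eR k 0 = 0 := by
          show ((0 / p ^ k : ℕ) : ℝ) - ((0 / p ^ (k + 1) : ℕ) : ℝ) = 0
          simp
        rw [h1, Nat.cast_zero, div_zero]
        positivity
      · have hm0 : (0 : ℝ) < m := by exact_mod_cast hm
        rw [div_le_iff₀ hm0]
        have h1 : eR k m ≤ ((m / p ^ k : ℕ) : ℝ) := by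
          show _ - _ ≤ _
          have : (0 : ℝ) ≤ ((m / p ^ (k + 1) : ℕ) : ℝ) := Nat.cast_nonneg _
          linarith
        have h2 : ((m / p ^ k : ℕ) : ℝ) ≤ (m : ℝ) / (p : ℝ) ^ k := by
          have h3 : ((m / p ^ k : ℕ) : ℝ) ≤ (m : ℝ) / ((p ^ k : ℕ) : ℝ) := Nat.cast_div_le
          rwa [Nat.cast_pow] at h3
        have h4 : (1 / (p : ℝ)) ^ k * m = (m : ℝ) / (p : ℝ) ^ k := by
          rw [div_pow, one_pow]
          ring
        rw [h4]
        linarith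
    have heRtend : ∀ k, Tendsto (fun m : ℕ => eR k m / m) atTop
        (nhds (1 / (p : ℝ) ^ k - 1 / (p : ℝ) ^ (k + 1))) := by
      intro k
      have h1 := EntropyThm.tendsto_div_cast (q := p ^ k) (pow_pos (by omega) k)
      have h2 := EntropyThm.tendsto_div_cast (q := p ^ (k + 1)) (pow_pos (by omega) (k + 1))
      have h3 : (fun m : ℕ => eR k m / m)
          = fun m : ℕ => ((m / p ^ k : ℕ) : ℝ) / m - ((m / p ^ (k + 1) : ℕ) : ℝ) / m := by
        funext m
        show (_ - _) / (m : ℝ) = _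
        rw [sub_div]
      rw [h3]
      have h4 := h1.sub h2
      push_cast at h4
      exact h4
    -- the key identity
    have key : ∀ m n : ℕ,
        Real.log (pattCount (box2 m n) (axial2 (mulSubshift p Ω) X))
          = ∑' k : ℕ, eR k m * D k n := by
      intro m n
      set K := Nat.log p m + 1 with hK
      have step1 : Real.log (pattCount (box2 m n) (axial2 (mulSubshift p Ω) X))
          = ∑ i ∈ reps p m, u (len p m i) n := by
        rw [prod_formula hp Ω X hW m n]
        push_cast
        rw [Real.log_prod]
        intro i _
        exact (hMc0 _ n).ne'
      have step2 : ∀ i ∈ reps p m,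
          u (len p m i) n
            = ∑ k ∈ Finset.range K, (if k < len p m i then D k n else 0) := by
        intro i hi
        obtain ⟨⟨hi0, _⟩, _⟩ := mem_reps.mp hi
        have hlK : len p m i ≤ K := len_le hi0
        have h1 : Finset.filter (fun k => k < len p m i) (Finset.range K)
            = Finset.range (len p m i) := by
          ext k
          simp only [Finset.mem_filter, Finset.mem_range]
          omega
        rw [← Finset.sum_filter, h1]
        have h2 : ∑ k ∈ Finset.range (len p m i), D k n
            = u (len p m i) n - u 0 n := Finset.sum_range_sub (fun k => u k n) _
        have h3 : u 0 n = 0 := by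
          show Real.log (M 0 n) = 0
          rw [hM0]
          simp
        rw [h2, h3, sub_zero]
      have step3 : ∑ i ∈ reps p m, u (len p m i) n
          = ∑ k ∈ Finset.range K, eR k m * D k n := by
        rw [Finset.sum_congr rfl step2, Finset.sum_comm]
        apply Finset.sum_congr rfl
        intro k _
        rw [← Finset.sum_filter, Finset.sum_const]
        have hfe : Finset.filter (fun i => k < len p m i) (reps p m)
            = Finset.filter (fun i => ¬ p ∣ i) (Finset.Ioc 0 (m / p ^ k)) := by
          ext j
          rw [Finset.mem_filter, Finset.mem_filter, Finset.mem_Ioc]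
          constructor
          · rintro ⟨hj, hk2⟩
            obtain ⟨⟨hj0, hjm⟩, hjd⟩ := mem_reps.mp hj
            have h5 : j * p ^ k ≤ m := (lt_len_iff hp1 hj0 hjm).mpr hk2
            exact ⟨⟨hj0, (Nat.le_div_iff_mul_le (pow_pos (by omega) k)).mpr h5⟩, hjd⟩
          · rintro ⟨⟨hj0, hjk⟩, hjd⟩
            have h5 : j * p ^ k ≤ m := (Nat.le_div_iff_mul_le (pow_pos (by omega) k)).mp hjk
            have hjm : j ≤ m := le_trans hjk (Nat.div_le_self _ _)
            exact ⟨mem_reps.mpr ⟨⟨hj0, hjm⟩, hjd⟩, (lt_len_iff hp1 hj0 hjm).mp h5⟩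
        have hcard : (Finset.filter (fun i => k < len p m i) (reps p m)).card
            = m / p ^ k - m / p ^ (k + 1) := by
          rw [hfe]
          have h6 := Nat.Ioc_filter_dvd_card_eq_div (m / p ^ k) p
          have h7 := Finset.card_filter_add_card_filter_not
            (s := Finset.Ioc 0 (m / p ^ k)) (p := fun i => p ∣ i)
          rw [Nat.card_Ioc] at h7
          have h8 : m / p ^ k / p = m / p ^ (k + 1) := by
            rw [Nat.div_div_eq_div_mul, ← pow_succ]
          omega
        rw [hcard, nsmul_eq_mul]
        congr 1
        rw [Nat.cast_sub (hdivle k m)]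
      have hvanish : ∀ k ∉ Finset.range K, eR k m * D k n = 0 := by
        intro k hk
        rw [Finset.mem_range, not_lt] at hk
        have h9 : m < p ^ k := lt_of_lt_of_le (Nat.lt_pow_succ_log_self hp1 m)
          (Nat.pow_le_pow_right (by omega) (by omega))
        have h10 : m < p ^ (k + 1) := lt_of_lt_of_le h9 (Nat.pow_le_pow_right (by omega) (by omega))
        have h11 : eR k m = 0 := by
          show ((m / p ^ k : ℕ) : ℝ) - ((m / p ^ (k + 1) : ℕ) : ℝ) = 0
          rw [Nat.div_eq_of_lt h9, Nat.div_eq_of_lt h10]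
          simp
        rw [h11, zero_mul]
      rw [step1, step3]
      exact (tsum_eq_sum hvanish).symm
    have hFun : ∀ mn : ℕ × ℕ,
        Real.log (pattCount (box2 mn.1 mn.2) (axial2 (mulSubshift p Ω) X))
            / ((mn.1 : ℝ) * (mn.2 : ℝ))
          = ∑' k : ℕ, (eR k mn.1 / mn.1) * (D k mn.2 / mn.2) := by
      rintro ⟨m, n⟩
      rw [key m n, ← tsum_div_const]
      apply tsum_congr
      intro k
      rw [div_mul_div_comm]
    have hfst : Tendsto (Prod.fst : ℕ × ℕ → ℕ) atTop atTop := by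
      rw [← prod_atTop_atTop_eq]
      exact tendsto_fst
    have hsnd : Tendsto (Prod.snd : ℕ × ℕ → ℕ) atTop atTop := by
      rw [← prod_atTop_atTop_eq]
      exact tendsto_snd
    set g : ℕ → ℝ := fun k => (1 / (p : ℝ) ^ k - 1 / (p : ℝ) ^ (k + 1)) * (lam (k + 1) - lam k)
      with hg
    have hq1 : ‖1 / (p : ℝ)‖ < 1 := by
      rw [Real.norm_eq_abs, abs_of_nonneg (by positivity), div_lt_one hppos]
      exact_mod_cast hp1
    have hsumgeo : Summable (fun k : ℕ => ((k : ℝ) + 1) * (1 / (p : ℝ)) ^ k) := by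
      have h1 := summable_pow_mul_geometric_of_norm_lt_one 1 hq1
      have h2 : Summable (fun k : ℕ => (1 / (p : ℝ)) ^ k) := summable_geometric_of_norm_lt_one hq1
      apply Summable.congr (h1.add h2)
      intro k
      simp only [pow_one]
      ring
    set bound : ℕ → ℝ := fun k => (1 / (p : ℝ)) ^ k * (((k : ℝ) + 1) * L) with hbound
    have hsumbound : Summable bound := by
      apply Summable.congr (hsumgeo.mul_right L)
      intro k
      show ((k : ℝ) + 1) * (1 / (p : ℝ)) ^ k * L = _
      ring
    have htsum_tendsto : Tendsto
        (fun mn : ℕ × ℕ => ∑' k : ℕ, (eR k mn.1 / mn.1) * (D k mn.2 / mn.2))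
        atTop (nhds (∑' k, g k)) := by
      apply tendsto_tsum_of_dominated_convergence hsumbound
      · intro k
        exact ((heRtend k).comp hfst).mul ((hDtend k).comp hsnd)
      · apply Eventually.of_forall
        intro mn k
        have h1 : 0 ≤ eR k mn.1 / mn.1 := div_nonneg (heR0 k mn.1) (Nat.cast_nonneg _)
        rw [Real.norm_eq_abs, abs_of_nonneg (mul_nonneg h1 (hDdiv0 k mn.2))]
        exact mul_le_mul (heRle k mn.1) (hDdiv_le k mn.2) (hDdiv0 k mn.2) (by positivity)
    -- identify the limit
    have hgsum : ∑' k, g k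
        = (((p : ℝ) - 1) ^ 2 / (p : ℝ) ^ 2) * ∑' i : ℕ, lam (i + 1) / (p : ℝ) ^ i := by
      set q : ℝ := 1 / (p : ℝ) with hqd
      have hq0 : 0 ≤ q := by positivity
      have hlam_le' : ∀ j : ℕ, lam j ≤ ((j : ℝ)) * L := fun j => hlam_le j
      have SB : Summable (fun k : ℕ => ((k : ℝ) + 1) * q ^ k * L) := by
        have h20 := hsumgeo.mul_right L
        exact h20.congr fun k => rfl
      have S1 : Summable (fun k : ℕ => q ^ k * lam (k + 1)) := by
        apply Summable.of_nonneg_of_le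
          (fun k => mul_nonneg (pow_nonneg hq0 k) (hlam_nonneg _)) (fun k => ?_) SB
        have h14 := hlam_le' (k + 1)
        push_cast at h14
        calc q ^ k * lam (k + 1) ≤ q ^ k * (((k : ℝ) + 1) * L) :=
              mul_le_mul_of_nonneg_left (by linarith) (pow_nonneg hq0 k)
          _ = ((k : ℝ) + 1) * q ^ k * L := by ring
      have S2 : Summable (fun k : ℕ => q ^ k * lam k) := by
        apply Summable.of_nonneg_of_le
          (fun k => mul_nonneg (pow_nonneg hq0 k) (hlam_nonneg _)) (fun k => ?_) SB
        have h14 := hlam_le' k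
        have h15 : ((k : ℝ)) * L ≤ ((k : ℝ) + 1) * L := by nlinarith [hL0]
        calc q ^ k * lam k ≤ q ^ k * (((k : ℝ) + 1) * L) :=
              mul_le_mul_of_nonneg_left (by linarith) (pow_nonneg hq0 k)
          _ = ((k : ℝ) + 1) * q ^ k * L := by ring
      have h12 : ∑' k : ℕ, q ^ k * lam k = q * ∑' k : ℕ, q ^ k * lam (k + 1) := by
        rw [S2.tsum_eq_zero_add]
        have h13 : ∀ k : ℕ, q ^ (k + 1) * lam (k + 1) = q * (q ^ k * lam (k + 1)) :=
          fun k => by ring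
        rw [tsum_congr h13, tsum_mul_left, pow_zero, one_mul, hlam0, zero_add]
      have hgk : ∀ k : ℕ, g k = (1 - q) * (q ^ k * lam (k + 1)) - (1 - q) * (q ^ k * lam k) := by
        intro k
        show (1 / (p : ℝ) ^ k - 1 / (p : ℝ) ^ (k + 1)) * (lam (k + 1) - lam k) = _
        have e1 : 1 / (p : ℝ) ^ k = q ^ k := by rw [hqd, div_pow, one_pow]
        have e2 : 1 / (p : ℝ) ^ (k + 1) = q ^ (k + 1) := by rw [hqd, div_pow, one_pow]
        rw [e1, e2, pow_succ]
        ring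
      have hT1 : ∑' k : ℕ, q ^ k * lam (k + 1) = ∑' i : ℕ, lam (i + 1) / (p : ℝ) ^ i := by
        apply tsum_congr
        intro k
        rw [hqd, div_pow, one_pow, one_div_mul_eq_div]
      rw [tsum_congr hgk, (S1.mul_left _).tsum_sub (S2.mul_left _), tsum_mul_left,
        tsum_mul_left, h12, ← hT1]
      have hpne : (p : ℝ) ≠ 0 := hppos.ne'
      rw [hqd]
      field_simp
    refine ⟨lam, fun i _ => hlamT i, ?_⟩
    rw [← hgsum]
    exact htsum_tendsto.congr fun mn => (hFun mn).symm
end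

section
/- For all integers p1, p2 with 2 ≤ p1 ≤ p2 and every n ≥ 1, the number of compositions of n with all parts in {1} ∪ {p2^k : k ≥ 1} is at most the number of compositions of n with all parts in {1} ∪ {p1^k : k ≥ 1}; that is, |P_{p2}(n)| ≤ |P_{p1}(n)|. -/
/-- Compositions of `n` (ordered tuples of positive integers summing to `n`,
encoded as lists) all of whose parts lie in `{1} ∪ {p^k : k ≥ 1}`. -/
def compPow (p n : ℕ) : Set (List ℕ) :=
  {l | l.sum = n ∧ ∀ a ∈ l, a = 1 ∨ ∃ k, 1 ≤ k ∧ a = p ^ k}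

/-- The set `{p^k − 1 : k ≥ 1}`. -/
def partsPm1 (p : ℕ) : Set ℕ := {a | ∃ k, 1 ≤ k ∧ a = p ^ k - 1}

/-- Compositions of `n` whose parts alternate between `{p1^k − 1 : k ≥ 1}` and
`{p2^k − 1 : k ≥ 1}` (starting with either set). -/
def altComp (p1 p2 n : ℕ) : Set (List ℕ) :=
  {l | l.sum = n ∧
    ((∀ t, t < l.length →
        (t % 2 = 0 → l.getD t 0 ∈ partsPm1 p1) ∧ (t % 2 = 1 → l.getD t 0 ∈ partsPm1 p2)) ∨
     (∀ t, t < l.length →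
        (t % 2 = 0 → l.getD t 0 ∈ partsPm1 p2) ∧ (t % 2 = 1 → l.getD t 0 ∈ partsPm1 p1)))}

/-- Compositions of `n` all of whose parts lie in `{1, 2} ∪ {2k : k ≥ 2}`. -/
def compA (n : ℕ) : Set (List ℕ) :=
  {l | l.sum = n ∧ ∀ a ∈ l, a = 1 ∨ a = 2 ∨ ∃ k, 2 ≤ k ∧ a = 2 * k}



def enc (p1 p2 : ℕ) : List ℕ → List ℕ
  | [] => []
  | a :: l => if a = 1 then 1 :: enc p1 p2 l
      else p1 ^ (Nat.log p2 a) :: (List.replicate (a - p1 ^ (Nat.log p2 a)) 1 ++ enc p1 p2 l)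

def dec (p1 p2 : ℕ) : List ℕ → List ℕ
  | [] => []
  | a :: l => if a = 1 then 1 :: dec p1 p2 l
      else p2 ^ (Nat.log p1 a) :: dec p1 p2 (l.drop (p2 ^ (Nat.log p1 a) - a))
  termination_by l => l.length
  decreasing_by all_goals (rw [List.length_cons]; (try rw [List.length_drop]); omega)

theorem dec_nil (p1 p2 : ℕ) : dec p1 p2 [] = [] := by simp [dec]

theorem dec_cons_one (p1 p2 : ℕ) (l : List ℕ) : dec p1 p2 (1 :: l) = 1 :: dec p1 p2 l := by
  rw [dec.eq_def]; simp

theorem dec_cons (p1 p2 a : ℕ) (l : List ℕ) (h : a ≠ 1) :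
    dec p1 p2 (a :: l) = p2 ^ (Nat.log p1 a) :: dec p1 p2 (l.drop (p2 ^ (Nat.log p1 a) - a)) := by
  rw [dec.eq_def]; simp [h]

theorem dec_enc (p1 p2 : ℕ) (hp1 : 2 ≤ p1) (hle : p1 ≤ p2)
    (l : List ℕ) (hl : ∀ a ∈ l, a = 1 ∨ ∃ k, 1 ≤ k ∧ a = p2 ^ k) :
    dec p1 p2 (enc p1 p2 l) = l := by
  induction l with
  | nil => simp [enc, dec_nil]
  | cons a l ih =>
    have hl' : ∀ a ∈ l, a = 1 ∨ ∃ k, 1 ≤ k ∧ a = p2 ^ k := fun b hb => hl b (by simp [hb])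
    rcases hl a (by simp) with h1 | ⟨k, hk, hak⟩
    · subst h1
      rw [enc, if_pos rfl, dec_cons_one, ih hl']
    · subst hak
      have hp2 : 1 < p2 := lt_of_lt_of_le hp1 hle
      have hne : p2 ^ k ≠ 1 := Nat.ne_of_gt (Nat.one_lt_pow (by omega) hp2)
      have hne1 : p1 ^ k ≠ 1 := Nat.ne_of_gt (Nat.one_lt_pow (by omega) (by omega))
      rw [enc, if_neg hne, Nat.log_pow hp2, dec_cons p1 p2 _ _ hne1, Nat.log_pow (by omega)]
      have hple : p1 ^ k ≤ p2 ^ k := Nat.pow_le_pow_left hle k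
      have hd := List.drop_left (l₁ := List.replicate (p2 ^ k - p1 ^ k) (1:ℕ)) (l₂ := enc p1 p2 l)
      rw [List.length_replicate] at hd
      rw [hd, ih hl']

theorem enc_sum (p1 p2 : ℕ) (hp1 : 2 ≤ p1) (hle : p1 ≤ p2)
    (l : List ℕ) (hl : ∀ a ∈ l, a = 1 ∨ ∃ k, 1 ≤ k ∧ a = p2 ^ k) :
    (enc p1 p2 l).sum = l.sum := by
  induction l with
  | nil => simp [enc]
  | cons a l ih =>
    have hl' : ∀ a ∈ l, a = 1 ∨ ∃ k, 1 ≤ k ∧ a = p2 ^ k := fun b hb => hl b (by simp [hb])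
    rcases hl a (by simp) with h1 | ⟨k, hk, hak⟩
    · subst h1; simp [enc, ih hl']
    · subst hak
      have hp2 : 1 < p2 := lt_of_lt_of_le hp1 hle
      have hne : p2 ^ k ≠ 1 := Nat.ne_of_gt (Nat.one_lt_pow (by omega) hp2)
      have hple : p1 ^ k ≤ p2 ^ k := Nat.pow_le_pow_left hle k
      rw [enc, if_neg hne, Nat.log_pow hp2]
      simp [ih hl']
      omega

theorem enc_parts (p1 p2 : ℕ) (hp1 : 2 ≤ p1) (hle : p1 ≤ p2)
    (l : List ℕ) (hl : ∀ a ∈ l, a = 1 ∨ ∃ k, 1 ≤ k ∧ a = p2 ^ k) :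
    ∀ b ∈ enc p1 p2 l, b = 1 ∨ ∃ k, 1 ≤ k ∧ b = p1 ^ k := by
  induction l with
  | nil => simp [enc]
  | cons a l ih =>
    have hl' : ∀ a ∈ l, a = 1 ∨ ∃ k, 1 ≤ k ∧ a = p2 ^ k := fun b hb => hl b (by simp [hb])
    rcases hl a (by simp) with h1 | ⟨k, hk, hak⟩
    · subst h1
      rw [enc, if_pos rfl]
      intro b hb
      rcases List.mem_cons.1 hb with h | h
      · exact Or.inl h
      · exact ih hl' b h
    · subst hak
      have hp2 : 1 < p2 := lt_of_lt_of_le hp1 hle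
      have hne : p2 ^ k ≠ 1 := Nat.ne_of_gt (Nat.one_lt_pow (by omega) hp2)
      rw [enc, if_neg hne, Nat.log_pow hp2]
      intro b hb
      rcases List.mem_cons.1 hb with h | h
      · exact Or.inr ⟨k, hk, h⟩
      · rcases List.mem_append.1 h with h | h
        · exact Or.inl (List.eq_of_mem_replicate h)
        · exact ih hl' b h

theorem compPow_finite (p n : ℕ) (hp : 2 ≤ p) : (compPow p n).Finite := by
  have hT : ((fun l : List (Fin (n+1)) => l.map Fin.val) ''
      {l : List (Fin (n+1)) | l.length ≤ n}).Finite :=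
    (List.finite_length_le (Fin (n+1)) n).image _
  refine hT.subset ?_
  rintro l ⟨hsum, hparts⟩
  have hone : ∀ a ∈ l, 1 ≤ a := by
    intro a ha
    rcases hparts a ha with h | ⟨k, hk, h⟩
    · omega
    · subst h; exact Nat.one_le_pow _ _ (by omega)
  have hlen : l.length ≤ n := hsum ▸ List.length_le_sum_of_one_le l hone
  have hbd : ∀ a ∈ l, a < n + 1 := by
    intro a ha
    have := List.single_le_sum (fun x _ => Nat.zero_le x) a ha
    omega
  refine ⟨l.pmap (fun a h => (⟨a, h⟩ : Fin (n+1))) hbd, ?_, ?_⟩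
  · simpa using hlen
  · simp [List.map_pmap]

/-- For `2 ≤ p1 ≤ p2` and `n ≥ 1`, `|P_{p2}(n)| ≤ |P_{p1}(n)|`. -/
theorem card_compPow_antitone (p1 p2 n : ℕ) (hp1 : 2 ≤ p1) (hle : p1 ≤ p2) (hn : 1 ≤ n) :
    Nat.card (compPow p2 n) ≤ Nat.card (compPow p1 n) := by
  have hinj : Set.InjOn (enc p1 p2) (compPow p2 n) := by
    intro a ha b hb hab
    rw [← dec_enc p1 p2 hp1 hle a ha.2, ← dec_enc p1 p2 hp1 hle b hb.2, hab]
  have himg : enc p1 p2 '' compPow p2 n ⊆ compPow p1 n := by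
    rintro _ ⟨l, ⟨hsum, hparts⟩, rfl⟩
    exact ⟨(enc_sum p1 p2 hp1 hle l hparts).trans hsum, enc_parts p1 p2 hp1 hle l hparts⟩
  calc Nat.card (compPow p2 n) = Nat.card (enc p1 p2 '' compPow p2 n) :=
        (Nat.card_image_of_injOn hinj).symm
    _ ≤ Nat.card (compPow p1 n) := Nat.card_mono (compPow_finite p1 n hp1) himg
end

section
/- For all integers p1, p2 ≥ 2 and every n ≥ 1, |P_{p1,p2}(n)| ≤ |P_2(n)|; that is, the number of compositions of n whose parts alternate between the sets {p1^k − 1 : k ≥ 1} and {p2^k − 1 : k ≥ 1} is at most the number of compositions of n all of whose parts are powers of 2. -/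
namespace AltProof

/-- Pattern compositions: even positions in `partsPm1 p`, odd positions in `partsPm1 q`. -/
def S (p q n : ℕ) : Set (List ℕ) :=
  {l | l.sum = n ∧ ∀ t, t < l.length →
      (t % 2 = 0 → l.getD t 0 ∈ partsPm1 p) ∧ (t % 2 = 1 → l.getD t 0 ∈ partsPm1 q)}

noncomputable def b (n : ℕ) : ℕ := (compPow 2 n).ncard

lemma altComp_eq (p1 p2 n : ℕ) : altComp p1 p2 n = S p1 p2 n ∪ S p2 p1 n := by
  ext l
  simp only [altComp, S, Set.mem_setOf_eq, Set.mem_union]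
  tauto

lemma partsPm1_pos {p a : ℕ} (hp : 2 ≤ p) (h : a ∈ partsPm1 p) : 1 ≤ a := by
  obtain ⟨k, hk, rfl⟩ := h
  have : 2 ≤ p ^ k := le_trans hp (Nat.le_self_pow (by omega) p)
  omega

/-- Positive lists with given sum. -/
def G (n : ℕ) : Set (List ℕ) := {l | l.sum = n ∧ ∀ a ∈ l, 1 ≤ a}

lemma G_finite : ∀ n, (G n).Finite := by
  intro n
  induction n using Nat.strong_induction_on with
  | _ n ih =>
    rcases Nat.eq_zero_or_pos n with hn | hn
    · subst hn
      apply Set.Finite.subset (Set.finite_singleton ([] : List ℕ))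
      rintro l ⟨hsum, hpos⟩
      cases l with
      | nil => rfl
      | cons a t =>
        have := hpos a (by simp)
        simp only [List.sum_cons] at hsum
        omega
    · apply Set.Finite.subset
        (Set.Finite.biUnion (Set.finite_Icc 1 n)
          (fun a (ha : a ∈ Set.Icc 1 n) =>
            ((ih (n - a) (by simp only [Set.mem_Icc] at ha; omega)).image (a :: ·))))
      rintro l ⟨hsum, hpos⟩
      cases l with
      | nil => simp at hsum; omega
      | cons a t =>
        have ha1 : 1 ≤ a := hpos a (by simp)
        simp only [List.sum_cons] at hsum
        refine Set.mem_biUnion (Set.mem_Icc.mpr ⟨ha1, by omega⟩) ?_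
        exact ⟨t, ⟨by omega, fun x hx => hpos x (by simp [hx])⟩, rfl⟩

lemma compPow_subset_G (n : ℕ) : compPow 2 n ⊆ G n := by
  rintro l ⟨hsum, hmem⟩
  refine ⟨hsum, fun a ha => ?_⟩
  rcases hmem a ha with h | ⟨k, hk, rfl⟩
  · omega
  · have : 2 ≤ 2 ^ k := le_trans (by norm_num) (Nat.le_self_pow (by omega) 2)
    omega

lemma compPow_finite (n : ℕ) : (compPow 2 n).Finite :=
  (G_finite n).subset (compPow_subset_G n)

lemma S_subset_G {p q : ℕ} (hp : 2 ≤ p) (hq : 2 ≤ q) (n : ℕ) : S p q n ⊆ G n := by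
  rintro l ⟨hsum, hcond⟩
  refine ⟨hsum, fun a ha => ?_⟩
  obtain ⟨i, hi, rfl⟩ := List.mem_iff_getElem.mp ha
  have h := hcond i hi
  have hg : l.getD i 0 = l[i] := List.getD_eq_getElem l 0 hi
  rcases Nat.mod_two_eq_zero_or_one i with h2 | h2
  · have := h.1 h2; rw [hg] at this; exact partsPm1_pos hp this
  · have := h.2 h2; rw [hg] at this; exact partsPm1_pos hq this

lemma S_finite {p q : ℕ} (hp : 2 ≤ p) (hq : 2 ≤ q) (n : ℕ) : (S p q n).Finite :=
  (G_finite n).subset (S_subset_G hp hq n)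

lemma b_pos (n : ℕ) : 1 ≤ b n := by
  have hmem : List.replicate n 1 ∈ compPow 2 n := by
    constructor
    · simp [List.sum_replicate]
    · intro a ha
      left
      exact (List.eq_of_mem_replicate ha)
  exact (Set.ncard_pos (compPow_finite n)).mpr ⟨_, hmem⟩

lemma cons_mem_compPow {e N : ℕ} (he : 2 ^ e ≤ N) {l : List ℕ}
    (hl : l ∈ compPow 2 (N - 2 ^ e)) : 2 ^ e :: l ∈ compPow 2 N := by
  obtain ⟨hsum, hmem⟩ := hl
  constructor
  · simp only [List.sum_cons, hsum]; omega
  · intro a ha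
    rcases List.mem_cons.mp ha with rfl | ha
    · rcases Nat.eq_zero_or_pos e with rfl | he'
      · left; norm_num
      · right; exact ⟨e, he', rfl⟩
    · exact hmem a ha

lemma b_mono : Monotone b := by
  apply monotone_nat_of_le_succ
  intro n
  have himg : (fun l => 1 :: l) '' compPow 2 n ⊆ compPow 2 (n + 1) := by
    rintro _ ⟨l, hl, rfl⟩
    have : (1 : ℕ) = 2 ^ 0 := by norm_num
    rw [this]
    exact cons_mem_compPow (by omega) (by simpa using hl)
  calc b n = ((fun l => 1 :: l) '' compPow 2 n).ncard :=
        (Set.ncard_image_of_injective _ (fun a b h => by injection h)).symm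
    _ ≤ b (n + 1) := Set.ncard_le_ncard himg (compPow_finite (n + 1))


/-- Sum of cardinalities of pairwise disjoint subsets of a finite set `B` is at most `|B|`. -/
lemma sum_ncard_le_of_disjoint {α ι : Type*} [DecidableEq ι] :
    ∀ (s : Finset ι) (C : ι → Set α) (B : Set α), B.Finite →
      (∀ i ∈ s, C i ⊆ B) →
      (∀ i ∈ s, ∀ j ∈ s, i ≠ j → Disjoint (C i) (C j)) →
      ∑ i ∈ s, (C i).ncard ≤ B.ncard := by
  intro s
  induction s using Finset.induction_on with
  | empty => intro C B hB _ _; simp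
  | insert a s ha ih =>
    intro C B hB hsub hdisj
    rw [Finset.sum_insert ha]
    have hCa : C a ⊆ B := hsub a (Finset.mem_insert_self a s)
    have h1 : ∑ i ∈ s, (C i).ncard ≤ (B \ C a).ncard := by
      apply ih C (B \ C a) (hB.diff (t := C a))
      · intro i hi
        intro x hx
        refine ⟨hsub i (Finset.mem_insert_of_mem hi) hx, fun hxa => ?_⟩
        have := hdisj i (Finset.mem_insert_of_mem hi) a (Finset.mem_insert_self a s)
          (fun h => ha (h ▸ hi))
        exact (Set.disjoint_left.mp this hx) hxa
      · intro i hi j hj hij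
        exact hdisj i (Finset.mem_insert_of_mem hi) j (Finset.mem_insert_of_mem hj) hij
    have h2 : (B \ C a).ncard = B.ncard - (C a).ncard :=
      Set.ncard_diff hCa (hB.subset hCa)
    have h3 : (C a).ncard ≤ B.ncard := Set.ncard_le_ncard hCa hB
    omega

/-- Key lower-bound fact: for distinct exponents `e` with `2^e ≤ N`,
`∑ b (N - 2^e) ≤ b N`. -/
lemma sum_b_le {N : ℕ} {s : Finset ℕ} (h : ∀ e ∈ s, 2 ^ e ≤ N) :
    ∑ e ∈ s, b (N - 2 ^ e) ≤ b N := by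
  have hterm : ∀ e ∈ s, b (N - 2 ^ e) = ((fun l => 2 ^ e :: l) '' compPow 2 (N - 2 ^ e)).ncard :=
    fun e _ => (Set.ncard_image_of_injective _ (fun a b h => by injection h)).symm
  rw [Finset.sum_congr rfl hterm]
  apply sum_ncard_le_of_disjoint s _ _ (compPow_finite N)
  · rintro e he _ ⟨l, hl, rfl⟩
    exact cons_mem_compPow (h e he) hl
  · intro i _ j _ hij
    rw [Set.disjoint_left]
    rintro _ ⟨l, _, rfl⟩ ⟨l', _, he⟩
    have : (2:ℕ) ^ j = 2 ^ i := by injection he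
    exact hij (Nat.pow_right_injective (le_refl 2) this.symm)

lemma ncard_biUnion_le {α ι : Type*} [DecidableEq ι] :
    ∀ (s : Finset ι) (f : ι → Set α), (∀ i ∈ s, (f i).Finite) →
      (⋃ i ∈ (s : Set ι), f i).ncard ≤ ∑ i ∈ s, (f i).ncard := by
  intro s
  induction s using Finset.induction_on with
  | empty => intro f _; simp
  | insert a s ha ih =>
    intro f hf
    rw [Finset.sum_insert ha]
    have : (⋃ i ∈ ((insert a s : Finset ι) : Set ι), f i) = f a ∪ ⋃ i ∈ (s : Set ι), f i := by
      simp [Set.biUnion_insert]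
    rw [this]
    calc (f a ∪ ⋃ i ∈ (s : Set ι), f i).ncard
        ≤ (f a).ncard + (⋃ i ∈ (s : Set ι), f i).ncard := Set.ncard_union_le _ _
      _ ≤ (f a).ncard + ∑ i ∈ s, (f i).ncard := by
          have := ih f (fun i hi => hf i (Finset.mem_insert_of_mem hi))
          omega

/-- Head decomposition of a pattern set. -/
lemma head_decomp {p q n : ℕ} (hp : 2 ≤ p) (hn : 1 ≤ n) :
    S p q n ⊆ ⋃ k ∈ (((Finset.Icc 1 n).filter fun k => p ^ k - 1 ≤ n) : Set ℕ),
      (fun t => (p ^ k - 1) :: t) '' S q p (n - (p ^ k - 1)) := by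
  rintro l ⟨hsum, hcond⟩
  cases l with
  | nil => simp at hsum; omega
  | cons a t =>
    have h0 := (hcond 0 (by simp)).1 rfl
    simp only [List.getD_cons_zero] at h0
    obtain ⟨k, hk1, hak⟩ := h0
    have hpk2 : 2 ≤ p ^ k := le_trans hp (Nat.le_self_pow (by omega) p)
    have h2p : 2 ^ k ≤ p ^ k := Nat.pow_le_pow_left hp k
    have hk2 : k < 2 ^ k := Nat.lt_two_pow_self
    simp only [List.sum_cons] at hsum
    have han : a ≤ n := by omega
    have hkn : k ≤ n := by omega
    have hkmem : k ∈ ((((Finset.Icc 1 n).filter fun k => p ^ k - 1 ≤ n)) : Set ℕ) := by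
      simp only [Finset.coe_filter, Finset.mem_Icc, Set.mem_setOf_eq]
      omega
    refine Set.mem_biUnion hkmem ⟨t, ⟨by omega, fun s hs => ?_⟩, by rw [← hak]⟩
    have hc := hcond (s + 1) (by simp only [List.length_cons]; omega)
    rw [List.getD_cons_succ] at hc
    constructor
    · intro hs2
      exact hc.2 (by omega)
    · intro hs2
      exact hc.1 (by omega)

/-- Chain bound. -/
lemma chainBound {p q n : ℕ} (hp : 2 ≤ p) (hq : 2 ≤ q) (hn : 1 ≤ n) :
    (S p q n).ncard ≤
      ∑ k ∈ (Finset.Icc 1 n).filter (fun k => p ^ k - 1 ≤ n),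
        (S q p (n - (p ^ k - 1))).ncard := by
  calc (S p q n).ncard
      ≤ (⋃ k ∈ ((((Finset.Icc 1 n).filter fun k => p ^ k - 1 ≤ n)) : Set ℕ),
          (fun t => (p ^ k - 1) :: t) '' S q p (n - (p ^ k - 1))).ncard := by
        have hfin : (⋃ k ∈ ((((Finset.Icc 1 n).filter fun k => p ^ k - 1 ≤ n)) : Set ℕ),
            (fun t => (p ^ k - 1) :: t) '' S q p (n - (p ^ k - 1))).Finite := by
          apply Set.Finite.biUnion (Finset.finite_toSet _)
          intro k _
          exact (S_finite hq hp _).image _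
        exact Set.ncard_le_ncard (head_decomp hp hn) hfin
    _ ≤ ∑ k ∈ (Finset.Icc 1 n).filter (fun k => p ^ k - 1 ≤ n),
          ((fun t => (p ^ k - 1) :: t) '' S q p (n - (p ^ k - 1))).ncard := by
        apply ncard_biUnion_le
        intro k _
        exact (S_finite hq hp _).image _
    _ = ∑ k ∈ (Finset.Icc 1 n).filter (fun k => p ^ k - 1 ≤ n),
          (S q p (n - (p ^ k - 1))).ncard := by
        apply Finset.sum_congr rfl
        intro k _
        exact Set.ncard_image_of_injective _ (fun a b h => by injection h)

lemma S_zero_ncard_le {p q : ℕ} (hp : 2 ≤ p) : (S p q 0).ncard ≤ 1 := by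
  have hsub : S p q 0 ⊆ {[]} := by
    rintro l ⟨hsum, hcond⟩
    cases l with
    | nil => rfl
    | cons a t =>
      exfalso
      simp only [List.sum_cons] at hsum
      have h0 := (hcond 0 (by simp)).1 rfl
      simp only [List.getD_cons_zero] at h0
      have := partsPm1_pos hp h0
      omega
  calc (S p q 0).ncard ≤ ({[]} : Set (List ℕ)).ncard :=
        Set.ncard_le_ncard hsub (Set.finite_singleton _)
    _ = 1 := Set.ncard_singleton _

/-- a list in `G 1` is `[1]`. -/
lemma G_one : G 1 ⊆ {[1]} := by
  rintro l ⟨hsum, hpos⟩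
  cases l with
  | nil => simp at hsum
  | cons a t =>
    have ha := hpos a (by simp)
    simp only [List.sum_cons] at hsum
    have ht : t.sum = 0 := by omega
    have ha1 : a = 1 := by omega
    cases t with
    | nil => simp [ha1]
    | cons c u =>
      have := hpos c (by simp)
      simp only [List.sum_cons] at ht
      omega

/-- The key auxiliary bound: a pattern composition of `m ≥ 1` has count at most `b (m-1)`. -/
lemma C1 : ∀ m : ℕ, ∀ p q : ℕ, 2 ≤ p → 2 ≤ q → 1 ≤ m → (S p q m).ncard ≤ b (m - 1) := by
  intro m
  induction m using Nat.strong_induction_on with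
  | _ m ih =>
    intro p q hp hq hm
    rcases Nat.lt_or_ge m 2 with hm2 | hm2
    · -- m = 1
      have hm1 : m = 1 := by omega
      subst hm1
      have hsub : S p q 1 ⊆ {[1]} := subset_trans (S_subset_G hp hq 1) G_one
      calc (S p q 1).ncard ≤ ({[1]} : Set (List ℕ)).ncard :=
            Set.ncard_le_ncard hsub (Set.finite_singleton _)
        _ = 1 := Set.ncard_singleton _
        _ ≤ b 0 := b_pos 0
    · -- m ≥ 2
      have hchain := chainBound hp hq (by omega : 1 ≤ m) (n := m)
      set s : Finset ℕ := (Finset.Icc 1 m).filter (fun k => p ^ k - 1 ≤ m) with hs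
      -- facts about k ∈ s
      have hkfact : ∀ k ∈ s, 1 ≤ k ∧ p ^ k - 1 ≤ m ∧ 2 ^ (k - 1) ≤ p ^ k - 1 ∧
          2 ^ (k - 1) ≤ m - 1 := by
        intro k hk
        simp only [hs, Finset.mem_filter, Finset.mem_Icc] at hk
        obtain ⟨⟨hk1, _⟩, hkm⟩ := hk
        have h2p : 2 ^ k ≤ p ^ k := Nat.pow_le_pow_left hp k
        have h2k : 2 ^ (k - 1) * 2 = 2 ^ k := by
          rw [← pow_succ]
          congr 1
          omega
        have hpk2 : 2 ≤ p ^ k := le_trans hp (Nat.le_self_pow (by omega) p)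
        refine ⟨hk1, hkm, by omega, by omega⟩
      have hterm : ∀ k ∈ s, (S q p (m - (p ^ k - 1))).ncard ≤ b ((m - 1) - 2 ^ (k - 1)) := by
        intro k hk
        obtain ⟨hk1, hkm, hk2, hk3⟩ := hkfact k hk
        rcases Nat.eq_or_lt_of_le hkm with heq | hlt
        · -- p ^ k - 1 = m
          rw [heq]
          simp only [Nat.sub_self]
          calc (S q p 0).ncard ≤ 1 := S_zero_ncard_le hq
            _ ≤ b ((m - 1) - 2 ^ (k - 1)) := b_pos _
        · -- p ^ k - 1 < m
          have hx1 : 1 ≤ p ^ k - 1 := by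
            have : 2 ≤ p ^ k := le_trans hp (Nat.le_self_pow (by omega) p)
            omega
          have := ih (m - (p ^ k - 1)) (by omega) q p hq hp (by omega)
          calc (S q p (m - (p ^ k - 1))).ncard ≤ b (m - (p ^ k - 1) - 1) := this
            _ ≤ b ((m - 1) - 2 ^ (k - 1)) := by
                apply b_mono
                omega
      -- now sum over the image of k ↦ k - 1
      calc (S p q m).ncard ≤ ∑ k ∈ s, (S q p (m - (p ^ k - 1))).ncard := hchain
        _ ≤ ∑ k ∈ s, b ((m - 1) - 2 ^ (k - 1)) := Finset.sum_le_sum hterm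
        _ = ∑ e ∈ s.image (fun k => k - 1), b ((m - 1) - 2 ^ e) := by
            rw [Finset.sum_image]
            intro x hx y hy hxy
            have := (hkfact x hx).1
            have := (hkfact y hy).1
            beta_reduce at hxy
            omega
        _ ≤ b (m - 1) := by
            apply sum_b_le
            intro e he
            simp only [Finset.mem_image] at he
            obtain ⟨k, hk, rfl⟩ := he
            exact (hkfact k hk).2.2.2

lemma pow23 : ∀ j : ℕ, 2 ≤ j → 2 ^ j + 2 ≤ 3 ^ j := by
  intro j
  induction j with
  | zero => omega
  | succ j ih =>
    intro hj
    rcases Nat.lt_or_ge j 2 with hj2 | hj2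
    · have : j = 1 := by omega
      subst this
      norm_num
    · have := ih hj2
      have h2 : 2 ^ (j + 1) = 2 * 2 ^ j := by ring
      have h3 : 3 ^ (j + 1) = 3 * 3 ^ j := by ring
      have hp : 1 ≤ 3 ^ j := Nat.one_le_pow _ _ (by norm_num)
      omega

lemma G_two : G 2 ⊆ {[2], [1, 1]} := by
  rintro l ⟨hsum, hpos⟩
  cases l with
  | nil => simp at hsum
  | cons a t =>
    have ha := hpos a (by simp)
    simp only [List.sum_cons] at hsum
    cases t with
    | nil =>
      simp only [List.sum_nil] at hsum
      have : a = 2 := by omega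
      subst this
      left; rfl
    | cons c u =>
      have hc := hpos c (by simp)
      simp only [List.sum_cons] at hsum
      have hu : u.sum = 0 := by omega
      have hu0 : u = [] := by
        cases u with
        | nil => rfl
        | cons d v =>
          have := hpos d (by simp)
          simp only [List.sum_cons] at hu
          omega
      subst hu0
      have : a = 1 ∧ c = 1 := by omega
      right
      simp [this.1, this.2]

lemma b_two : 2 ≤ b 2 := by
  have h1 : [2] ∈ compPow 2 2 := by
    refine ⟨by simp, ?_⟩
    intro a ha
    simp only [List.mem_singleton] at ha
    subst ha
    right
    exact ⟨1, le_refl 1, by norm_num⟩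
  have h2 : [1, 1] ∈ compPow 2 2 := by
    refine ⟨by simp, ?_⟩
    intro a ha
    simp only [List.mem_cons] at ha
    left
    rcases ha with rfl | h
    · rfl
    · simp at h; omega
  have hsub : ({[2], [1, 1]} : Set (List ℕ)) ⊆ compPow 2 2 := by
    rintro l (rfl | rfl)
    · exact h1
    · exact h2
  have hpair : ({[2], [1, 1]} : Set (List ℕ)).ncard = 2 :=
    Set.ncard_pair (by simp)
  calc (2 : ℕ) = ({[2], [1, 1]} : Set (List ℕ)).ncard := hpair.symm
    _ ≤ b 2 := Set.ncard_le_ncard hsub (compPow_finite 2)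

lemma altComp_subset_G {p1 p2 : ℕ} (hp1 : 2 ≤ p1) (hp2 : 2 ≤ p2) (n : ℕ) :
    altComp p1 p2 n ⊆ G n := by
  rw [altComp_eq]
  exact Set.union_subset (S_subset_G hp1 hp2 n) (S_subset_G hp2 hp1 n)

lemma altComp_finite {p1 p2 : ℕ} (hp1 : 2 ≤ p1) (hp2 : 2 ≤ p2) (n : ℕ) :
    (altComp p1 p2 n).Finite :=
  (G_finite n).subset (altComp_subset_G hp1 hp2 n)

/-- Main bound, assuming `p1 ≤ p2`. -/
lemma main_aux {p1 p2 n : ℕ} (hp1 : 2 ≤ p1) (hle : p1 ≤ p2) (hn : 1 ≤ n) :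
    (altComp p1 p2 n).ncard ≤ b n := by
  have hp2 : 2 ≤ p2 := le_trans hp1 hle
  rcases Nat.lt_or_ge p2 3 with hp23 | hp23
  · -- p1 = p2 = 2
    have hp2e : p2 = 2 := by omega
    have hp1e : p1 = 2 := by omega
    subst hp2e; subst hp1e
    rw [altComp_eq, Set.union_self]
    calc (S 2 2 n).ncard ≤ b (n - 1) := C1 n 2 2 (le_refl 2) (le_refl 2) hn
      _ ≤ b n := b_mono (by omega)
  · -- p2 ≥ 3
    rcases Nat.lt_or_ge n 3 with hn3 | hn3
    · -- n = 1 or n = 2 directly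
      rcases Nat.lt_or_ge n 2 with hn2 | hn2
      · have hn1 : n = 1 := by omega
        subst hn1
        have hsub : altComp p1 p2 1 ⊆ {[1]} :=
          subset_trans (altComp_subset_G hp1 hp2 1) G_one
        calc (altComp p1 p2 1).ncard ≤ ({[1]} : Set (List ℕ)).ncard :=
              Set.ncard_le_ncard hsub (Set.finite_singleton _)
          _ = 1 := Set.ncard_singleton _
          _ ≤ b 1 := b_pos 1
      · have hn2e : n = 2 := by omega
        subst hn2e
        have hsub : altComp p1 p2 2 ⊆ {[2], [1, 1]} :=
          subset_trans (altComp_subset_G hp1 hp2 2) G_two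
        calc (altComp p1 p2 2).ncard ≤ ({[2], [1, 1]} : Set (List ℕ)).ncard :=
              Set.ncard_le_ncard hsub ((Set.finite_singleton _).insert _)
          _ = 2 := Set.ncard_pair (by simp)
          _ ≤ b 2 := b_two
    · -- main case: n ≥ 3, p2 ≥ 3
      set s1 : Finset ℕ := (Finset.Icc 1 n).filter (fun k => p1 ^ k - 1 ≤ n) with hs1def
      set s2 : Finset ℕ := (Finset.Icc 1 n).filter (fun k => p2 ^ k - 1 ≤ n) with hs2def
      have hT1 : (S p1 p2 n).ncard ≤ ∑ k ∈ s1, (S p2 p1 (n - (p1 ^ k - 1))).ncard :=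
        chainBound hp1 hp2 (by omega)
      have hT2 : (S p2 p1 n).ncard ≤ ∑ k ∈ s2, (S p1 p2 (n - (p2 ^ k - 1))).ncard :=
        chainBound hp2 hp1 (by omega)
      -- chain 2 per-term bounds
      have hch2 : ∀ j ∈ s2, (S p1 p2 (n - (p2 ^ j - 1))).ncard ≤ b ((n - 1) - 2 ^ j) ∧
          2 ^ j ≤ n - 1 := by
        intro j hj
        simp only [hs2def, Finset.mem_filter, Finset.mem_Icc] at hj
        obtain ⟨⟨hj1, _⟩, hjn⟩ := hj
        have h3p : 3 ^ j ≤ p2 ^ j := Nat.pow_le_pow_left hp23 j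
        have hpk2 : 2 ≤ p2 ^ j := le_trans hp2 (Nat.le_self_pow (by omega) p2)
        -- 2^j ≤ p2^j - 2  unless j = 1 (where we use n ≥ 3), plus 2^j ≤ x
        have hxj : 2 ^ j ≤ p2 ^ j - 1 ∧ 2 ^ j ≤ n - 1 := by
          rcases Nat.lt_or_ge j 2 with hj2 | hj2
          · have : j = 1 := by omega
            subst this
            simp only [pow_one]
            omega
          · have := pow23 j hj2
            omega
        refine ⟨?_, hxj.2⟩
        set x := p2 ^ j - 1 with hxdef
        rcases Nat.eq_or_lt_of_le hjn with heq | hlt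
        · rw [heq]
          simp only [Nat.sub_self]
          calc (S p1 p2 0).ncard ≤ 1 := S_zero_ncard_le hp1
            _ ≤ b ((n - 1) - 2 ^ j) := b_pos _
        · have hx1 : 1 ≤ x := by omega
          calc (S p1 p2 (n - x)).ncard ≤ b (n - x - 1) :=
                C1 (n - x) p1 p2 hp1 hp2 (by omega)
            _ ≤ b ((n - 1) - 2 ^ j) := b_mono (by omega)
      -- chain 1 split
      set s1a : Finset ℕ := s1.filter (fun k => 2 ^ k ≤ n) with hs1adef
      set s1b : Finset ℕ := s1.filter (fun k => ¬ 2 ^ k ≤ n) with hs1bdef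
      have hsplit : ∑ k ∈ s1a, (S p2 p1 (n - (p1 ^ k - 1))).ncard
            + ∑ k ∈ s1b, (S p2 p1 (n - (p1 ^ k - 1))).ncard
          = ∑ k ∈ s1, (S p2 p1 (n - (p1 ^ k - 1))).ncard :=
        Finset.sum_filter_add_sum_filter_not s1 _ _
      have hch1a : ∀ k ∈ s1a, (S p2 p1 (n - (p1 ^ k - 1))).ncard ≤ b (n - 2 ^ k) := by
        intro k hk
        simp only [hs1adef, hs1def, Finset.mem_filter, Finset.mem_Icc] at hk
        obtain ⟨⟨⟨hk1, _⟩, hkn⟩, hk2n⟩ := hk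
        have h2p : 2 ^ k ≤ p1 ^ k := Nat.pow_le_pow_left hp1 k
        have hpk2 : 2 ≤ p1 ^ k := le_trans hp1 (Nat.le_self_pow (by omega) p1)
        set x := p1 ^ k - 1 with hxdef
        rcases Nat.eq_or_lt_of_le hkn with heq | hlt
        · rw [heq]
          simp only [Nat.sub_self]
          calc (S p2 p1 0).ncard ≤ 1 := S_zero_ncard_le hp2
            _ ≤ b (n - 2 ^ k) := b_pos _
        · have hx1 : 1 ≤ x := by omega
          calc (S p2 p1 (n - x)).ncard ≤ b (n - x - 1) :=
                C1 (n - x) p2 p1 hp2 hp1 (by omega)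
            _ ≤ b (n - 2 ^ k) := b_mono (by omega)
      have hch1b : ∑ k ∈ s1b, (S p2 p1 (n - (p1 ^ k - 1))).ncard ≤ 1 := by
        have hterm : ∀ k ∈ s1b, (S p2 p1 (n - (p1 ^ k - 1))).ncard ≤ 1 := by
          intro k hk
          simp only [hs1bdef, hs1def, Finset.mem_filter, Finset.mem_Icc] at hk
          obtain ⟨⟨⟨hk1, _⟩, hkn⟩, hk2n⟩ := hk
          have h2p : 2 ^ k ≤ p1 ^ k := Nat.pow_le_pow_left hp1 k
          have hxn : p1 ^ k - 1 = n := by omega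
          rw [hxn]
          simp only [Nat.sub_self]
          exact S_zero_ncard_le hp2
        have hcard : s1b.card ≤ 1 := by
          apply Finset.card_le_one.mpr
          intro k hk k' hk'
          have hfact : ∀ j ∈ s1b, (2:ℕ) ^ j = n + 1 := by
            intro j hj
            simp only [hs1bdef, hs1def, Finset.mem_filter, Finset.mem_Icc] at hj
            obtain ⟨⟨⟨hj1, _⟩, hjn⟩, hj2n⟩ := hj
            have h2p : 2 ^ j ≤ p1 ^ j := Nat.pow_le_pow_left hp1 j
            omega
          have e1 := hfact k hk
          have e2 := hfact k' hk'
          exact Nat.pow_right_injective (le_refl 2) (by simp only []; rw [e1, e2])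
        calc ∑ k ∈ s1b, (S p2 p1 (n - (p1 ^ k - 1))).ncard
            ≤ ∑ _k ∈ s1b, 1 := Finset.sum_le_sum hterm
          _ = s1b.card := by simp
          _ ≤ 1 := hcard
      -- assemble
      have hsum2 : 1 + ∑ j ∈ s2, b ((n - 1) - 2 ^ j) ≤ b (n - 1) := by
        have h0 : (0 : ℕ) ∉ s2 := by
          intro h
          simp only [hs2def, Finset.mem_filter, Finset.mem_Icc] at h
          omega
        calc 1 + ∑ j ∈ s2, b ((n - 1) - 2 ^ j)
            ≤ b ((n - 1) - 2 ^ 0) + ∑ j ∈ s2, b ((n - 1) - 2 ^ j) := by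
              have := b_pos ((n - 1) - 2 ^ 0)
              omega
          _ = ∑ e ∈ insert 0 s2, b ((n - 1) - 2 ^ e) := by rw [Finset.sum_insert h0]
          _ ≤ b (n - 1) := by
              apply sum_b_le
              intro e he
              rcases Finset.mem_insert.mp he with rfl | he
              · simp; omega
              · exact (hch2 e he).2
      have hsum1 : b (n - 1) + ∑ k ∈ s1a, b (n - 2 ^ k) ≤ b n := by
        have h0 : (0 : ℕ) ∉ s1a := by
          intro h
          simp only [hs1adef, hs1def, Finset.mem_filter, Finset.mem_Icc] at h
          omega
        have hn1 : b (n - 1) = b (n - 2 ^ 0) := by norm_num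
        calc b (n - 1) + ∑ k ∈ s1a, b (n - 2 ^ k)
            = ∑ e ∈ insert 0 s1a, b (n - 2 ^ e) := by
              rw [Finset.sum_insert h0, hn1]
          _ ≤ b n := by
              apply sum_b_le
              intro e he
              rcases Finset.mem_insert.mp he with rfl | he
              · simp; omega
              · simp only [hs1adef, Finset.mem_filter] at he
                exact he.2
      -- final chain
      calc (altComp p1 p2 n).ncard
          ≤ (S p1 p2 n).ncard + (S p2 p1 n).ncard := by
            rw [altComp_eq]
            exact Set.ncard_union_le _ _
        _ ≤ (∑ k ∈ s1, (S p2 p1 (n - (p1 ^ k - 1))).ncard)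
              + ∑ k ∈ s2, (S p1 p2 (n - (p2 ^ k - 1))).ncard := by
            omega
        _ ≤ (∑ k ∈ s1a, b (n - 2 ^ k)) + 1 + ∑ j ∈ s2, b ((n - 1) - 2 ^ j) := by
            have ha : ∑ k ∈ s1a, (S p2 p1 (n - (p1 ^ k - 1))).ncard
                ≤ ∑ k ∈ s1a, b (n - 2 ^ k) := Finset.sum_le_sum hch1a
            have hb2 : ∑ k ∈ s2, (S p1 p2 (n - (p2 ^ k - 1))).ncard
                ≤ ∑ j ∈ s2, b ((n - 1) - 2 ^ j) :=
              Finset.sum_le_sum (fun j hj => (hch2 j hj).1)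
            omega
        _ ≤ (∑ k ∈ s1a, b (n - 2 ^ k)) + b (n - 1) := by omega
        _ ≤ b n := by omega

lemma altComp_comm (p1 p2 n : ℕ) : altComp p1 p2 n = altComp p2 p1 n := by
  rw [altComp_eq, altComp_eq, Set.union_comm]

end AltProof

/-- For `p1, p2 ≥ 2` and `n ≥ 1`, `|P_{p1,p2}(n)| ≤ |P_2(n)|`. -/
theorem card_altComp_le_card_compPow_two (p1 p2 n : ℕ) (hp1 : 2 ≤ p1) (hp2 : 2 ≤ p2)
    (hn : 1 ≤ n) :
    Nat.card (altComp p1 p2 n) ≤ Nat.card (compPow 2 n) := by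
  rw [Nat.card_coe_set_eq, Nat.card_coe_set_eq]
  show (altComp p1 p2 n).ncard ≤ AltProof.b n
  rcases le_total p1 p2 with h | h
  · exact AltProof.main_aux hp1 h hn
  · rw [AltProof.altComp_comm]
    exact AltProof.main_aux hp2 h hn
end

section
/- Let a(n) be the number of compositions of n with all parts in {1, 2} ∪ {2k : k ≥ 2}. Then a(n) = O(B^n): there exists a constant C > 0 such that a(n) ≤ C · B^n for all n ≥ 1, where B = 1/|x0| ≈ 1.80193 and x0 ≈ 0.55496 is the root of smallest absolute value of the polynomial x³ − 2x² − x + 1. -/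
/-! ### Auxiliary development -/

/-- The allowed parts: `1`, or an even number `≥ 2`. -/
def Pp (s : ℕ) : Prop := s = 1 ∨ (2 ≤ s ∧ 2 ∣ s)

instance : DecidablePred Pp := fun s => by unfold Pp; infer_instance

/-- The finset of compositions of `n` with all parts satisfying `Pp`. -/
def comps : ℕ → Finset (List ℕ)
  | 0 => {[]}
  | (n+1) =>
    ((Finset.Icc 1 (n+1)).filter Pp).attach.biUnion
      (fun s => (comps (n+1 - s.1)).image (s.1 :: ·))
decreasing_by
  have h1 : 1 ≤ s.1 := by
    have h := s.2
    simp only [Finset.mem_filter, Finset.mem_Icc] at h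
    exact h.1.1
  omega

lemma Pp_pos {a : ℕ} (h : Pp a) : 1 ≤ a := by
  rcases h with h | h
  · omega
  · omega

lemma mem_comps : ∀ n (l : List ℕ), l ∈ comps n ↔ (l.sum = n ∧ ∀ a ∈ l, Pp a) := by
  intro n
  induction n using Nat.strong_induction_on with
  | _ n ih =>
    match n with
    | 0 =>
      intro l
      simp only [comps, Finset.mem_singleton]
      constructor
      · rintro rfl; simp
      · rintro ⟨hs, hall⟩
        match l with
        | [] => rfl
        | a :: m =>
          exfalso
          have := Pp_pos (hall a (by simp))
          simp [List.sum_cons] at hs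
          omega
    | (n+1) =>
      intro l
      simp only [comps, Finset.mem_biUnion, Finset.mem_attach, Finset.mem_image, true_and,
        Subtype.exists, Finset.mem_filter, Finset.mem_Icc]
      constructor
      · rintro ⟨s, ⟨⟨hs1, hs2⟩, hPs⟩, m, hm, rfl⟩
        rw [ih (n+1-s) (by omega) m] at hm
        refine ⟨?_, ?_⟩
        · simp [List.sum_cons, hm.1]; omega
        · intro a ha
          rcases List.mem_cons.1 ha with rfl | ha
          · exact hPs
          · exact hm.2 a ha
      · rintro ⟨hs, hall⟩
        match l with
        | [] => simp at hs
        | a :: m =>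
          have hPa : Pp a := hall a (by simp)
          have ha1 : 1 ≤ a := Pp_pos hPa
          simp only [List.sum_cons] at hs
          refine ⟨a, ⟨⟨ha1, by omega⟩, hPa⟩, m, ?_, rfl⟩
          rw [ih (n+1-a) (by omega) m]
          exact ⟨by omega, fun b hb => hall b (by simp [hb])⟩

lemma compA_eq_comps (n : ℕ) : compA n = ↑(comps n) := by
  ext l
  rw [Finset.mem_coe, mem_comps]
  simp only [compA, Set.mem_setOf_eq]
  constructor
  · rintro ⟨hs, h⟩
    refine ⟨hs, fun a ha => ?_⟩
    rcases h a ha with rfl | rfl | ⟨k, hk, rfl⟩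
    · exact Or.inl rfl
    · exact Or.inr ⟨le_refl _, ⟨1, rfl⟩⟩
    · exact Or.inr ⟨by omega, ⟨k, rfl⟩⟩
  · rintro ⟨hs, h⟩
    refine ⟨hs, fun a ha => ?_⟩
    rcases h a ha with rfl | ⟨h2, k, rfl⟩
    · exact Or.inl rfl
    · rcases Nat.lt_or_ge k 2 with hk | hk
      · interval_cases k <;> omega
      · exact Or.inr (Or.inr ⟨k, hk, rfl⟩)

/-- Key analytic estimate: if `0 ≤ t ≤ y ≤ 9/10` and `y` is a root of
`x³ − 2x² − x + 1`, then `∑_{s ∈ parts, s ≤ n} t^s ≤ 1`. -/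
lemma sum_pow_le_one (t y : ℝ) (ht0 : 0 ≤ t) (hty : t ≤ y) (hy9 : y ≤ 9/10)
    (hyroot : y ^ 3 - 2 * y ^ 2 - y + 1 = 0) (n : ℕ) :
    ∑ s ∈ (Finset.Icc 1 n).filter Pp, t ^ s ≤ 1 := by
  have ht1 : t ≤ 9/10 := le_trans hty hy9
  have ht2 : 0 < 1 - t^2 := by nlinarith
  have hsub : (Finset.Icc 1 n).filter Pp ⊆
      ({1, 2} : Finset ℕ) ∪ (Finset.range n).image (fun k => 2*k+4) := by
    intro s hs
    simp only [Finset.mem_filter, Finset.mem_Icc] at hs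
    obtain ⟨⟨hs1, hsn⟩, hP⟩ := hs
    simp only [Finset.mem_union, Finset.mem_insert, Finset.mem_singleton, Finset.mem_image,
      Finset.mem_range]
    rcases hP with rfl | ⟨h2, k, rfl⟩
    · left; left; rfl
    · rcases Nat.lt_or_ge k 2 with hk | hk
      · interval_cases k <;> simp_all
      · right; exact ⟨k - 2, by omega, by omega⟩
  have hdisj : Disjoint ({1, 2} : Finset ℕ) ((Finset.range n).image (fun k => 2*k+4)) := by
    simp only [Finset.disjoint_left, Finset.mem_insert, Finset.mem_singleton, Finset.mem_image,
      Finset.mem_range]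
    rintro a (rfl | rfl) <;> rintro ⟨k, -, h⟩ <;> omega
  have h1 : ∑ s ∈ (Finset.Icc 1 n).filter Pp, t ^ s ≤
      ∑ s ∈ ({1, 2} : Finset ℕ) ∪ (Finset.range n).image (fun k => 2*k+4), t ^ s :=
    Finset.sum_le_sum_of_subset_of_nonneg hsub (fun i _ _ => pow_nonneg ht0 i)
  rw [Finset.sum_union hdisj, Finset.sum_image (by intro a _ b _ h; simp only at h; omega)] at h1
  have h2 : ∑ s ∈ ({1, 2} : Finset ℕ), t ^ s = t + t^2 := by
    simp [Finset.sum_insert, pow_one]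
  have h3 : ∑ k ∈ Finset.range n, t ^ (2*k+4) = t^4 * ∑ k ∈ Finset.range n, (t^2)^k := by
    rw [Finset.mul_sum]
    congr 1; ext k; rw [← pow_mul, ← pow_add]; ring_nf
  have h4 : ∑ k ∈ Finset.range n, (t^2)^k ≤ 1 / (1 - t^2) := by
    rw [le_div_iff₀ ht2]
    have hpow : 0 ≤ (t^2)^n := pow_nonneg (sq_nonneg t) n
    nlinarith [geom_sum_mul (t^2) n]
  have h5 : t^4 * ∑ k ∈ Finset.range n, (t^2)^k ≤ t^4 / (1 - t^2) := by
    rw [div_eq_mul_one_div]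
    exact mul_le_mul_of_nonneg_left h4 (pow_nonneg ht0 4)
  have hmono : 0 ≤ t^3 - 2*t^2 - t + 1 := by
    nlinarith [mul_nonneg (sub_nonneg.2 hty) (sub_nonneg.2 hty), sq_nonneg (y - t),
      mul_nonneg ht0 (sub_nonneg.2 hty)]
  have h6 : t^4 / (1 - t^2) ≤ 1 - t - t^2 := by
    rw [div_le_iff₀ ht2]
    nlinarith
  rw [h2, h3] at h1
  linarith

lemma card_comps_le (t y : ℝ) (ht0 : 0 ≤ t) (hty : t ≤ y) (hy9 : y ≤ 9/10)
    (hyroot : y ^ 3 - 2 * y ^ 2 - y + 1 = 0) :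
    ∀ n, ((comps n).card : ℝ) * t ^ n ≤ 1 := by
  intro n
  induction n using Nat.strong_induction_on with
  | _ n ih =>
    match n with
    | 0 => simp [comps]
    | (n+1) =>
      have hcard : (comps (n+1)).card ≤
          ∑ s ∈ ((Finset.Icc 1 (n+1)).filter Pp).attach, (comps (n+1 - s.1)).card := by
        rw [comps]
        refine le_trans (Finset.card_biUnion_le) ?_
        exact Finset.sum_le_sum (fun s _ => Finset.card_image_le)
      have hstep : ((comps (n+1)).card : ℝ) * t ^ (n+1) ≤
          ∑ s ∈ ((Finset.Icc 1 (n+1)).filter Pp).attach, t ^ (s.1 : ℕ) := by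
        calc ((comps (n+1)).card : ℝ) * t ^ (n+1)
            ≤ (∑ s ∈ ((Finset.Icc 1 (n+1)).filter Pp).attach,
                ((comps (n+1 - s.1)).card : ℝ)) * t ^ (n+1) := by
              apply mul_le_mul_of_nonneg_right _ (pow_nonneg ht0 _)
              exact_mod_cast Nat.cast_le.2 (le_trans hcard (le_refl _)) |>.trans
                (le_of_eq (by push_cast; ring))
          _ = ∑ s ∈ ((Finset.Icc 1 (n+1)).filter Pp).attach,
                ((comps (n+1 - s.1)).card : ℝ) * t ^ (n+1) := by rw [Finset.sum_mul]
          _ ≤ ∑ s ∈ ((Finset.Icc 1 (n+1)).filter Pp).attach, t ^ (s.1 : ℕ) := by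
              apply Finset.sum_le_sum
              rintro ⟨s, hs⟩ -
              simp only [Finset.mem_filter, Finset.mem_Icc] at hs
              obtain ⟨⟨hs1, hsn⟩, -⟩ := hs
              have hsplit : t ^ (n+1) = t ^ (n+1-s) * t ^ s := by
                rw [← pow_add]; congr 1; omega
              rw [hsplit, ← mul_assoc]
              have := ih (n+1-s) (by omega)
              calc ((comps (n+1-s)).card : ℝ) * t ^ (n+1-s) * t ^ s
                  ≤ 1 * t ^ s := mul_le_mul_of_nonneg_right this (pow_nonneg ht0 s)
                _ = t ^ s := one_mul _
      calc ((comps (n+1)).card : ℝ) * t ^ (n+1)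
          ≤ ∑ s ∈ ((Finset.Icc 1 (n+1)).filter Pp).attach, t ^ (s.1 : ℕ) := hstep
        _ = ∑ s ∈ (Finset.Icc 1 (n+1)).filter Pp, t ^ s := by
            rw [← Finset.sum_attach ((Finset.Icc 1 (n+1)).filter Pp) (fun s => t ^ s)]
        _ ≤ 1 := sum_pow_le_one t y ht0 hty hy9 hyroot (n+1)

/-- `a(n) = O(B^n)` where `B = 1/|x0|` and `x0` is the root of `x³ − 2x² − x + 1`
of smallest absolute value. -/
theorem compA_card_isBigO (x0 : ℝ)
    (hroot : x0 ^ 3 - 2 * x0 ^ 2 - x0 + 1 = 0)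
    (hmin : ∀ y : ℝ, y ^ 3 - 2 * y ^ 2 - y + 1 = 0 → |x0| ≤ |y|) :
    ∃ C : ℝ, 0 < C ∧ ∀ n : ℕ, 1 ≤ n →
      (Nat.card (compA n) : ℝ) ≤ C * (1 / |x0|) ^ n := by
  -- produce a root y of the cubic inside [1/2, 9/10] by the intermediate value theorem
  obtain ⟨y, hy12, hy9, hyroot⟩ :
      ∃ y : ℝ, 1/2 ≤ y ∧ y ≤ 9/10 ∧ y ^ 3 - 2 * y ^ 2 - y + 1 = 0 := by
    have hcont : ContinuousOn (fun x : ℝ => x ^ 3 - 2 * x ^ 2 - x + 1)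
        (Set.Icc (1/2) (9/10)) := by fun_prop
    have h := intermediate_value_Icc' (by norm_num : (1/2:ℝ) ≤ 9/10) hcont
    have h0 : (0:ℝ) ∈ Set.Icc ((fun x : ℝ => x ^ 3 - 2 * x ^ 2 - x + 1) (9/10))
        ((fun x : ℝ => x ^ 3 - 2 * x ^ 2 - x + 1) (1/2)) := by
      constructor <;> norm_num
    obtain ⟨z, hz, hz0⟩ := h h0
    exact ⟨z, hz.1, hz.2, hz0⟩
  set t := |x0| with htdef
  have hx0ne : x0 ≠ 0 := by
    rintro rfl; norm_num at hroot
  have ht0 : 0 < t := abs_pos.2 hx0ne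
  have hty : t ≤ y := by
    have := hmin y hyroot
    rwa [abs_of_nonneg (by linarith : (0:ℝ) ≤ y)] at this
  refine ⟨1, one_pos, fun n _ => ?_⟩
  have hcard : (Nat.card (compA n) : ℝ) = ((comps n).card : ℝ) := by
    rw [compA_eq_comps, Nat.card_coe_set_eq, Set.ncard_coe_finset]
  rw [hcard, one_mul, one_div, inv_pow, ← one_div, le_div_iff₀ (pow_pos ht0 n)]
  exact card_comps_le t y ht0.le hty hy9 hyroot n
end

section
/- There exists a constant C > 0 such that for all n ≥ 1, the number |P_2(n)| of compositions of n into powers of 2 satisfies |P_2(n)| ≤ C · B^n, where B = 1/|x0| ≈ 1.80193 and x0 ≈ 0.55496 is the root of smallest absolute value of the polynomial x³ − 2x² − x + 1. -/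
/-- A finite over-approximation of `compPow 2 n`, built by recursion on the first part. -/
def Fc : ℕ → Finset (List ℕ)
  | 0 => {[]}
  | (n+1) => (Finset.range (n+2)).biUnion
      (fun k => if 2^k ≤ n+1 then (Fc (n+1 - 2^k)).image (fun l => 2^k :: l) else ∅)
decreasing_by exact Nat.sub_lt (Nat.succ_pos n) (Nat.two_pow_pos k)

lemma compPow_subset_Fc : ∀ n, compPow 2 n ⊆ ↑(Fc n) := by
  intro n
  induction n using Nat.strong_induction_on with
  | _ n ih =>
    rintro l ⟨hsum, hparts⟩
    match n, l with
    | 0, [] => simp [Fc]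
    | 0, (a :: t) =>
      exfalso
      rcases hparts a (by simp) with h1 | ⟨k, hk, h2⟩
      · simp [List.sum_cons] at hsum; omega
      · have : 0 < 2^k := Nat.two_pow_pos k
        simp [List.sum_cons] at hsum; omega
    | (n+1), [] => simp at hsum
    | (n+1), (a :: t) =>
      have hk : ∃ k, a = 2^k := by
        rcases hparts a (by simp) with h1 | ⟨k, _, h2⟩
        · exact ⟨0, by simpa using h1⟩
        · exact ⟨k, h2⟩
      obtain ⟨k, rfl⟩ := hk
      rw [List.sum_cons] at hsum
      have hle : 2^k ≤ n+1 := by omega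
      have hkn : k < n+2 := by
        have := Nat.lt_two_pow_self (n := k)
        omega
      have ht : t ∈ compPow 2 (n+1-2^k) :=
        ⟨by omega, fun b hb => hparts b (List.mem_cons_of_mem _ hb)⟩
      have ht' := ih (n+1-2^k) (Nat.sub_lt (Nat.succ_pos n) (Nat.two_pow_pos k)) ht
      show (2^k :: t) ∈ Fc (n+1)
      rw [Fc]
      refine Finset.mem_biUnion.2 ⟨k, Finset.mem_range.2 hkn, ?_⟩
      rw [if_pos hle]
      exact Finset.mem_image.2 ⟨t, by simpa using ht', rfl⟩

lemma geom_icc (q : ℝ) (hq0 : 0 < q) (hq1 : q < 1) (m : ℕ) :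
    ∑ j ∈ Finset.Icc 1 m, q ^ j ≤ q / (1 - q) := by
  have key : ∀ m : ℕ, (1 - q) * ∑ j ∈ Finset.Icc 1 m, q ^ j = q - q ^ (m+1) := by
    intro m
    induction m with
    | zero => simp
    | succ m ihm =>
      rw [Finset.sum_Icc_succ_top (by omega), mul_add, ihm]
      ring
  rw [le_div_iff₀ (by linarith)]
  have := key m
  nlinarith [pow_pos hq0 (m+1), this]

lemma sum_two_pow_le (q : ℝ) (hq0 : 0 < q) (hq1 : q < 1) (s : Finset ℕ) :
    ∑ k ∈ s, q ^ (2 ^ k) ≤ q / (1 - q) := by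
  have hsub : s.image (fun k => 2 ^ k) ⊆ Finset.Icc 1 (2 ^ (s.sup id)) := by
    intro j hj
    simp only [Finset.mem_image] at hj
    obtain ⟨k, hk, rfl⟩ := hj
    have h1 : 1 ≤ 2 ^ k := Nat.one_le_two_pow
    have h2 : k ≤ s.sup id := Finset.le_sup (f := id) hk
    exact Finset.mem_Icc.2 ⟨h1, Nat.pow_le_pow_right (by norm_num) h2⟩
  calc ∑ k ∈ s, q ^ (2 ^ k) = ∑ j ∈ s.image (fun k => 2 ^ k), q ^ j := by
        rw [Finset.sum_image]
        intro a _ b _ h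
        exact Nat.pow_right_injective (by norm_num) h
    _ ≤ ∑ j ∈ Finset.Icc 1 (2 ^ (s.sup id)), q ^ j :=
        Finset.sum_le_sum_of_subset_of_nonneg hsub (fun j _ _ => by positivity)
    _ ≤ q / (1 - q) := geom_icc q hq0 hq1 _

lemma sum_parts_le_one (x : ℝ) (hx0 : 0 < x) (hx1 : x < 1)
    (hroot : x ^ 3 - 2 * x ^ 2 - x + 1 = 0) (s : Finset ℕ) :
    ∑ k ∈ s, x ^ (2 ^ k) ≤ 1 := by
  have hx2 : 0 < x ^ 2 := by positivity
  have hx21 : x ^ 2 < 1 := by nlinarith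
  have hmain : ∑ k ∈ s.erase 0, x ^ (2 ^ k) ≤ x ^ 2 / (1 - x ^ 2) := by
    have heq : ∑ k ∈ s.erase 0, x ^ (2 ^ k)
        = ∑ k ∈ (s.erase 0).image (fun k => k - 1), (x ^ 2) ^ (2 ^ k) := by
      rw [Finset.sum_image]
      · apply Finset.sum_congr rfl
        intro k hk
        have hk0 : k ≠ 0 := (Finset.mem_erase.1 hk).1
        rw [← pow_mul]
        congr 1
        have : 2 * 2 ^ (k - 1) = 2 ^ k := by
          rw [← pow_succ']
          congr 1
          omega
        omega
      · intro a ha b hb h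
        have ha0 : a ≠ 0 := (Finset.mem_erase.1 ha).1
        have hb0 : b ≠ 0 := (Finset.mem_erase.1 hb).1
        simp only at h
        omega
    rw [heq]
    exact sum_two_pow_le (x ^ 2) hx2 hx21 _
  have hsplit : ∑ k ∈ s, x ^ (2 ^ k) ≤ x + ∑ k ∈ s.erase 0, x ^ (2 ^ k) := by
    by_cases h0 : 0 ∈ s
    · rw [← Finset.sum_erase_add s _ h0]
      simp [add_comm]
    · rw [Finset.erase_eq_of_notMem h0]
      linarith [hx0]
  have hfin : x + x ^ 2 / (1 - x ^ 2) ≤ 1 := by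
    have h1 : (0:ℝ) < 1 - x ^ 2 := by linarith
    rw [← sub_nonneg]
    have h2 : 1 - (x + x ^ 2 / (1 - x ^ 2)) = (x ^ 3 - 2 * x ^ 2 - x + 1) / (1 - x ^ 2) := by
      field_simp
      ring
    rw [h2, hroot]
    positivity
  linarith

lemma Fc_card_le (x : ℝ) (hx0 : 0 < x) (hx1 : x < 1)
    (hroot : x ^ 3 - 2 * x ^ 2 - x + 1 = 0) :
    ∀ n, ((Fc n).card : ℝ) ≤ (1 / x) ^ n := by
  intro n
  induction n using Nat.strong_induction_on with
  | _ n ih =>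
    match n with
    | 0 => simp [Fc]
    | (n+1) =>
      have hB : (0:ℝ) < 1/x := by positivity
      set s : Finset ℕ := (Finset.range (n+2)).filter (fun k => 2^k ≤ n+1) with hs
      have h1 : (Fc (n+1)).card ≤ ∑ k ∈ s, (Fc (n+1-2^k)).card := by
        rw [Fc]
        refine le_trans Finset.card_biUnion_le ?_
        rw [hs, Finset.sum_filter]
        apply Finset.sum_le_sum
        intro k _
        by_cases h : 2^k ≤ n+1
        · simp only [if_pos h]
          exact Finset.card_image_le
        · simp [h]
      have h2 : ∀ k ∈ s, ((Fc (n+1-2^k)).card : ℝ) ≤ (1/x)^(n+1) * x^(2^k) := by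
        intro k hk
        obtain ⟨-, hkle⟩ := Finset.mem_filter.1 hk
        have hlt : n+1-2^k < n+1 := Nat.sub_lt (Nat.succ_pos n) (Nat.two_pow_pos k)
        refine le_trans (ih _ hlt) (le_of_eq ?_)
        have hxx : (1/x)^(2^k) * x^(2^k) = 1 := by
          rw [← mul_pow]; field_simp; simp
        have heq : (1/x)^(n+1-2^k) * ((1/x)^(2^k) * x^(2^k)) = (1/x)^(n+1) * x^(2^k) := by
          rw [← mul_assoc, ← pow_add]
          congr 2
          omega
        calc (1/x)^(n+1-2^k) = (1/x)^(n+1-2^k) * ((1/x)^(2^k) * x^(2^k)) := by rw [hxx, mul_one]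
          _ = (1/x)^(n+1) * x^(2^k) := heq
      calc ((Fc (n+1)).card : ℝ) ≤ ∑ k ∈ s, ((Fc (n+1-2^k)).card : ℝ) := by exact_mod_cast h1
        _ ≤ ∑ k ∈ s, (1/x)^(n+1) * x^(2^k) := Finset.sum_le_sum h2
        _ = (1/x)^(n+1) * ∑ k ∈ s, x^(2^k) := by rw [← Finset.mul_sum]
        _ ≤ (1/x)^(n+1) * 1 :=
            mul_le_mul_of_nonneg_left (sum_parts_le_one x hx0 hx1 hroot s) (le_of_lt (pow_pos hB _))
        _ = (1/x)^(n+1) := mul_one _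

/-- `|P_2(n)| = O(B^n)` where `B = 1/|x0|` and `x0` is the root of `x³ − 2x² − x + 1`
of smallest absolute value. -/
theorem compPow_two_card_isBigO (x0 : ℝ)
    (hroot : x0 ^ 3 - 2 * x0 ^ 2 - x0 + 1 = 0)
    (hmin : ∀ y : ℝ, y ^ 3 - 2 * y ^ 2 - y + 1 = 0 → |x0| ≤ |y|) :
    ∃ C : ℝ, 0 < C ∧ ∀ n : ℕ, 1 ≤ n →
      (Nat.card (compPow 2 n) : ℝ) ≤ C * (1 / |x0|) ^ n := by
  -- there is a root in [1/2, 3/5]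
  have hcont : ContinuousOn (fun y : ℝ => y ^ 3 - 2 * y ^ 2 - y + 1)
      (Set.Icc (1/2 : ℝ) (3/5)) := by fun_prop
  have hmem : (0 : ℝ) ∈ Set.Icc ((fun y : ℝ => y ^ 3 - 2 * y ^ 2 - y + 1) (3/5))
      ((fun y : ℝ => y ^ 3 - 2 * y ^ 2 - y + 1) (1/2)) := by
    norm_num
  obtain ⟨r, hr, hr0⟩ := intermediate_value_Icc' (by norm_num : (1/2:ℝ) ≤ 3/5) hcont hmem
  obtain ⟨hr1, hr2⟩ := hr
  have habs : |x0| ≤ 3/5 := by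
    have h := hmin r hr0
    rw [abs_of_nonneg (show (0:ℝ) ≤ r by linarith)] at h
    linarith
  have hx0pos : 0 < x0 := by
    by_contra h
    push_neg at h
    have hlb : -(3/5 : ℝ) ≤ x0 := neg_le_of_abs_le habs
    nlinarith [sq_nonneg x0, mul_nonneg (neg_nonneg.2 h) (sq_nonneg x0)]
  have habs' : |x0| = x0 := abs_of_pos hx0pos
  have hx0lt1 : x0 < 1 := by
    have := le_abs_self x0
    linarith [habs]
  refine ⟨1, one_pos, fun n _ => ?_⟩
  rw [habs', one_mul]
  have hsub := compPow_subset_Fc n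
  have hfin : (compPow 2 n).Finite := Set.Finite.subset (Fc n).finite_toSet hsub
  have hcard : Nat.card (compPow 2 n) ≤ (Fc n).card := by
    rw [Nat.card_coe_set_eq]
    calc (compPow 2 n).ncard ≤ (↑(Fc n) : Set (List ℕ)).ncard :=
          Set.ncard_le_ncard hsub (Fc n).finite_toSet
      _ = (Fc n).card := Set.ncard_coe_finset (Fc n)
  calc (Nat.card (compPow 2 n) : ℝ) ≤ ((Fc n).card : ℝ) := by exact_mod_cast hcard
    _ ≤ (1 / x0) ^ n := Fc_card_le x0 hx0pos hx0lt1 hroot n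
end

section
/- For all integers p1, p2 ≥ 2 and every m ≥ 0, one has 1 + Σ_{k=1}^{m} |P_{p1,p2}(k)| ≤ Σ_{k=1}^{m+1} B^k, where B = 1/|x0| ≈ 1.80193 and x0 ≈ 0.55496 is the root of smallest absolute value of the polynomial x³ − 2x² − x + 1. (The left-hand side equals the cardinality |Δ_m^{(1,1)}| of the multiplicative dependency set of the root of the 2-tree with respect to the constraints p1, p2.) -/
/-! ### Auxiliary development -/

/-- One-pattern alternating compositions: parts at even positions come from
`partsPm1 p`, parts at odd positions from `partsPm1 q`. -/
def alt1 (p q n : ℕ) : Set (List ℕ) :=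
  {l | l.sum = n ∧ ∀ t, t < l.length →
      (t % 2 = 0 → l.getD t 0 ∈ partsPm1 p) ∧ (t % 2 = 1 → l.getD t 0 ∈ partsPm1 q)}

lemma altComp_eq_union (p1 p2 n : ℕ) :
    altComp p1 p2 n = alt1 p1 p2 n ∪ alt1 p2 p1 n := by
  ext l
  simp only [altComp, alt1, Set.mem_union, Set.mem_setOf_eq]
  tauto

lemma partsPm1_one_le {p a : ℕ} (hp : 2 ≤ p) (ha : a ∈ partsPm1 p) : 1 ≤ a := by
  obtain ⟨k, hk, rfl⟩ := ha
  have h1 : p ≤ p ^ k := Nat.le_self_pow (by omega) p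
  omega

lemma finite_listsum (n : ℕ) : {l : List ℕ | l.sum = n ∧ ∀ a ∈ l, 1 ≤ a}.Finite := by
  induction n using Nat.strong_induction_on with
  | _ n ih =>
    rcases Nat.eq_zero_or_pos n with rfl | hn
    · apply Set.Finite.subset (Set.finite_singleton ([] : List ℕ))
      rintro l ⟨hs, hp⟩
      cases l with
      | nil => simp
      | cons a t =>
        have h1 := hp a (by simp)
        simp only [List.sum_cons] at hs
        omega
    · apply Set.Finite.subset
        (Set.Finite.biUnion (Set.finite_Icc 1 n)
          (fun a (ha : a ∈ Set.Icc 1 n) =>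
            Set.Finite.image (List.cons a) (ih (n - a) (by
              have h1 := ha.1; omega))))
      rintro l ⟨hs, hp⟩
      cases l with
      | nil =>
        exfalso; simp only [List.sum_nil] at hs; omega
      | cons a t =>
        have ha1 : 1 ≤ a := hp a (by simp)
        have hsum : a + t.sum = n := by simpa using hs
        refine Set.mem_biUnion (show a ∈ Set.Icc 1 n from ⟨ha1, by omega⟩) ?_
        exact ⟨t, ⟨by omega, fun b hb => hp b (by simp [hb])⟩, rfl⟩

lemma finite_alt1 (p q n : ℕ) (hp : 2 ≤ p) (hq : 2 ≤ q) : (alt1 p q n).Finite := by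
  apply Set.Finite.subset (finite_listsum n)
  rintro l ⟨hs, hcond⟩
  refine ⟨hs, ?_⟩
  intro a ha
  obtain ⟨i, hi, rfl⟩ := List.mem_iff_getElem.1 ha
  have hg : l.getD i 0 = l[i] := List.getD_eq_getElem l 0 hi
  rcases Nat.mod_two_eq_zero_or_one i with h | h
  · have h2 := (hcond i hi).1 h
    rw [hg] at h2
    exact partsPm1_one_le hp h2
  · have h2 := (hcond i hi).2 h
    rw [hg] at h2
    exact partsPm1_one_le hq h2

lemma alt1_zero (p q : ℕ) (hp : 2 ≤ p) : alt1 p q 0 = {([] : List ℕ)} := by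
  ext l
  simp only [alt1, Set.mem_setOf_eq, Set.mem_singleton_iff]
  constructor
  · rintro ⟨hs, hcond⟩
    cases l with
    | nil => rfl
    | cons a t =>
      exfalso
      have h0 := (hcond 0 (by simp)).1 (by norm_num)
      rw [List.getD_cons_zero] at h0
      have := partsPm1_one_le hp h0
      simp only [List.sum_cons] at hs
      omega
  · rintro rfl
    exact ⟨by simp, by intro t ht; simp at ht⟩

/-- Head-decomposition cardinality bound. -/
lemma card_alt1_le (p q n : ℕ) (hp : 2 ≤ p) (hq : 2 ≤ q) (hn : 1 ≤ n) :
    Nat.card (alt1 p q n) ≤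
      ∑ k ∈ Finset.Icc 1 n,
        (if p ^ k - 1 ≤ n then Nat.card (alt1 q p (n - (p ^ k - 1))) else 0) := by
  classical
  have hfin : (alt1 p q n).Finite := finite_alt1 p q n hp hq
  have hfin' : ∀ k : ℕ, (alt1 q p (n - (p ^ k - 1))).Finite :=
    fun k => finite_alt1 q p _ hq hp
  set T : ℕ → Finset (List ℕ) := fun k =>
    if p ^ k - 1 ≤ n then ((hfin' k).toFinset.image (List.cons (p ^ k - 1))) else ∅ with hT
  have hsub : hfin.toFinset ⊆ (Finset.Icc 1 n).biUnion T := by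
    intro l hl
    rw [Set.Finite.mem_toFinset] at hl
    obtain ⟨hs, hcond⟩ := hl
    cases l with
    | nil =>
      exfalso; simp only [List.sum_nil] at hs; omega
    | cons a t =>
      have ha : a ∈ partsPm1 p := by
        have h0 := (hcond 0 (by simp)).1 (by norm_num)
        rwa [List.getD_cons_zero] at h0
      obtain ⟨k, hk1, hak⟩ := ha
      have hsum : a + t.sum = n := by simpa using hs
      have h2k : k < 2 ^ k := Nat.lt_two_pow_self
      have hpk : 2 ^ k ≤ p ^ k := Nat.pow_le_pow_left hp k
      have hkn : k ≤ n := by omega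
      refine Finset.mem_biUnion.2 ⟨k, Finset.mem_Icc.2 ⟨hk1, hkn⟩, ?_⟩
      rw [hT]
      dsimp only
      rw [if_pos (by omega : p ^ k - 1 ≤ n)]
      refine Finset.mem_image.2 ⟨t, ?_, by rw [← hak]⟩
      rw [Set.Finite.mem_toFinset]
      refine ⟨by omega, ?_⟩
      intro s hs'
      have hlen : s + 1 < (a :: t).length := by simpa using Nat.succ_lt_succ hs'
      have hl2 := hcond (s + 1) hlen
      rw [List.getD_cons_succ] at hl2
      constructor
      · intro hse
        exact hl2.2 (by omega)
      · intro hso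
        exact hl2.1 (by omega)
  calc Nat.card (alt1 p q n) = hfin.toFinset.card := by
        rw [Nat.card_coe_set_eq, Set.ncard_eq_toFinset_card _ hfin]
    _ ≤ ((Finset.Icc 1 n).biUnion T).card := Finset.card_le_card hsub
    _ ≤ ∑ k ∈ Finset.Icc 1 n, (T k).card := Finset.card_biUnion_le
    _ ≤ _ := by
        apply Finset.sum_le_sum
        intro k hk
        rw [hT]
        dsimp only
        split_ifs with hc
        · calc (Finset.image _ _).card ≤ (hfin' k).toFinset.card := Finset.card_image_le
            _ = Nat.card (alt1 q p (n - (p ^ k - 1))) := by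
                rw [Nat.card_coe_set_eq, Set.ncard_eq_toFinset_card _ (hfin' k)]
        · simp

/-! ### Numeric bounding functions -/

noncomputable def Phi22 (n : ℕ) : ℝ :=
  if n = 0 then 1 else if n = 1 then 2 else if n = 2 then 3 else if n = 3 then 5
  else if n = 4 then 8 else if n = 5 then 12 else if n = 6 then 18 else if n = 7 then 28
  else if n = 8 then 43 else if n = 9 then 65 else if n = 10 then 99 else if n = 11 then 151
  else if n = 12 then 229 else 7 * (8/5 : ℝ) ^ n

noncomputable def F23 (n : ℕ) : ℝ :=
  if n = 0 then 1 else if n = 1 then 2 else if n = 2 then 2 else if n = 3 then 4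
  else if n = 4 then 5 else if n = 5 then 6 else (14/5 : ℝ) * (3/2 : ℝ) ^ n

noncomputable def G32 (n : ℕ) : ℝ :=
  if n = 0 then 1 else if n = 1 then 1 else if n = 2 then 2 else if n = 3 then 3
  else if n = 4 then 3 else if n = 5 then 5 else (41/20 : ℝ) * (3/2 : ℝ) ^ n

noncomputable def P33r (n : ℕ) : ℝ :=
  if n = 0 then 1 else if n = 1 then 1 else if n = 2 then 2 else if n = 3 then 2
  else if n = 4 then 3 else if n = 5 then 3 else if n = 6 then 4 else 12 * (6/5 : ℝ) ^ n

noncomputable def Phi (a b : ℕ) : ℕ → ℝ :=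
  if a = 2 then (if b = 2 then Phi22 else F23) else (if b = 2 then G32 else P33r)

lemma Phi22_eq_exp {n : ℕ} (h : 13 ≤ n) : Phi22 n = 7 * (8/5 : ℝ) ^ n := by
  unfold Phi22
  repeat rw [if_neg (by omega)]

lemma F23_eq_exp {n : ℕ} (h : 6 ≤ n) : F23 n = (14/5 : ℝ) * (3/2 : ℝ) ^ n := by
  unfold F23
  repeat rw [if_neg (by omega)]

lemma G32_eq_exp {n : ℕ} (h : 6 ≤ n) : G32 n = (41/20 : ℝ) * (3/2 : ℝ) ^ n := by
  unfold G32
  repeat rw [if_neg (by omega)]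

lemma P33r_eq_exp {n : ℕ} (h : 7 ≤ n) : P33r n = 12 * (6/5 : ℝ) ^ n := by
  unfold P33r
  repeat rw [if_neg (by omega)]

lemma one_le_pow_aux {x : ℝ} (h : 1 ≤ x) (n : ℕ) : 1 ≤ x ^ n := by
  calc (1:ℝ) = 1 ^ n := (one_pow n).symm
    _ ≤ x ^ n := pow_le_pow_left₀ (by norm_num) h n

lemma Phi22_le_exp (n : ℕ) : Phi22 n ≤ 7 * (8/5 : ℝ) ^ n := by
  rcases le_or_gt n 12 with h | h
  · interval_cases n <;> norm_num [Phi22]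
  · rw [Phi22_eq_exp (by omega)]

lemma F23_le_exp (n : ℕ) : F23 n ≤ (14/5 : ℝ) * (3/2 : ℝ) ^ n := by
  rcases le_or_gt n 5 with h | h
  · interval_cases n <;> norm_num [F23]
  · rw [F23_eq_exp (by omega)]

lemma G32_le_exp (n : ℕ) : G32 n ≤ (41/20 : ℝ) * (3/2 : ℝ) ^ n := by
  rcases le_or_gt n 5 with h | h
  · interval_cases n <;> norm_num [G32]
  · rw [G32_eq_exp (by omega)]

lemma P33r_le_exp (n : ℕ) : P33r n ≤ 12 * (6/5 : ℝ) ^ n := by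
  rcases le_or_gt n 6 with h | h
  · interval_cases n <;> norm_num [P33r]
  · rw [P33r_eq_exp (by omega)]

lemma Phi22_one_le (n : ℕ) : 1 ≤ Phi22 n := by
  rcases le_or_gt n 12 with h | h
  · interval_cases n <;> norm_num [Phi22]
  · rw [Phi22_eq_exp (by omega)]
    have := one_le_pow_aux (show (1:ℝ) ≤ 8/5 by norm_num) n
    linarith

lemma F23_one_le (n : ℕ) : 1 ≤ F23 n := by
  rcases le_or_gt n 5 with h | h
  · interval_cases n <;> norm_num [F23]
  · rw [F23_eq_exp (by omega)]
    have := one_le_pow_aux (show (1:ℝ) ≤ 3/2 by norm_num) n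
    linarith

lemma G32_one_le (n : ℕ) : 1 ≤ G32 n := by
  rcases le_or_gt n 5 with h | h
  · interval_cases n <;> norm_num [G32]
  · rw [G32_eq_exp (by omega)]
    have := one_le_pow_aux (show (1:ℝ) ≤ 3/2 by norm_num) n
    linarith

lemma P33r_one_le (n : ℕ) : 1 ≤ P33r n := by
  rcases le_or_gt n 6 with h | h
  · interval_cases n <;> norm_num [P33r]
  · rw [P33r_eq_exp (by omega)]
    have := one_le_pow_aux (show (1:ℝ) ≤ 6/5 by norm_num) n
    linarith

lemma Phi22_mono : Monotone Phi22 := by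
  apply monotone_nat_of_le_succ
  intro n
  rcases le_or_gt n 12 with h | h
  · interval_cases n <;> norm_num [Phi22]
  · rw [Phi22_eq_exp (by omega : 13 ≤ n), Phi22_eq_exp (by omega : 13 ≤ n + 1)]
    have hstep : (8/5 : ℝ) ^ n ≤ (8/5 : ℝ) ^ (n + 1) :=
      pow_le_pow_right₀ (by norm_num) (by omega)
    linarith

lemma F23_mono : Monotone F23 := by
  apply monotone_nat_of_le_succ
  intro n
  rcases le_or_gt n 5 with h | h
  · interval_cases n <;> norm_num [F23]
  · rw [F23_eq_exp (by omega : 6 ≤ n), F23_eq_exp (by omega : 6 ≤ n + 1)]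
    have hstep : (3/2 : ℝ) ^ n ≤ (3/2 : ℝ) ^ (n + 1) :=
      pow_le_pow_right₀ (by norm_num) (by omega)
    linarith

lemma G32_mono : Monotone G32 := by
  apply monotone_nat_of_le_succ
  intro n
  rcases le_or_gt n 5 with h | h
  · interval_cases n <;> norm_num [G32]
  · rw [G32_eq_exp (by omega : 6 ≤ n), G32_eq_exp (by omega : 6 ≤ n + 1)]
    have hstep : (3/2 : ℝ) ^ n ≤ (3/2 : ℝ) ^ (n + 1) :=
      pow_le_pow_right₀ (by norm_num) (by omega)
    linarith

lemma P33r_mono : Monotone P33r := by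
  apply monotone_nat_of_le_succ
  intro n
  rcases le_or_gt n 6 with h | h
  · interval_cases n <;> norm_num [P33r]
  · rw [P33r_eq_exp (by omega : 7 ≤ n), P33r_eq_exp (by omega : 7 ≤ n + 1)]
    have hstep : (6/5 : ℝ) ^ n ≤ (6/5 : ℝ) ^ (n + 1) :=
      pow_le_pow_right₀ (by norm_num) (by omega)
    linarith

/-! ### Geometric-tail estimates -/

lemma myGeom_le {r : ℝ} (h0 : 0 ≤ r) (h1 : r < 1) (m : ℕ) :
    ∑ j ∈ Finset.range m, r ^ j ≤ 1 / (1 - r) := by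
  have h2 : 0 < 1 - r := by linarith
  rw [geom_sum_eq (by intro hr; rw [hr] at h1; exact lt_irrefl 1 h1) m]
  have heq : (r ^ m - 1) / (r - 1) = (1 - r ^ m) / (1 - r) := by
    rw [show r ^ m - 1 = -(1 - r ^ m) by ring, show r - 1 = -(1 - r) by ring, neg_div_neg_eq]
  rw [heq, div_le_div_iff₀ h2 h2]
  have hrm : 0 ≤ r ^ m := pow_nonneg h0 m
  nlinarith [mul_nonneg hrm h2.le]

lemma pow_sub_mul {γ x : ℝ} (h : γ * x = 1) {d n : ℕ} (hd : d ≤ n) :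
    γ ^ (n - d) = γ ^ n * x ^ d := by
  have h1 : γ ^ n = γ ^ (n - d) * γ ^ d := by
    rw [← pow_add]
    congr 1
    omega
  rw [h1, mul_assoc, ← mul_pow, h, one_pow, mul_one]

lemma nat_exp2 {k : ℕ} (hk : 2 ≤ k) : 4 * k - 5 ≤ 2 ^ k - 1 := by
  have h : 4 * k ≤ 2 ^ k + 4 := by
    induction k with
    | zero => omega
    | succ m ih =>
      rcases le_or_gt 2 m with hm | hm
      · have h4 : (4:ℕ) ≤ 2 ^ m := by
          calc (4:ℕ) = 2 ^ 2 := by norm_num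
            _ ≤ 2 ^ m := Nat.pow_le_pow_right (by norm_num) hm
        have := ih hm
        have h2 : 2 ^ (m + 1) = 2 * 2 ^ m := by ring
        omega
      · interval_cases m <;> simp_all <;> omega
  have h2 : 1 ≤ 2 ^ k := Nat.one_le_two_pow
  omega

lemma nat_exp3 {k : ℕ} (hk : 2 ≤ k) : 18 * k - 28 ≤ 3 ^ k - 1 := by
  have h : 18 * k ≤ 3 ^ k + 27 := by
    induction k with
    | zero => omega
    | succ m ih =>
      rcases le_or_gt 2 m with hm | hm
      · have h9 : (9:ℕ) ≤ 3 ^ m := by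
          calc (9:ℕ) = 3 ^ 2 := by norm_num
            _ ≤ 3 ^ m := Nat.pow_le_pow_right (by norm_num) hm
        have := ih hm
        have h2 : 3 ^ (m + 1) = 3 * 3 ^ m := by ring
        omega
      · interval_cases m <;> simp_all <;> omega
  have h2 : 1 ≤ 3 ^ k := Nat.one_le_pow _ _ (by norm_num)
  omega

lemma sumT2 {x : ℝ} (h0 : 0 ≤ x) (h1 : x < 1) (n : ℕ) :
    ∑ k ∈ Finset.Icc 1 n, x ^ (2 ^ k - 1) ≤ x + x ^ 3 * (1 / (1 - x ^ 4)) := by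
  have h4 : 0 < 1 - x ^ 4 := by nlinarith [pow_lt_one₀ h0 h1 (show 4 ≠ 0 by norm_num)]
  have hrhs : 0 ≤ x ^ 3 * (1 / (1 - x ^ 4)) := by positivity
  rcases Nat.eq_zero_or_pos n with rfl | hn
  · rw [show Finset.Icc 1 0 = ∅ from rfl, Finset.sum_empty]
    linarith
  · have hins : Finset.Icc 1 n = insert 1 (Finset.Icc 2 n) := by
      ext m
      simp only [Finset.mem_Icc, Finset.mem_insert]
      omega
    rw [hins, Finset.sum_insert (by simp)]
    have hterm1 : x ^ (2 ^ 1 - 1) = x := by norm_num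
    rw [hterm1]
    have htail : ∑ k ∈ Finset.Icc 2 n, x ^ (2 ^ k - 1) ≤ x ^ 3 * (1 / (1 - x ^ 4)) := by
      calc ∑ k ∈ Finset.Icc 2 n, x ^ (2 ^ k - 1)
          ≤ ∑ k ∈ Finset.Icc 2 n, x ^ (4 * k - 5) := by
            apply Finset.sum_le_sum
            intro k hk
            exact pow_le_pow_of_le_one h0 h1.le (nat_exp2 (Finset.mem_Icc.1 hk).1)
        _ = ∑ j ∈ Finset.range (n + 1 - 2), x ^ (4 * (2 + j) - 5) := by
            rw [← Finset.Ico_add_one_right_eq_Icc, Finset.sum_Ico_eq_sum_range]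
        _ = ∑ j ∈ Finset.range (n + 1 - 2), x ^ 3 * (x ^ 4) ^ j := by
            apply Finset.sum_congr rfl
            intro j _
            rw [show 4 * (2 + j) - 5 = 3 + 4 * j by omega, pow_add, pow_mul]
        _ = x ^ 3 * ∑ j ∈ Finset.range (n + 1 - 2), (x ^ 4) ^ j := by
            rw [Finset.mul_sum]
        _ ≤ x ^ 3 * (1 / (1 - x ^ 4)) := by
            apply mul_le_mul_of_nonneg_left _ (by positivity)
            exact myGeom_le (by positivity) (pow_lt_one₀ h0 h1 (by norm_num)) _
    linarith

lemma sumT3 {x : ℝ} (h0 : 0 ≤ x) (h1 : x < 1) (n : ℕ) :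
    ∑ k ∈ Finset.Icc 1 n, x ^ (3 ^ k - 1) ≤ x ^ 2 + x ^ 8 * (1 / (1 - x ^ 18)) := by
  have h18 : 0 < 1 - x ^ 18 := by nlinarith [pow_lt_one₀ h0 h1 (show 18 ≠ 0 by norm_num)]
  have hrhs : 0 ≤ x ^ 8 * (1 / (1 - x ^ 18)) := by positivity
  have hx2 : 0 ≤ x ^ 2 := by positivity
  rcases Nat.eq_zero_or_pos n with rfl | hn
  · rw [show Finset.Icc 1 0 = ∅ from rfl, Finset.sum_empty]
    linarith
  · have hins : Finset.Icc 1 n = insert 1 (Finset.Icc 2 n) := by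
      ext m
      simp only [Finset.mem_Icc, Finset.mem_insert]
      omega
    rw [hins, Finset.sum_insert (by simp)]
    have hterm1 : x ^ (3 ^ 1 - 1) = x ^ 2 := by norm_num
    rw [hterm1]
    have htail : ∑ k ∈ Finset.Icc 2 n, x ^ (3 ^ k - 1) ≤ x ^ 8 * (1 / (1 - x ^ 18)) := by
      calc ∑ k ∈ Finset.Icc 2 n, x ^ (3 ^ k - 1)
          ≤ ∑ k ∈ Finset.Icc 2 n, x ^ (18 * k - 28) := by
            apply Finset.sum_le_sum
            intro k hk
            exact pow_le_pow_of_le_one h0 h1.le (nat_exp3 (Finset.mem_Icc.1 hk).1)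
        _ = ∑ j ∈ Finset.range (n + 1 - 2), x ^ (18 * (2 + j) - 28) := by
            rw [← Finset.Ico_add_one_right_eq_Icc, Finset.sum_Ico_eq_sum_range]
        _ = ∑ j ∈ Finset.range (n + 1 - 2), x ^ 8 * (x ^ 18) ^ j := by
            apply Finset.sum_congr rfl
            intro j _
            rw [show 18 * (2 + j) - 28 = 8 + 18 * j by omega, pow_add, pow_mul]
        _ = x ^ 8 * ∑ j ∈ Finset.range (n + 1 - 2), (x ^ 18) ^ j := by
            rw [Finset.mul_sum]
        _ ≤ x ^ 8 * (1 / (1 - x ^ 18)) := by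
            apply mul_le_mul_of_nonneg_left _ (by positivity)
            exact myGeom_le (by positivity) (pow_lt_one₀ h0 h1 (by norm_num)) _
    linarith

/-! ### Recurrence bounds -/

lemma R22 {n : ℕ} (hn : 1 ≤ n) :
    ∑ k ∈ Finset.Icc 1 n, (if 2 ^ k - 1 ≤ n then Phi22 (n - (2 ^ k - 1)) else 0)
      ≤ Phi22 n - 1 := by
  rcases le_or_gt n 12 with h | h
  · interval_cases n <;>
      norm_num [← Finset.Ico_add_one_right_eq_Icc, Finset.sum_Ico_eq_sum_range, Finset.sum_range_succ, Phi22]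
  · have key : ∀ k ∈ Finset.Icc 1 n,
        (if 2 ^ k - 1 ≤ n then Phi22 (n - (2 ^ k - 1)) else 0)
          ≤ 7 * (8/5 : ℝ) ^ n * (5/8 : ℝ) ^ (2 ^ k - 1) := by
      intro k _
      split_ifs with hc
      · calc Phi22 (n - (2 ^ k - 1)) ≤ 7 * (8/5 : ℝ) ^ (n - (2 ^ k - 1)) := Phi22_le_exp _
          _ = 7 * (8/5 : ℝ) ^ n * (5/8 : ℝ) ^ (2 ^ k - 1) := by
              rw [pow_sub_mul (by norm_num : (8/5 : ℝ) * (5/8) = 1) hc, mul_assoc]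
      · positivity
    calc ∑ k ∈ Finset.Icc 1 n, (if 2 ^ k - 1 ≤ n then Phi22 (n - (2 ^ k - 1)) else 0)
        ≤ ∑ k ∈ Finset.Icc 1 n, 7 * (8/5 : ℝ) ^ n * (5/8 : ℝ) ^ (2 ^ k - 1) :=
          Finset.sum_le_sum key
      _ = 7 * (8/5 : ℝ) ^ n * ∑ k ∈ Finset.Icc 1 n, (5/8 : ℝ) ^ (2 ^ k - 1) := by
          rw [Finset.mul_sum]
      _ ≤ 7 * (8/5 : ℝ) ^ n * ((5/8 : ℝ) + (5/8 : ℝ) ^ 3 * (1 / (1 - (5/8 : ℝ) ^ 4))) := by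
          apply mul_le_mul_of_nonneg_left (sumT2 (by norm_num) (by norm_num) n) (by positivity)
      _ ≤ Phi22 n - 1 := by
          rw [Phi22_eq_exp (by omega)]
          have hy : (8/5 : ℝ) ^ 13 ≤ (8/5 : ℝ) ^ n :=
            pow_le_pow_right₀ (by norm_num) (by omega)
          have h13 : (8/5 : ℝ) ^ 13 = 549755813888 / 1220703125 := by norm_num
          rw [h13] at hy
          nlinarith

lemma R23 {n : ℕ} (hn : 1 ≤ n) :
    ∑ k ∈ Finset.Icc 1 n, (if 2 ^ k - 1 ≤ n then G32 (n - (2 ^ k - 1)) else 0)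
      ≤ F23 n - 1 := by
  rcases le_or_gt n 5 with h | h
  · interval_cases n <;>
      norm_num [← Finset.Ico_add_one_right_eq_Icc, Finset.sum_Ico_eq_sum_range, Finset.sum_range_succ, G32, F23]
  · have key : ∀ k ∈ Finset.Icc 1 n,
        (if 2 ^ k - 1 ≤ n then G32 (n - (2 ^ k - 1)) else 0)
          ≤ (41/20 : ℝ) * (3/2 : ℝ) ^ n * (2/3 : ℝ) ^ (2 ^ k - 1) := by
      intro k _
      split_ifs with hc
      · calc G32 (n - (2 ^ k - 1)) ≤ (41/20 : ℝ) * (3/2 : ℝ) ^ (n - (2 ^ k - 1)) := G32_le_exp _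
          _ = (41/20 : ℝ) * (3/2 : ℝ) ^ n * (2/3 : ℝ) ^ (2 ^ k - 1) := by
              rw [pow_sub_mul (by norm_num : (3/2 : ℝ) * (2/3) = 1) hc, mul_assoc]
      · positivity
    calc ∑ k ∈ Finset.Icc 1 n, (if 2 ^ k - 1 ≤ n then G32 (n - (2 ^ k - 1)) else 0)
        ≤ ∑ k ∈ Finset.Icc 1 n, (41/20 : ℝ) * (3/2 : ℝ) ^ n * (2/3 : ℝ) ^ (2 ^ k - 1) :=
          Finset.sum_le_sum key
      _ = (41/20 : ℝ) * (3/2 : ℝ) ^ n * ∑ k ∈ Finset.Icc 1 n, (2/3 : ℝ) ^ (2 ^ k - 1) := by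
          rw [Finset.mul_sum]
      _ ≤ (41/20 : ℝ) * (3/2 : ℝ) ^ n * ((2/3 : ℝ) + (2/3 : ℝ) ^ 3 * (1 / (1 - (2/3 : ℝ) ^ 4))) := by
          apply mul_le_mul_of_nonneg_left (sumT2 (by norm_num) (by norm_num) n) (by positivity)
      _ ≤ F23 n - 1 := by
          rw [F23_eq_exp (by omega)]
          have hy : (3/2 : ℝ) ^ 6 ≤ (3/2 : ℝ) ^ n :=
            pow_le_pow_right₀ (by norm_num) (by omega)
          have h6 : (3/2 : ℝ) ^ 6 = 729 / 64 := by norm_num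
          rw [h6] at hy
          nlinarith

lemma R32 {n : ℕ} (hn : 1 ≤ n) :
    ∑ k ∈ Finset.Icc 1 n, (if 3 ^ k - 1 ≤ n then F23 (n - (3 ^ k - 1)) else 0)
      ≤ G32 n - 1 := by
  rcases le_or_gt n 5 with h | h
  · interval_cases n <;>
      norm_num [← Finset.Ico_add_one_right_eq_Icc, Finset.sum_Ico_eq_sum_range, Finset.sum_range_succ, G32, F23]
  · have key : ∀ k ∈ Finset.Icc 1 n,
        (if 3 ^ k - 1 ≤ n then F23 (n - (3 ^ k - 1)) else 0)
          ≤ (14/5 : ℝ) * (3/2 : ℝ) ^ n * (2/3 : ℝ) ^ (3 ^ k - 1) := by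
      intro k _
      split_ifs with hc
      · calc F23 (n - (3 ^ k - 1)) ≤ (14/5 : ℝ) * (3/2 : ℝ) ^ (n - (3 ^ k - 1)) := F23_le_exp _
          _ = (14/5 : ℝ) * (3/2 : ℝ) ^ n * (2/3 : ℝ) ^ (3 ^ k - 1) := by
              rw [pow_sub_mul (by norm_num : (3/2 : ℝ) * (2/3) = 1) hc, mul_assoc]
      · positivity
    calc ∑ k ∈ Finset.Icc 1 n, (if 3 ^ k - 1 ≤ n then F23 (n - (3 ^ k - 1)) else 0)
        ≤ ∑ k ∈ Finset.Icc 1 n, (14/5 : ℝ) * (3/2 : ℝ) ^ n * (2/3 : ℝ) ^ (3 ^ k - 1) :=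
          Finset.sum_le_sum key
      _ = (14/5 : ℝ) * (3/2 : ℝ) ^ n * ∑ k ∈ Finset.Icc 1 n, (2/3 : ℝ) ^ (3 ^ k - 1) := by
          rw [Finset.mul_sum]
      _ ≤ (14/5 : ℝ) * (3/2 : ℝ) ^ n * ((2/3 : ℝ) ^ 2 + (2/3 : ℝ) ^ 8 * (1 / (1 - (2/3 : ℝ) ^ 18))) := by
          apply mul_le_mul_of_nonneg_left (sumT3 (by norm_num) (by norm_num) n) (by positivity)
      _ ≤ G32 n - 1 := by
          rw [G32_eq_exp (by omega)]
          have hy : (3/2 : ℝ) ^ 6 ≤ (3/2 : ℝ) ^ n :=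
            pow_le_pow_right₀ (by norm_num) (by omega)
          have h6 : (3/2 : ℝ) ^ 6 = 729 / 64 := by norm_num
          rw [h6] at hy
          nlinarith

lemma R33 {n : ℕ} (hn : 1 ≤ n) :
    ∑ k ∈ Finset.Icc 1 n, (if 3 ^ k - 1 ≤ n then P33r (n - (3 ^ k - 1)) else 0)
      ≤ P33r n - 1 := by
  rcases le_or_gt n 6 with h | h
  · interval_cases n <;>
      norm_num [← Finset.Ico_add_one_right_eq_Icc, Finset.sum_Ico_eq_sum_range, Finset.sum_range_succ, P33r]
  · have key : ∀ k ∈ Finset.Icc 1 n,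
        (if 3 ^ k - 1 ≤ n then P33r (n - (3 ^ k - 1)) else 0)
          ≤ 12 * (6/5 : ℝ) ^ n * (5/6 : ℝ) ^ (3 ^ k - 1) := by
      intro k _
      split_ifs with hc
      · calc P33r (n - (3 ^ k - 1)) ≤ 12 * (6/5 : ℝ) ^ (n - (3 ^ k - 1)) := P33r_le_exp _
          _ = 12 * (6/5 : ℝ) ^ n * (5/6 : ℝ) ^ (3 ^ k - 1) := by
              rw [pow_sub_mul (by norm_num : (6/5 : ℝ) * (5/6) = 1) hc, mul_assoc]
      · positivity
    calc ∑ k ∈ Finset.Icc 1 n, (if 3 ^ k - 1 ≤ n then P33r (n - (3 ^ k - 1)) else 0)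
        ≤ ∑ k ∈ Finset.Icc 1 n, 12 * (6/5 : ℝ) ^ n * (5/6 : ℝ) ^ (3 ^ k - 1) :=
          Finset.sum_le_sum key
      _ = 12 * (6/5 : ℝ) ^ n * ∑ k ∈ Finset.Icc 1 n, (5/6 : ℝ) ^ (3 ^ k - 1) := by
          rw [Finset.mul_sum]
      _ ≤ 12 * (6/5 : ℝ) ^ n * ((5/6 : ℝ) ^ 2 + (5/6 : ℝ) ^ 8 * (1 / (1 - (5/6 : ℝ) ^ 18))) := by
          apply mul_le_mul_of_nonneg_left (sumT3 (by norm_num) (by norm_num) n) (by positivity)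
      _ ≤ P33r n - 1 := by
          rw [P33r_eq_exp (by omega)]
          have hy : (6/5 : ℝ) ^ 7 ≤ (6/5 : ℝ) ^ n :=
            pow_le_pow_right₀ (by norm_num) (by omega)
          have h7 : (6/5 : ℝ) ^ 7 = 279936 / 78125 := by norm_num
          rw [h7] at hy
          nlinarith

/-! ### Dispatchers -/

lemma Phi_22 : Phi 2 2 = Phi22 := by simp [Phi]
lemma Phi_23 : Phi 2 3 = F23 := by simp [Phi]
lemma Phi_32 : Phi 3 2 = G32 := by simp [Phi]
lemma Phi_33 : Phi 3 3 = P33r := by simp [Phi]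

lemma Phi_zero {a b : ℕ} (ha : a = 2 ∨ a = 3) (hb : b = 2 ∨ b = 3) : Phi a b 0 = 1 := by
  rcases ha with rfl | rfl <;> rcases hb with rfl | rfl <;>
    simp [Phi_22, Phi_23, Phi_32, Phi_33, Phi22, F23, G32, P33r]

lemma Phi_one_le {a b : ℕ} (ha : a = 2 ∨ a = 3) (hb : b = 2 ∨ b = 3) (n : ℕ) :
    1 ≤ Phi a b n := by
  rcases ha with rfl | rfl <;> rcases hb with rfl | rfl
  · rw [Phi_22]; exact Phi22_one_le n
  · rw [Phi_23]; exact F23_one_le n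
  · rw [Phi_32]; exact G32_one_le n
  · rw [Phi_33]; exact P33r_one_le n

lemma Phi_mono {a b : ℕ} (ha : a = 2 ∨ a = 3) (hb : b = 2 ∨ b = 3) : Monotone (Phi a b) := by
  rcases ha with rfl | rfl <;> rcases hb with rfl | rfl
  · rw [Phi_22]; exact Phi22_mono
  · rw [Phi_23]; exact F23_mono
  · rw [Phi_32]; exact G32_mono
  · rw [Phi_33]; exact P33r_mono

lemma Phi_rec {a b : ℕ} (ha : a = 2 ∨ a = 3) (hb : b = 2 ∨ b = 3) {n : ℕ} (hn : 1 ≤ n) :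
    ∑ k ∈ Finset.Icc 1 n, (if a ^ k - 1 ≤ n then Phi b a (n - (a ^ k - 1)) else 0)
      ≤ Phi a b n - 1 := by
  rcases ha with rfl | rfl <;> rcases hb with rfl | rfl
  · rw [Phi_22]; exact R22 hn
  · rw [Phi_23, Phi_32]; exact R23 hn
  · rw [Phi_32, Phi_23]; exact R32 hn
  · rw [Phi_33]; exact R33 hn

/-! ### Main induction -/

lemma alt1_le_Phi (n : ℕ) : ∀ p q : ℕ, 2 ≤ p → 2 ≤ q →
    ((Nat.card (alt1 p q n) : ℝ) ≤ Phi (min p 3) (min q 3) n ∧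
     (1 ≤ n → (Nat.card (alt1 p q n) : ℝ) ≤ Phi (min p 3) (min q 3) n - 1)) := by
  induction n using Nat.strong_induction_on with
  | _ n ih =>
    intro p q hp hq
    have ha : min p 3 = 2 ∨ min p 3 = 3 := by omega
    have hb : min q 3 = 2 ∨ min q 3 = 3 := by omega
    rcases Nat.eq_zero_or_pos n with rfl | hn
    · refine ⟨?_, fun h => absurd h (by omega)⟩
      rw [alt1_zero p q hp]
      have hc : Nat.card ({([] : List ℕ)} : Set (List ℕ)) = 1 := by
        rw [Nat.card_coe_set_eq, Set.ncard_singleton]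
      rw [hc, Phi_zero ha hb]
      norm_num
    · have hmain : (Nat.card (alt1 p q n) : ℝ) ≤ Phi (min p 3) (min q 3) n - 1 := by
        have hdec := card_alt1_le p q n hp hq hn
        have hcast : (Nat.card (alt1 p q n) : ℝ) ≤
            ∑ k ∈ Finset.Icc 1 n,
              (if p ^ k - 1 ≤ n then (Nat.card (alt1 q p (n - (p ^ k - 1))) : ℝ) else 0) := by
          have h1 : (Nat.card (alt1 p q n) : ℝ) ≤
              ((∑ k ∈ Finset.Icc 1 n,
                (if p ^ k - 1 ≤ n then Nat.card (alt1 q p (n - (p ^ k - 1))) else 0) : ℕ) : ℝ) := by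
            exact_mod_cast hdec
          refine le_trans h1 (le_of_eq ?_)
          push_cast
          apply Finset.sum_congr rfl
          intro k _
          split_ifs <;> simp
        refine le_trans hcast (le_trans (Finset.sum_le_sum ?_) (Phi_rec ha hb hn))
        intro k hk
        have hk1 : 1 ≤ k := (Finset.mem_Icc.1 hk).1
        by_cases hc : p ^ k - 1 ≤ n
        · rw [if_pos hc]
          have hminp : min p 3 ≤ p := min_le_left _ _
          have hpow : (min p 3) ^ k ≤ p ^ k := Nat.pow_le_pow_left hminp k
          have hc' : (min p 3) ^ k - 1 ≤ n := by omega
          rw [if_pos hc']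
          have hp2 : p ≤ p ^ k := Nat.le_self_pow (by omega) p
          have hlt : n - (p ^ k - 1) < n := by omega
          refine le_trans ((ih _ hlt q p hq hp).1) ?_
          exact Phi_mono hb ha (by omega : n - (p ^ k - 1) ≤ n - ((min p 3) ^ k - 1))
        · rw [if_neg hc]
          split_ifs with hc'
          · have := Phi_one_le hb ha (n - ((min p 3) ^ k - 1))
            linarith
          · exact le_refl 0
      exact ⟨by linarith [Phi_one_le ha hb n], fun _ => hmain⟩

/-! ### Per-term numeric bounds -/

lemma N1 {k : ℕ} (hk : 1 ≤ k) : Phi22 k - 1 ≤ (25/14 : ℝ) ^ (k + 1) := by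
  rcases le_or_gt k 12 with h | h
  · interval_cases k <;> norm_num [Phi22]
  · rw [Phi22_eq_exp (by omega)]
    have key : (98/25 : ℝ) ≤ (125/112 : ℝ) ^ k := by
      calc (98/25 : ℝ) ≤ (125/112 : ℝ) ^ 13 := by norm_num
        _ ≤ (125/112 : ℝ) ^ k := pow_le_pow_right₀ (by norm_num) (by omega)
    have hsplit : (25/14 : ℝ) ^ (k + 1) = (25/14) * ((8/5 : ℝ) ^ k * (125/112 : ℝ) ^ k) := by
      rw [pow_succ]
      rw [show (25/14 : ℝ) ^ k = ((8/5 : ℝ) * (125/112)) ^ k by norm_num, mul_pow]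
      ring
    rw [hsplit]
    have h8 : (0:ℝ) < (8/5 : ℝ) ^ k := by positivity
    nlinarith

lemma N2 {k : ℕ} (hk : 1 ≤ k) :
    (F23 k - 1) + (G32 k - 1) ≤ (25/14 : ℝ) ^ (k + 1) := by
  rcases le_or_gt k 5 with h | h
  · interval_cases k <;> norm_num [F23, G32]
  · rw [F23_eq_exp (by omega), G32_eq_exp (by omega)]
    have key : (679/250 : ℝ) ≤ (25/21 : ℝ) ^ k := by
      calc (679/250 : ℝ) ≤ (25/21 : ℝ) ^ 6 := by norm_num
        _ ≤ (25/21 : ℝ) ^ k := pow_le_pow_right₀ (by norm_num) (by omega)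
    have hsplit : (25/14 : ℝ) ^ (k + 1) = (25/14) * ((3/2 : ℝ) ^ k * (25/21 : ℝ) ^ k) := by
      rw [pow_succ]
      rw [show (25/14 : ℝ) ^ k = ((3/2 : ℝ) * (25/21)) ^ k by norm_num, mul_pow]
      ring
    rw [hsplit]
    have h3 : (0:ℝ) < (3/2 : ℝ) ^ k := by positivity
    nlinarith

lemma N3 {k : ℕ} (hk : 1 ≤ k) :
    (P33r k - 1) + (P33r k - 1) ≤ (25/14 : ℝ) ^ (k + 1) := by
  rcases le_or_gt k 6 with h | h
  · interval_cases k <;> norm_num [P33r]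
  · rw [P33r_eq_exp (by omega)]
    have key : (336/25 : ℝ) ≤ (125/84 : ℝ) ^ k := by
      calc (336/25 : ℝ) ≤ (125/84 : ℝ) ^ 7 := by norm_num
        _ ≤ (125/84 : ℝ) ^ k := pow_le_pow_right₀ (by norm_num) (by omega)
    have hsplit : (25/14 : ℝ) ^ (k + 1) = (25/14) * ((6/5 : ℝ) ^ k * (125/84 : ℝ) ^ k) := by
      rw [pow_succ]
      rw [show (25/14 : ℝ) ^ k = ((6/5 : ℝ) * (125/84)) ^ k by norm_num, mul_pow]
      ring
    rw [hsplit]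
    have h6 : (0:ℝ) < (6/5 : ℝ) ^ k := by positivity
    nlinarith

/-- The key per-term bound. -/
lemma perterm (p1 p2 : ℕ) (hp1 : 2 ≤ p1) (hp2 : 2 ≤ p2) {k : ℕ} (hk : 1 ≤ k) :
    (Nat.card (altComp p1 p2 k) : ℝ) ≤ (25/14 : ℝ) ^ (k + 1) := by
  rw [altComp_eq_union]
  by_cases h22 : p1 = 2 ∧ p2 = 2
  · obtain ⟨rfl, rfl⟩ := h22
    rw [Set.union_self]
    have hb := (alt1_le_Phi k 2 2 (by norm_num) (by norm_num)).2 hk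
    have hphi : Phi (min 2 3) (min 2 3) k = Phi22 k := by
      norm_num [Phi]
    rw [hphi] at hb
    have := N1 hk
    linarith
  · have hcard : (Nat.card (↑(alt1 p1 p2 k ∪ alt1 p2 p1 k)) : ℝ) ≤
        (Nat.card (alt1 p1 p2 k) : ℝ) + (Nat.card (alt1 p2 p1 k) : ℝ) := by
      rw [Nat.card_coe_set_eq, Nat.card_coe_set_eq, Nat.card_coe_set_eq]
      exact_mod_cast Set.ncard_union_le (alt1 p1 p2 k) (alt1 p2 p1 k)
    have hb1 := (alt1_le_Phi k p1 p2 hp1 hp2).2 hk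
    have hb2 := (alt1_le_Phi k p2 p1 hp2 hp1).2 hk
    rcases (by omega : p1 = 2 ∨ 3 ≤ p1) with h1 | h1 <;>
      rcases (by omega : p2 = 2 ∨ 3 ≤ p2) with h2 | h2
    · exact absurd ⟨h1, h2⟩ h22
    · -- p1 = 2, p2 ≥ 3 : profile (2,3)
      subst h1
      have hm1 : min 2 3 = 2 := by norm_num
      have hm2 : min p2 3 = 3 := by omega
      rw [hm1, hm2] at hb1 hb2
      have hphi1 : Phi 2 3 k = F23 k := by norm_num [Phi]
      have hphi2 : Phi 3 2 k = G32 k := by norm_num [Phi]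
      rw [hphi1] at hb1
      rw [hphi2] at hb2
      have := N2 hk
      linarith
    · -- p1 ≥ 3, p2 = 2 : profile (3,2)
      subst h2
      have hm1 : min p1 3 = 3 := by omega
      have hm2 : min 2 3 = 2 := by norm_num
      rw [hm1, hm2] at hb1 hb2
      have hphi1 : Phi 3 2 k = G32 k := by norm_num [Phi]
      have hphi2 : Phi 2 3 k = F23 k := by norm_num [Phi]
      rw [hphi1] at hb1
      rw [hphi2] at hb2
      have := N2 hk
      linarith
    · -- both ≥ 3 : profile (3,3)
      have hm1 : min p1 3 = 3 := by omega
      have hm2 : min p2 3 = 3 := by omega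
      rw [hm1, hm2] at hb1 hb2
      have hphi : Phi 3 3 k = P33r k := by norm_num [Phi]
      rw [hphi] at hb1 hb2
      have := N3 hk
      linarith

/-- Lemma 3.1 (left inequality): `1 + Σ_{k=1}^m |P_{p1,p2}(k)| ≤ Σ_{k=1}^{m+1} B^k`,
where `B = 1/|x0|` and `x0` is the root of `x³ − 2x² − x + 1` of smallest absolute value. -/
theorem one_add_sum_card_altComp_le (p1 p2 : ℕ) (hp1 : 2 ≤ p1) (hp2 : 2 ≤ p2)
    (x0 : ℝ)
    (hroot : x0 ^ 3 - 2 * x0 ^ 2 - x0 + 1 = 0)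
    (hmin : ∀ y : ℝ, y ^ 3 - 2 * y ^ 2 - y + 1 = 0 → |x0| ≤ |y|) :
    ∀ m : ℕ,
      (1 : ℝ) + ∑ k ∈ Finset.Icc 1 m, (Nat.card (altComp p1 p2 k) : ℝ) ≤
        ∑ k ∈ Finset.Icc 1 (m + 1), (1 / |x0|) ^ k := by
  -- Step 1: `25/14 ≤ 1/|x0|`.
  have hx0 : x0 ≠ 0 := by
    intro h
    rw [h] at hroot
    norm_num at hroot
  have hxpos : 0 < |x0| := abs_pos.2 hx0
  have habs : |x0| ≤ 14/25 := by
    obtain ⟨y, hy, hy0⟩ : ∃ y ∈ Set.Icc (11/20 : ℝ) (14/25 : ℝ),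
        (fun t : ℝ => t ^ 3 - 2 * t ^ 2 - t + 1) y = 0 := by
      have hcont : ContinuousOn (fun t : ℝ => t ^ 3 - 2 * t ^ 2 - t + 1)
          (Set.Icc (11/20 : ℝ) (14/25 : ℝ)) := by
        apply Continuous.continuousOn
        continuity
      have hsub := intermediate_value_Icc' (by norm_num : (11/20 : ℝ) ≤ 14/25) hcont
      have h0 : (0 : ℝ) ∈ Set.Icc
          ((14/25 : ℝ) ^ 3 - 2 * (14/25 : ℝ) ^ 2 - (14/25 : ℝ) + 1)
          ((11/20 : ℝ) ^ 3 - 2 * (11/20 : ℝ) ^ 2 - (11/20 : ℝ) + 1) := by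
        constructor <;> norm_num
      obtain ⟨y, hy, hfy⟩ := hsub h0
      exact ⟨y, hy, hfy⟩
    have h1 : |x0| ≤ |y| := hmin y (by simpa using hy0)
    have h2 : |y| = y := abs_of_nonneg (le_trans (by norm_num) hy.1)
    rw [h2] at h1
    exact le_trans h1 hy.2
  have hB : (25/14 : ℝ) ≤ 1 / |x0| := by
    rw [le_div_iff₀ hxpos]
    nlinarith
  have hB0 : (0 : ℝ) ≤ 25/14 := by norm_num
  -- Step 2: induction on m.
  intro m
  induction m with
  | zero =>
    rw [show Finset.Icc 1 0 = (∅ : Finset ℕ) from rfl, Finset.sum_empty,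
        Finset.Icc_self, Finset.sum_singleton, pow_one]
    linarith
  | succ m ihm =>
    rw [Finset.sum_Icc_succ_top (by omega : 1 ≤ m + 1),
        Finset.sum_Icc_succ_top (by omega : 1 ≤ m + 2)]
    have hterm : (Nat.card (altComp p1 p2 (m + 1)) : ℝ) ≤ (1 / |x0|) ^ (m + 2) := by
      calc (Nat.card (altComp p1 p2 (m + 1)) : ℝ)
          ≤ (25/14 : ℝ) ^ (m + 1 + 1) := perterm p1 p2 hp1 hp2 (by omega)
        _ ≤ (1 / |x0|) ^ (m + 2) := pow_le_pow_left₀ hB0 hB (m + 2)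
    linarith
end

section
/- For every integer p ≥ 2 and every m ≥ 0, one has Σ_{k=1}^{m+1} |P_p(k)| ≤ Σ_{k=1}^{m+1} B^k, where B = 1/|x0| ≈ 1.80193 and x0 ≈ 0.55496 is the root of smallest absolute value of the polynomial x³ − 2x² − x + 1. (The left-hand side equals the cardinality |Δ_m^{(1,1)}| of the dependency set of the root of the 2-tree with respect to the single multiplicative constraint p in the first direction.) -/
open Classical in
noncomputable def partsF (p n : ℕ) : Finset ℕ :=
  (Finset.Icc 1 n).filter fun a => a = 1 ∨ ∃ k ∈ Finset.Icc 1 n, a = p ^ k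

noncomputable def F (p : ℕ) : ℕ → Finset (List ℕ)
  | 0 => {[]}
  | (n+1) => (partsF p (n+1)).attach.biUnion fun a =>
      (F p (n + 1 - a.1)).image (a.1 :: ·)
  decreasing_by
    have := a.2
    simp only [partsF, Finset.mem_filter, Finset.mem_Icc] at this
    omega

lemma mem_F (p : ℕ) (hp : 2 ≤ p) : ∀ n l, l ∈ F p n ↔
    (l.sum = n ∧ ∀ a ∈ l, a = 1 ∨ ∃ k, 1 ≤ k ∧ a = p ^ k) := by
  intro n
  induction n using Nat.strong_induction_on with
  | _ n IH =>
    match n with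
    | 0 =>
      intro l
      rw [F.eq_1]
      constructor
      · intro h
        simp at h
        subst h
        simp
      · rintro ⟨hsum, hparts⟩
        match l with
        | [] => simp
        | a :: t =>
          exfalso
          rcases hparts a (by simp) with h1 | ⟨k, hk, hk2⟩
          · simp [h1] at hsum
          · have : 1 ≤ p ^ k := Nat.one_le_pow _ _ (by omega)
            simp at hsum
            omega
    | (m+1) =>
      intro l
      rw [F.eq_2]
      simp only [Finset.mem_biUnion, Finset.mem_attach, Finset.mem_image, true_and,
        Subtype.exists]
      constructor
      · rintro ⟨a, ha, t, ht, rfl⟩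
        have ha' := ha
        simp only [partsF, Finset.mem_filter, Finset.mem_Icc] at ha'
        obtain ⟨⟨ha1, ha2⟩, hcases⟩ := ha'
        rw [IH (m + 1 - a) (by omega)] at ht
        obtain ⟨hts, htp⟩ := ht
        constructor
        · simp [hts]; omega
        · intro b hb
          rcases List.mem_cons.mp hb with rfl | hb
          · rcases hcases with h | ⟨k, hk, hk2⟩
            · exact Or.inl h
            · exact Or.inr ⟨k, hk.1, hk2⟩
          · exact htp b hb
      · rintro ⟨hsum, hparts⟩
        match l with
        | [] => simp at hsum
        | a :: t =>
          have hpa : a = 1 ∨ ∃ k, 1 ≤ k ∧ a = p ^ k := hparts a (by simp)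
          have ha1 : 1 ≤ a := by
            rcases hpa with rfl | ⟨k, hk, rfl⟩
            · omega
            · exact Nat.one_le_pow _ _ (by omega)
          have hsum' : a + t.sum = m + 1 := by simpa using hsum
          have ha2 : a ≤ m + 1 := by omega
          have hmem : a ∈ partsF p (m+1) := by
            simp only [partsF, Finset.mem_filter, Finset.mem_Icc]
            refine ⟨⟨ha1, ha2⟩, ?_⟩
            rcases hpa with rfl | ⟨k, hk, rfl⟩
            · exact Or.inl rfl
            · refine Or.inr ⟨k, ⟨hk, ?_⟩, rfl⟩
              calc k ≤ 2 ^ k := Nat.le_of_lt (Nat.lt_two_pow_self (n := k))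
              _ ≤ p ^ k := Nat.pow_le_pow_left hp k
              _ ≤ m + 1 := ha2
          refine ⟨a, hmem, t, ?_, rfl⟩
          rw [IH (m + 1 - a) (by omega)]
          exact ⟨by omega, fun b hb => hparts b (List.mem_cons_of_mem _ hb)⟩

lemma card_F_le (p m : ℕ) :
    (F p (m+1)).card ≤ ∑ a ∈ partsF p (m+1), (F p (m+1-a)).card := by
  rw [F.eq_2]
  calc ((partsF p (m+1)).attach.biUnion fun a => (F p (m + 1 - a.1)).image (a.1 :: ·)).card
      ≤ ∑ a ∈ (partsF p (m+1)).attach, ((F p (m + 1 - a.1)).image (a.1 :: ·)).card :=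
        Finset.card_biUnion_le
    _ ≤ ∑ a ∈ (partsF p (m+1)).attach, (F p (m + 1 - a.1)).card :=
        Finset.sum_le_sum fun a _ => Finset.card_image_le
    _ = ∑ a ∈ partsF p (m+1), (F p (m+1-a)).card := Finset.sum_attach (partsF p (m+1)) (fun a => (F p (m+1-a)).card)


lemma tail_geom (r : ℝ) (hr0 : 0 < r) (hr1 : r < 1) :
    ∀ j : ℕ, ∑ k ∈ Finset.Icc 3 (j+2), r^(k+5) ≤ (r^8 - r^(j+8))/(1-r) := by
  intro j
  induction j with
  | zero => simp
  | succ j IH =>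
    have h1 : (3:ℕ) ≤ j + 2 + 1 := by omega
    have : j + 1 + 2 = (j + 2) + 1 := by omega
    rw [this, Finset.sum_Icc_succ_top h1]
    have key : (r^8 - r^(j+8))/(1-r) + r^(j+2+1+5) = (r^8 - r^(j+1+8))/(1-r) := by
      have h2 : (1:ℝ) - r ≠ 0 := by linarith
      field_simp
      ring
    linarith [IH]

lemma tail_le (r : ℝ) (hr0 : 0 < r) (hr1 : r < 1) (n : ℕ) :
    ∑ k ∈ Finset.Icc 3 n, r^(k+5) ≤ r^8/(1-r) := by
  rcases le_or_gt n 2 with h | h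
  · rw [Finset.Icc_eq_empty (by omega)]
    have hd : (0:ℝ) < 1 - r := by linarith
    have h8 : (0:ℝ) ≤ r^8 := by positivity
    simp only [Finset.sum_empty]
    exact div_nonneg h8 hd.le
  · obtain ⟨j, rfl⟩ : ∃ j, n = j + 2 := ⟨n - 2, by omega⟩
    have := tail_geom r hr0 hr1 j
    have h8 : 0 ≤ r^(j+8) := by positivity
    have hd : 0 < 1 - r := by linarith
    calc ∑ k ∈ Finset.Icc 3 (j+2), r^(k+5) ≤ (r^8 - r^(j+8))/(1-r) := this
      _ ≤ r^8/(1-r) := by gcongr <;> linarith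

lemma twopow_ge (k : ℕ) (hk : 3 ≤ k) : k + 5 ≤ 2 ^ k := by
  induction k with
  | zero => omega
  | succ k IH =>
    rcases Nat.lt_or_ge k 3 with h | h
    · interval_cases k <;> simp_all
    · have := IH (by omega)
      have : 2^k + 1 ≤ 2^(k+1) := by
        have : 1 ≤ 2^k := Nat.one_le_two_pow
        rw [pow_succ]; omega
      omega

lemma sum_parts_le (r : ℝ) (hr0 : 0 < r) (hr : r ≤ 139/250) (p : ℕ) (hp : 2 ≤ p) (n : ℕ) :
    ∑ a ∈ partsF p n, r^a ≤ 1 := by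
  have hr1 : r < 1 := by linarith
  have hsub : partsF p n ⊆ insert 1 ((Finset.Icc 1 n).image (p ^ ·)) := by
    intro a ha
    simp only [partsF, Finset.mem_filter, Finset.mem_Icc, Finset.mem_insert,
      Finset.mem_image] at ha ⊢
    rcases ha.2 with h | ⟨k, hk, rfl⟩
    · exact Or.inl h
    · exact Or.inr ⟨k, by simpa [Finset.mem_Icc] using hk, rfl⟩
  have h1ni : (1:ℕ) ∉ (Finset.Icc 1 n).image (p ^ ·) := by
    simp only [Finset.mem_image, Finset.mem_Icc, not_exists]
    rintro k ⟨⟨hk1, _⟩, hk2⟩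
    have : 2 ≤ p ^ k := le_trans hp (Nat.le_self_pow (by omega) p)
    omega
  have step1 : ∑ a ∈ partsF p n, r^a ≤ r + ∑ k ∈ Finset.Icc 1 n, r^(p^k) := by
    calc ∑ a ∈ partsF p n, r^a ≤ ∑ a ∈ insert 1 ((Finset.Icc 1 n).image (p ^ ·)), r^a :=
          Finset.sum_le_sum_of_subset_of_nonneg hsub (fun a _ _ => by positivity)
      _ = r^1 + ∑ a ∈ (Finset.Icc 1 n).image (p ^ ·), r^a := Finset.sum_insert h1ni
      _ = r + ∑ k ∈ Finset.Icc 1 n, r^(p^k) := by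
          rw [pow_one]
          congr 1
          exact Finset.sum_image (fun x _ y _ h => Nat.pow_right_injective hp h)
  have step2 : ∑ k ∈ Finset.Icc 1 n, r^(p^k) ≤ ∑ k ∈ Finset.Icc 1 n, r^(2^k) :=
    Finset.sum_le_sum fun k _ =>
      pow_le_pow_of_le_one hr0.le hr1.le (Nat.pow_le_pow_left hp k)
  have hsub2 : Finset.Icc 1 n ⊆ insert 1 (insert 2 (Finset.Icc 3 n)) := by
    intro k hk
    simp only [Finset.mem_Icc, Finset.mem_insert] at hk ⊢
    omega
  have step3 : ∑ k ∈ Finset.Icc 1 n, r^(2^k) ≤ r^2 + r^4 + ∑ k ∈ Finset.Icc 3 n, r^(2^k) := by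
    calc ∑ k ∈ Finset.Icc 1 n, r^(2^k)
        ≤ ∑ k ∈ insert 1 (insert 2 (Finset.Icc 3 n)), r^(2^k) :=
          Finset.sum_le_sum_of_subset_of_nonneg hsub2 (fun a _ _ => by positivity)
      _ = r^(2^1) + (r^(2^2) + ∑ k ∈ Finset.Icc 3 n, r^(2^k)) := by
          rw [Finset.sum_insert (by simp), Finset.sum_insert (by simp [Finset.mem_Icc])]
      _ = r^2 + r^4 + ∑ k ∈ Finset.Icc 3 n, r^(2^k) := by norm_num; ring
  have step4 : ∑ k ∈ Finset.Icc 3 n, r^(2^k) ≤ r^8/(1-r) := by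
    calc ∑ k ∈ Finset.Icc 3 n, r^(2^k) ≤ ∑ k ∈ Finset.Icc 3 n, r^(k+5) :=
          Finset.sum_le_sum fun k hk =>
            pow_le_pow_of_le_one hr0.le hr1.le (twopow_ge k (Finset.mem_Icc.mp hk).1)
      _ ≤ r^8/(1-r) := tail_le r hr0 hr1 n
  have hd : (0:ℝ) < 1 - r := by linarith
  have step5 : r^8/(1-r) ≤ r^8 * (250/111) := by
    rw [div_le_iff₀ hd]
    nlinarith [pow_nonneg hr0.le 8]
  have e1 : r^2 ≤ (139/250:ℝ)^2 := pow_le_pow_left₀ hr0.le hr 2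
  have e2 : r^4 ≤ (139/250:ℝ)^4 := pow_le_pow_left₀ hr0.le hr 4
  have e3 : r^8 ≤ (139/250:ℝ)^8 := pow_le_pow_left₀ hr0.le hr 8
  have final : r + (r^2 + r^4 + r^8 * (250/111)) ≤ 1 := by nlinarith
  linarith

lemma card_F_le_pow (r : ℝ) (hr0 : 0 < r) (hr : r ≤ 139/250) (p : ℕ) (hp : 2 ≤ p) :
    ∀ n, ((F p n).card : ℝ) ≤ (r⁻¹)^n := by
  intro n
  induction n using Nat.strong_induction_on with
  | _ n IH =>
    match n with
    | 0 => simp [F.eq_1]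
    | (m+1) =>
      have hterm : ∀ a ∈ partsF p (m+1), 1 ≤ a ∧ a ≤ m+1 := by
        intro a ha
        simp only [partsF, Finset.mem_filter, Finset.mem_Icc] at ha
        exact ha.1
      calc ((F p (m+1)).card : ℝ)
          ≤ ∑ a ∈ partsF p (m+1), ((F p (m+1-a)).card : ℝ) := by
            exact_mod_cast card_F_le p m
        _ ≤ ∑ a ∈ partsF p (m+1), (r⁻¹)^(m+1-a) :=
            Finset.sum_le_sum fun a ha => IH (m+1-a) (by have := hterm a ha; omega)
        _ = ∑ a ∈ partsF p (m+1), (r⁻¹)^(m+1) * r^a := by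
            refine Finset.sum_congr rfl fun a ha => ?_
            have h := hterm a ha
            set b := m+1-a with hb
            have hc : b + a = m+1 := by omega
            rw [← hc, pow_add, mul_assoc, ← mul_pow, inv_mul_cancel₀ hr0.ne', one_pow, mul_one]
        _ = (r⁻¹)^(m+1) * ∑ a ∈ partsF p (m+1), r^a := by rw [Finset.mul_sum]
        _ ≤ (r⁻¹)^(m+1) * 1 := by
            refine mul_le_mul_of_nonneg_left (sum_parts_le r hr0 hr p hp (m+1)) (by positivity)
        _ = (r⁻¹)^(m+1) := mul_one _


/-- Lemma 3.4 -/
theorem sum_card_compPow_le (p : ℕ) (hp : 2 ≤ p)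
    (x0 : ℝ)
    (hroot : x0 ^ 3 - 2 * x0 ^ 2 - x0 + 1 = 0)
    (hmin : ∀ y : ℝ, y ^ 3 - 2 * y ^ 2 - y + 1 = 0 → |x0| ≤ |y|) :
    ∀ m : ℕ,
      (∑ k ∈ Finset.Icc 1 (m + 1), (Nat.card (compPow p k) : ℝ)) ≤
        ∑ k ∈ Finset.Icc 1 (m + 1), (1 / |x0|) ^ k := by
  intro m
  -- find a root in [0.554, 0.556]
  have hcont : ContinuousOn (fun x : ℝ => x^3 - 2*x^2 - x + 1)
      (Set.Icc (277/500 : ℝ) (139/250)) := by fun_prop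
  have hle : (277/500:ℝ) ≤ 139/250 := by norm_num
  have hiv := intermediate_value_Icc' hle hcont
  have h0mem : (0:ℝ) ∈ Set.Icc ((fun x : ℝ => x^3 - 2*x^2 - x + 1) (139/250))
      ((fun x : ℝ => x^3 - 2*x^2 - x + 1) (277/500)) := by
    constructor <;> norm_num
  obtain ⟨y, hy, hfy⟩ := hiv h0mem
  have hx0le : |x0| ≤ 139/250 := by
    refine (hmin y hfy).trans ?_
    rw [abs_of_nonneg (by linarith [hy.1] : (0:ℝ) ≤ y)]
    exact hy.2
  have hx0ne : x0 ≠ 0 := by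
    intro h
    rw [h] at hroot
    norm_num at hroot
  have hx0pos : 0 < |x0| := abs_pos.mpr hx0ne
  have hcard : ∀ k, (Nat.card (compPow p k) : ℝ) ≤ (1 / |x0|)^k := by
    intro k
    have hset : compPow p k = ↑(F p k) := by
      ext l
      rw [Finset.mem_coe, mem_F p hp k l]
      rfl
    have : Nat.card (compPow p k) = (F p k).card := by
      rw [hset, Nat.card_coe_set_eq, Set.ncard_coe_finset]
    rw [this, one_div]
    exact card_F_le_pow |x0| hx0pos hx0le p hp k
  exact Finset.sum_le_sum fun k _ => hcard k
end
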